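/- arXiv:2201.09093 — 5 statements merged into one kernel-verified Lean document; each statement's English description precedes it below -/
import Mathlib

section
/- For integers n, m ≥ 3, λ_2(→C_n □ ↔C_m) = 3, where →C_n is the directed cycle on n vertices and ↔C_m is the complete biorientation of the cycle on m vertices. -/
/-- The set of arcs of a digraph. -/
def Digraph.ArcSet {V : Type*} (D : Digraph V) : Set (V × V) := {p | D.Adj p.1 p.2}

/-- Delete a set of arcs from a digraph. -/
def Digraph.DeleteArcs {V : Type*} (D : Digraph V) (F : Set (V × V)) : Digraph V :=
  ⟨fun u v => D.Adj u v ∧ (u, v) ∉ F⟩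

/-- A digraph is strong if every vertex can reach every other vertex by a directed walk. -/
def Digraph.IsStrong {V : Type*} (D : Digraph V) : Prop :=
  ∀ u v : V, Relation.ReflTransGen D.Adj u v

/-- The arc-strong connectivity: the minimum number of arcs whose removal
destroys strong connectivity. -/
noncomputable def Digraph.arcConn {V : Type*} (D : Digraph V) : ℕ :=
  sInf {k | ∃ F : Set (V × V), F ⊆ D.ArcSet ∧ F.ncard = k ∧ ¬ (D.DeleteArcs F).IsStrong}

noncomputable def Digraph.outDeg {V : Type*} (D : Digraph V) (v : V) : ℕ :=
  {w | D.Adj v w}.ncard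

noncomputable def Digraph.inDeg {V : Type*} (D : Digraph V) (v : V) : ℕ :=
  {w | D.Adj w v}.ncard

/-- Minimum out-degree. -/
noncomputable def Digraph.minOutDeg {V : Type*} (D : Digraph V) : ℕ := ⨅ v, D.outDeg v

/-- Minimum in-degree. -/
noncomputable def Digraph.minInDeg {V : Type*} (D : Digraph V) : ℕ := ⨅ v, D.inDeg v

/-- Cartesian product of digraphs. -/
def Digraph.cartProd {V W : Type*} (G : Digraph V) (H : Digraph W) : Digraph (V × W) :=
  ⟨fun a b => (G.Adj a.1 b.1 ∧ a.2 = b.2) ∨ (a.1 = b.1 ∧ H.Adj a.2 b.2)⟩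

/-- `B` is the arc set of an `S`-strong subgraph of `D`: the arcs of `B` are arcs of `D`,
and the subgraph with vertex set `S` together with all endpoints of `B`, and arc set `B`,
is strongly connected. -/
def Digraph.IsStrongSubgraphOn {V : Type*} (D : Digraph V) (S : Set V) (B : Set (V × V)) :
    Prop :=
  B ⊆ D.ArcSet ∧
  ∀ u ∈ S ∪ {v | ∃ e ∈ B, v = e.1 ∨ v = e.2},
    ∀ w ∈ S ∪ {v | ∃ e ∈ B, v = e.1 ∨ v = e.2},
      Relation.ReflTransGen (fun a b => (a, b) ∈ B) u w

/-- `λ_S(D)`: the maximum number of pairwise arc-disjoint `S`-strong subgraphs of `D`. -/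
noncomputable def Digraph.lambdaS {V : Type*} (D : Digraph V) (S : Set V) : ℕ :=
  sSup {k | ∃ f : Fin k → Set (V × V),
    (∀ i, D.IsStrongSubgraphOn S (f i)) ∧
    ∀ i j, i ≠ j → Disjoint (f i) (f j)}

/-- `λ_k(D)`: the strong subgraph `k`-arc-connectivity. -/
noncomputable def Digraph.lambdaK {V : Type*} (D : Digraph V) (k : ℕ) : ℕ :=
  sInf {m | ∃ S : Set V, S.ncard = k ∧ D.lambdaS S = m}

/-- The complete biorientation of an undirected graph. -/
def SimpleGraph.biorient {V : Type*} (G : SimpleGraph V) : Digraph V := ⟨G.Adj⟩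

/-- Edge-connectivity of an undirected graph: the minimum number of edges whose
removal disconnects the graph. -/
noncomputable def SimpleGraph.edgeConn {V : Type*} (G : SimpleGraph V) : ℕ :=
  sInf {k | ∃ F : Set (Sym2 V), F ⊆ G.edgeSet ∧ F.ncard = k ∧ ¬ (G.deleteEdges F).Connected}

/-- The directed cycle on `n` vertices. -/
def dirCycle (n : ℕ) : Digraph (Fin n) :=
  ⟨fun i j => (j : ℕ) = ((i : ℕ) + 1) % n⟩

/-- The complete biorientation of the cycle on `n` vertices. -/
def biCycle (n : ℕ) : Digraph (Fin n) :=
  ⟨fun i j => (j : ℕ) = ((i : ℕ) + 1) % n ∨ (i : ℕ) = ((j : ℕ) + 1) % n⟩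

/-- The complete digraph on `n` vertices. -/
def completeDigraph (n : ℕ) : Digraph (Fin n) := ⟨fun i j => i ≠ j⟩

set_option linter.unusedSectionVars false
set_option linter.unreachableTactic false
set_option linter.unusedTactic false

namespace St13
open Fin.NatCast Fin.CommRing
variable {n m : ℕ} [NeZero n] [NeZero m]

def PD (n m : ℕ) : Digraph (Fin n × Fin m) := (dirCycle n).cartProd (biCycle m)

abbrev Arc (n m : ℕ) := (Fin n × Fin m) × (Fin n × Fin m)

def uA (x : Fin n) (j : Fin m) : Arc n m := ((x, j), (x, j + 1))
def dA (x : Fin n) (j : Fin m) : Arc n m := ((x, j), (x, j - 1))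
def rA (i : Fin n) (j : Fin m) : Arc n m := ((i, j), (i + 1, j))

def rowS (r : Fin m) : Set (Arc n m) := {e | ∃ i : Fin n, e = rA i r}
def uS (x : Fin n) (b : Fin m) (lo hi : ℕ) : Set (Arc n m) :=
  {e | ∃ ρ : ℕ, lo ≤ ρ ∧ ρ < hi ∧ e = uA x (b + (ρ : Fin m))}
def dS (x : Fin n) (b : Fin m) (lo hi : ℕ) : Set (Arc n m) :=
  {e | ∃ ρ : ℕ, lo ≤ ρ ∧ ρ < hi ∧ e = dA x (b + (ρ : Fin m))}

/-! ### basic Fin facts -/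

lemma val_add_one (j : Fin m) : ((j + 1 : Fin m) : ℕ) = ((j : ℕ) + 1) % m := by
  rw [Fin.add_def, Fin.val_one' m]
  conv_rhs => rw [Nat.add_mod]
  rw [Nat.mod_eq_of_lt j.isLt]

lemma fcast_inj {ρ ρ' : ℕ} (h1 : ρ < m) (h2 : ρ' < m) (h : (ρ : Fin m) = (ρ' : Fin m)) :
    ρ = ρ' := by
  have := congrArg Fin.val h
  simpa [Fin.val_natCast, Nat.mod_eq_of_lt, h1, h2] using this

lemma badd_inj {b : Fin m} {ρ ρ' : ℕ} (h1 : ρ < m) (h2 : ρ' < m)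
    (h : b + (ρ : Fin m) = b + (ρ' : Fin m)) : ρ = ρ' :=
  fcast_inj h1 h2 (add_left_cancel h)

lemma badd_m (b : Fin m) : b + ((m : ℕ) : Fin m) = b := by simp

lemma bsub_one (b : Fin m) : b - 1 = b + ((m - 1 : ℕ) : Fin m) := by
  have h1 : (1:ℕ) ≤ m := Nat.one_le_iff_ne_zero.2 (NeZero.ne m)
  have : ((m - 1 : ℕ) : Fin m) = ((m : ℕ) : Fin m) - 1 := by
    push_cast [Nat.cast_sub h1]; ring
  rw [this, Fin.natCast_self]
  ring

/-! ### arcs are arcs of PD -/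

lemma uA_mem (x : Fin n) (j : Fin m) : uA x j ∈ (PD n m).ArcSet :=
  Or.inr ⟨rfl, Or.inl (val_add_one j)⟩

lemma rA_mem (i : Fin n) (j : Fin m) : rA i j ∈ (PD n m).ArcSet :=
  Or.inl ⟨val_add_one i, rfl⟩

lemma dA_mem (x : Fin n) (j : Fin m) : dA x j ∈ (PD n m).ArcSet := by
  refine Or.inr ⟨rfl, Or.inr ?_⟩
  have := val_add_one (j - 1)
  rw [sub_add_cancel] at this
  exact this

/-! ### arc distinctness -/

lemma one_ne_zero' (hn : 3 ≤ n) : (1 : Fin n) ≠ 0 := by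
  simp only [Ne, Fin.ext_iff, Fin.val_one' n, Fin.val_zero]
  rw [Nat.mod_eq_of_lt (by omega)]
  omega

lemma two_ne_zero' (hm : 3 ≤ m) : (1 + 1 : Fin m) ≠ 0 := by
  have : ((2:ℕ) : Fin m) ≠ 0 := by
    simp only [Ne, Fin.ext_iff, Fin.val_natCast, Fin.val_zero]
    rw [Nat.mod_eq_of_lt (by omega)]
    omega
  simpa [one_add_one_eq_two] using this

lemma uA_ne_dA (hm : 3 ≤ m) {x x' : Fin n} {j j' : Fin m} : uA x j ≠ dA x' j' := by
  intro h
  simp only [uA, dA, Prod.mk.injEq] at h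
  obtain ⟨⟨hx, hj⟩, _, hj2⟩ := h
  subst hj
  have : j + 1 + 1 = j := by rw [hj2, sub_add_cancel]
  have h2 : (1 + 1 : Fin m) = 0 := by
    have := this
    rw [add_assoc] at this
    have := add_left_cancel (a := j) (by rw [this, add_zero] : j + (1+1) = j + 0)
    exact this
  exact two_ne_zero' hm h2

lemma uA_ne_rA (hn : 3 ≤ n) {x i : Fin n} {j j' : Fin m} : uA x j ≠ rA i j' := by
  intro h
  simp only [uA, rA, Prod.mk.injEq] at h
  obtain ⟨⟨hx, hj⟩, hx2, hj2⟩ := h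
  subst hx
  have : (1 : Fin n) = 0 := by
    have := add_left_cancel (a := x) (by rw [← hx2, add_zero] : x + 1 = x + 0)
    exact this
  exact one_ne_zero' hn this

lemma dA_ne_rA (hn : 3 ≤ n) {x i : Fin n} {j j' : Fin m} : dA x j ≠ rA i j' := by
  intro h
  simp only [dA, rA, Prod.mk.injEq] at h
  obtain ⟨⟨hx, hj⟩, hx2, hj2⟩ := h
  subst hx
  have : (1 : Fin n) = 0 := by
    have := add_left_cancel (a := x) (by rw [← hx2, add_zero] : x + 1 = x + 0)
    exact this
  exact one_ne_zero' hn this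

lemma uA_inj {x x' : Fin n} {j j' : Fin m} (h : uA x j = uA x' j') : x = x' ∧ j = j' := by
  simp only [uA, Prod.mk.injEq] at h
  exact ⟨h.1.1, h.1.2⟩

lemma dA_inj {x x' : Fin n} {j j' : Fin m} (h : dA x j = dA x' j') : x = x' ∧ j = j' := by
  simp only [dA, Prod.mk.injEq] at h
  exact ⟨h.1.1, h.1.2⟩

lemma rA_inj {i i' : Fin n} {j j' : Fin m} (h : rA i j = rA i' j') : i = i' ∧ j = j' := by
  simp only [rA, Prod.mk.injEq] at h
  exact ⟨h.1.1, h.1.2⟩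

/-! ### reachability -/

def Rch (B : Set (Arc n m)) (x y : Fin n × Fin m) : Prop :=
  Relation.ReflTransGen (fun a b => (a, b) ∈ B) x y

lemma Rch.trans {B : Set (Arc n m)} {x y z} (h1 : Rch B x y) (h2 : Rch B y z) : Rch B x z :=
  Relation.ReflTransGen.trans h1 h2

lemma rch_u {B : Set (Arc n m)} {x : Fin n} {b : Fin m} (lo s : ℕ)
    (h : ∀ ρ, lo ≤ ρ → ρ < lo + s → uA x (b + (ρ : Fin m)) ∈ B) :
    Rch B (x, b + (lo : Fin m)) (x, b + ((lo + s : ℕ) : Fin m)) := by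
  induction s with
  | zero => exact Relation.ReflTransGen.refl
  | succ s ih =>
    have step : uA x (b + ((lo + s : ℕ) : Fin m)) ∈ B := h _ (by omega) (by omega)
    have : Rch B (x, b + (lo : Fin m)) (x, b + ((lo + s : ℕ) : Fin m)) :=
      ih (fun ρ h1 h2 => h ρ h1 (by omega))
    refine this.trans (Relation.ReflTransGen.single ?_)
    have he : (b + ((lo + s : ℕ) : Fin m)) + 1 = b + ((lo + (s+1) : ℕ) : Fin m) := by
      push_cast; ring
    show (_, _) ∈ B
    rw [show ((x, b + ((lo + s : ℕ) : Fin m)), (x, b + ((lo + (s+1) : ℕ) : Fin m)))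
        = uA x (b + ((lo + s : ℕ) : Fin m)) from by rw [uA, he]]
    exact step

lemma rch_d {B : Set (Arc n m)} {x : Fin n} {b : Fin m} (hi s : ℕ) (hs : s ≤ hi)
    (h : ∀ ρ, hi - s < ρ → ρ ≤ hi → dA x (b + (ρ : Fin m)) ∈ B) :
    Rch B (x, b + (hi : Fin m)) (x, b + ((hi - s : ℕ) : Fin m)) := by
  induction s with
  | zero => exact Relation.ReflTransGen.refl
  | succ s ih =>
    have hrch : Rch B (x, b + (hi : Fin m)) (x, b + ((hi - s : ℕ) : Fin m)) :=
      ih (by omega) (fun ρ h1 h2 => h ρ (by omega) h2)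
    have step : dA x (b + ((hi - s : ℕ) : Fin m)) ∈ B := h _ (by omega) (by omega)
    refine hrch.trans (Relation.ReflTransGen.single ?_)
    have he : (b + ((hi - s : ℕ) : Fin m)) - 1 = b + ((hi - (s+1) : ℕ) : Fin m) := by
      have h1 : ((hi - s : ℕ) : Fin m) = ((hi - (s+1) : ℕ) : Fin m) + 1 := by
        rw [show hi - s = (hi - (s+1)) + 1 by omega]
        push_cast; ring
      rw [h1]; ring
    show (_, _) ∈ B
    rw [show ((x, b + ((hi - s : ℕ) : Fin m)), (x, b + ((hi - (s+1) : ℕ) : Fin m)))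
        = dA x (b + ((hi - s : ℕ) : Fin m)) from by rw [dA, he]]
    exact step

lemma rch_row {B : Set (Arc n m)} {r : Fin m} (h : ∀ i : Fin n, rA i r ∈ B)
    (i i' : Fin n) : Rch B (i, r) (i', r) := by
  have aux : ∀ k : ℕ, Rch B (i, r) (i + (k : Fin n), r) := by
    intro k
    induction k with
    | zero => simp only [Nat.cast_zero, add_zero, sub_zero]; exact Relation.ReflTransGen.refl
    | succ k ih =>
      refine ih.trans (Relation.ReflTransGen.single ?_)
      show (_, _) ∈ B
      rw [show ((i + (k : Fin n), r), (i + ((k+1 : ℕ) : Fin n), r))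
          = rA (i + (k : Fin n)) r from by rw [rA]; congr 2; push_cast; ring]
      exact h _
  have := aux ((i' - i).val)
  rwa [Fin.cast_val_eq_self, add_sub_cancel] at this

/-- Reach anywhere within a full up-column. -/
lemma rch_ucol {B : Set (Arc n m)} {x : Fin n} (h : ∀ j : Fin m, uA x j ∈ B)
    (j j' : Fin m) : Rch B (x, j) (x, j') := by
  have aux : ∀ k : ℕ, Rch B (x, j) (x, j + (k : Fin m)) := by
    intro k
    induction k with
    | zero => simp only [Nat.cast_zero, add_zero, sub_zero]; exact Relation.ReflTransGen.refl
    | succ k ih =>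
      refine ih.trans (Relation.ReflTransGen.single ?_)
      show (_, _) ∈ B
      rw [show ((x, j + (k : Fin m)), (x, j + ((k+1 : ℕ) : Fin m)))
          = uA x (j + (k : Fin m)) from by rw [uA]; congr 2; push_cast; ring]
      exact h _
  have := aux ((j' - j).val)
  rwa [Fin.cast_val_eq_self, add_sub_cancel] at this

lemma rch_dcol {B : Set (Arc n m)} {x : Fin n} (h : ∀ j : Fin m, dA x j ∈ B)
    (j j' : Fin m) : Rch B (x, j) (x, j') := by
  have aux : ∀ k : ℕ, Rch B (x, j) (x, j - (k : Fin m)) := by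
    intro k
    induction k with
    | zero => simp only [Nat.cast_zero, add_zero, sub_zero]; exact Relation.ReflTransGen.refl
    | succ k ih =>
      refine ih.trans (Relation.ReflTransGen.single ?_)
      show (_, _) ∈ B
      rw [show ((x, j - (k : Fin m)), (x, j - ((k+1 : ℕ) : Fin m)))
          = dA x (j - (k : Fin m)) from by rw [dA]; congr 2; push_cast; ring]
      exact h _
  have := aux ((j - j').val)
  rwa [Fin.cast_val_eq_self, sub_sub_cancel] at this

/-- hub criterion for strong subgraphs -/
lemma strong_of_hub {S : Set (Fin n × Fin m)} {B : Set (Arc n m)}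
    (hB : B ⊆ (PD n m).ArcSet) (h : Fin n × Fin m)
    (H : ∀ x ∈ S ∪ {v | ∃ e ∈ B, v = e.1 ∨ v = e.2}, Rch B x h ∧ Rch B h x) :
    (PD n m).IsStrongSubgraphOn S B :=
  ⟨hB, fun u hu w hw => ((H u hu).1).trans ((H w hw).2)⟩


lemma ne_add_one (hn : 3 ≤ n) (a : Fin n) : a ≠ a + 1 := by
  intro h
  have : (1 : Fin n) = 0 := by
    have := add_left_cancel (a := a) (by rw [← h, add_zero] : a + 1 = a + 0)
    exact this
  exact one_ne_zero' hn this

lemma badd_ne {b : Fin m} {ρ ρ' : ℕ} (h1 : ρ < m) (h2 : ρ' < m) (hne : ρ ≠ ρ') :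
    b + (ρ : Fin m) ≠ b + (ρ' : Fin m) := fun h => hne (badd_inj h1 h2 h)

lemma caseA (hn : 3 ≤ n) (hm : 3 ≤ m) (a : Fin n) (b d : Fin m) :
    ∃ B1 B2 B3 : Set (Arc n m),
      (PD n m).IsStrongSubgraphOn {(a,b),(a,d)} B1 ∧
      (PD n m).IsStrongSubgraphOn {(a,b),(a,d)} B2 ∧
      (PD n m).IsStrongSubgraphOn {(a,b),(a,d)} B3 ∧
      Disjoint B1 B2 ∧ Disjoint B1 B3 ∧ Disjoint B2 B3 := by
  refine ⟨{e | ∃ j, e = uA a j}, {e | ∃ j, e = dA a j},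
    rowS b ∪ rowS d ∪ {e | ∃ j, e = uA (a+1) j}, ?_, ?_, ?_, ?_, ?_, ?_⟩
  · -- B1 strong
    have hall : ∀ j, uA a j ∈ {e : Arc n m | ∃ j, e = uA a j} := fun j => ⟨j, rfl⟩
    refine strong_of_hub ?_ (a, b) ?_
    · rintro e ⟨j, rfl⟩; exact uA_mem a j
    · intro x hx
      have hform : ∃ j, x = (a, j) := by
        rcases hx with (hx | hx) | ⟨e, ⟨j, rfl⟩, hx⟩
        · exact ⟨b, hx⟩
        · exact ⟨d, hx⟩
        · rcases hx with rfl | rfl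
          exacts [⟨j, rfl⟩, ⟨j + 1, rfl⟩]
      obtain ⟨j, rfl⟩ := hform
      exact ⟨rch_ucol hall j b, rch_ucol hall b j⟩
  · -- B2 strong
    have hall : ∀ j, dA a j ∈ {e : Arc n m | ∃ j, e = dA a j} := fun j => ⟨j, rfl⟩
    refine strong_of_hub ?_ (a, b) ?_
    · rintro e ⟨j, rfl⟩; exact dA_mem a j
    · intro x hx
      have hform : ∃ j, x = (a, j) := by
        rcases hx with (hx | hx) | ⟨e, ⟨j, rfl⟩, hx⟩
        · exact ⟨b, hx⟩
        · exact ⟨d, hx⟩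
        · rcases hx with rfl | rfl
          exacts [⟨j, rfl⟩, ⟨j - 1, rfl⟩]
      obtain ⟨j, rfl⟩ := hform
      exact ⟨rch_dcol hall j b, rch_dcol hall b j⟩
  · -- B3 strong
    set B3 : Set (Arc n m) := rowS b ∪ rowS d ∪ {e | ∃ j, e = uA (a+1) j} with hB3
    have hrb : ∀ i, rA i b ∈ B3 := fun i => Or.inl (Or.inl ⟨i, rfl⟩)
    have hrd : ∀ i, rA i d ∈ B3 := fun i => Or.inl (Or.inr ⟨i, rfl⟩)
    have hc : ∀ j, uA (a+1) j ∈ B3 := fun j => Or.inr ⟨j, rfl⟩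
    refine strong_of_hub ?_ (a+1, b) ?_
    · rintro e ((⟨i, rfl⟩ | ⟨i, rfl⟩) | ⟨j, rfl⟩)
      exacts [rA_mem i b, rA_mem i d, uA_mem _ j]
    · intro x hx
      have hform : (∃ i, x = (i, b)) ∨ (∃ i, x = (i, d)) ∨ (∃ j, x = (a+1, j)) := by
        rcases hx with (hx | hx) | ⟨e, ((⟨i, rfl⟩ | ⟨i, rfl⟩) | ⟨j, rfl⟩), hx⟩
        · exact Or.inl ⟨a, hx⟩
        · exact Or.inr (Or.inl ⟨a, hx⟩)
        · rcases hx with rfl | rfl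
          exacts [Or.inl ⟨i, rfl⟩, Or.inl ⟨i+1, rfl⟩]
        · rcases hx with rfl | rfl
          exacts [Or.inr (Or.inl ⟨i, rfl⟩), Or.inr (Or.inl ⟨i+1, rfl⟩)]
        · rcases hx with rfl | rfl
          exacts [Or.inr (Or.inr ⟨j, rfl⟩), Or.inr (Or.inr ⟨j+1, rfl⟩)]
      rcases hform with ⟨i, rfl⟩ | ⟨i, rfl⟩ | ⟨j, rfl⟩
      · exact ⟨rch_row hrb i (a+1), rch_row hrb (a+1) i⟩
      · exact ⟨(rch_row hrd i (a+1)).trans (rch_ucol hc d b),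
          (rch_ucol hc b d).trans (rch_row hrd (a+1) i)⟩
      · exact ⟨rch_ucol hc j b, rch_ucol hc b j⟩
  · rw [Set.disjoint_left]
    rintro e ⟨j, rfl⟩ ⟨j', he⟩
    exact uA_ne_dA hm he
  · rw [Set.disjoint_left]
    rintro e ⟨j, rfl⟩ ((⟨i, he⟩ | ⟨i, he⟩) | ⟨j', he⟩)
    · exact uA_ne_rA hn he
    · exact uA_ne_rA hn he
    · exact ne_add_one hn a (uA_inj he).1
  · rw [Set.disjoint_left]
    rintro e ⟨j, rfl⟩ ((⟨i, he⟩ | ⟨i, he⟩) | ⟨j', he⟩)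
    · exact dA_ne_rA hn he
    · exact dA_ne_rA hn he
    · exact uA_ne_dA hm he.symm


lemma ne_sub_one (hm : 3 ≤ m) (b : Fin m) : b ≠ b - 1 := by
  intro h
  have h2 := h.symm
  rw [sub_eq_iff_eq_add] at h2
  exact ne_add_one hm b h2

lemma add_one_ne_sub_one (hm : 3 ≤ m) (b : Fin m) : b + 1 ≠ b - 1 := by
  intro h
  have h2 := h.symm
  rw [sub_eq_iff_eq_add] at h2
  have h3 : b + 0 = b + (1 + 1) := by rw [add_zero, ← add_assoc]; exact h2
  exact two_ne_zero' hm (add_left_cancel h3).symm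

lemma caseB (hn : 3 ≤ n) (hm : 3 ≤ m) (a c : Fin n) (b : Fin m) :
    ∃ B1 B2 B3 : Set (Arc n m),
      (PD n m).IsStrongSubgraphOn {(a,b),(c,b)} B1 ∧
      (PD n m).IsStrongSubgraphOn {(a,b),(c,b)} B2 ∧
      (PD n m).IsStrongSubgraphOn {(a,b),(c,b)} B3 ∧
      Disjoint B1 B2 ∧ Disjoint B1 B3 ∧ Disjoint B2 B3 := by
  have hb1 : (b + 1) - 1 = b := add_sub_cancel_right b 1
  have hb2 : (b - 1) + 1 = b := sub_add_cancel b 1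
  refine ⟨rowS b,
    rowS (b+1) ∪ {uA a b, dA a (b+1), uA c b, dA c (b+1)},
    rowS (b-1) ∪ {dA a b, uA a (b-1), dA c b, uA c (b-1)}, ?_, ?_, ?_, ?_, ?_, ?_⟩
  · -- B1
    have hr : ∀ i, rA i b ∈ (rowS b : Set (Arc n m)) := fun i => ⟨i, rfl⟩
    refine strong_of_hub ?_ (a, b) ?_
    · rintro e ⟨i, rfl⟩; exact rA_mem i b
    · intro x hx
      have hform : ∃ i, x = (i, b) := by
        rcases hx with (hx | hx) | ⟨e, ⟨i, rfl⟩, hx⟩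
        · exact ⟨a, hx⟩
        · exact ⟨c, hx⟩
        · rcases hx with rfl | rfl
          exacts [⟨i, rfl⟩, ⟨i+1, rfl⟩]
      obtain ⟨i, rfl⟩ := hform
      exact ⟨rch_row hr i a, rch_row hr a i⟩
  · -- B2
    set B : Set (Arc n m) := rowS (b+1) ∪ {uA a b, dA a (b+1), uA c b, dA c (b+1)} with hB
    have hr : ∀ i, rA i (b+1) ∈ B := fun i => Or.inl ⟨i, rfl⟩
    have pu : ∀ x : Fin n, uA x b ∈ B → Rch B (x, b) (x, b+1) := fun x h =>
      Relation.ReflTransGen.single h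
    have pd : ∀ x : Fin n, dA x (b+1) ∈ B → Rch B (x, b+1) (x, b) := by
      intro x h
      refine Relation.ReflTransGen.single ?_
      show ((x, b+1), (x, b)) ∈ B
      rw [show ((x, b+1), (x, b)) = dA x (b+1) from by rw [dA, hb1]]
      exact h
    have hua : uA a b ∈ B := Or.inr (by simp)
    have huc : uA c b ∈ B := Or.inr (by simp)
    have hda : dA a (b+1) ∈ B := Or.inr (by simp)
    have hdc : dA c (b+1) ∈ B := Or.inr (by simp)
    refine strong_of_hub ?_ (a, b+1) ?_
    · rintro e (⟨i, rfl⟩ | he)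
      · exact rA_mem i (b+1)
      · simp only [Set.mem_insert_iff, Set.mem_singleton_iff] at he
        rcases he with rfl | rfl | rfl | rfl
        exacts [uA_mem a b, dA_mem a (b+1), uA_mem c b, dA_mem c (b+1)]
    · intro x hx
      have hform : (∃ i, x = (i, b+1)) ∨ x = (a, b) ∨ x = (c, b) := by
        rcases hx with (hx | hx) | ⟨e, he, hx⟩
        · exact Or.inr (Or.inl hx)
        · exact Or.inr (Or.inr hx)
        · rcases he with ⟨i, rfl⟩ | he
          · rcases hx with rfl | rfl
            exacts [Or.inl ⟨i, rfl⟩, Or.inl ⟨i+1, rfl⟩]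
          · simp only [Set.mem_insert_iff, Set.mem_singleton_iff] at he
            rcases he with rfl | rfl | rfl | rfl <;> simp only [uA, dA] at hx <;>
                (try rw [hb1] at hx) <;> rcases hx with hx | hx
            · exact Or.inr (Or.inl hx)
            · exact Or.inl ⟨a, hx⟩
            · exact Or.inl ⟨a, hx⟩
            · exact Or.inr (Or.inl hx)
            · exact Or.inr (Or.inr hx)
            · exact Or.inl ⟨c, hx⟩
            · exact Or.inl ⟨c, hx⟩
            · exact Or.inr (Or.inr hx)
      rcases hform with ⟨i, rfl⟩ | rfl | rfl
      · exact ⟨rch_row hr i a, rch_row hr a i⟩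
      · exact ⟨pu a hua, pd a hda⟩
      · exact ⟨(pu c huc).trans (rch_row hr c a), (rch_row hr a c).trans (pd c hdc)⟩
  · -- B3
    set B : Set (Arc n m) := rowS (b-1) ∪ {dA a b, uA a (b-1), dA c b, uA c (b-1)} with hB
    have hr : ∀ i, rA i (b-1) ∈ B := fun i => Or.inl ⟨i, rfl⟩
    have pd : ∀ x : Fin n, dA x b ∈ B → Rch B (x, b) (x, b-1) := fun x h =>
      Relation.ReflTransGen.single h
    have pu : ∀ x : Fin n, uA x (b-1) ∈ B → Rch B (x, b-1) (x, b) := by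
      intro x h
      refine Relation.ReflTransGen.single ?_
      show ((x, b-1), (x, b)) ∈ B
      rw [show ((x, b-1), (x, b)) = uA x (b-1) from by rw [uA, hb2]]
      exact h
    have hua : uA a (b-1) ∈ B := Or.inr (by simp)
    have huc : uA c (b-1) ∈ B := Or.inr (by simp)
    have hda : dA a b ∈ B := Or.inr (by simp)
    have hdc : dA c b ∈ B := Or.inr (by simp)
    refine strong_of_hub ?_ (a, b-1) ?_
    · rintro e (⟨i, rfl⟩ | he)
      · exact rA_mem i (b-1)
      · simp only [Set.mem_insert_iff, Set.mem_singleton_iff] at he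
        rcases he with rfl | rfl | rfl | rfl
        exacts [dA_mem a b, uA_mem a (b-1), dA_mem c b, uA_mem c (b-1)]
    · intro x hx
      have hform : (∃ i, x = (i, b-1)) ∨ x = (a, b) ∨ x = (c, b) := by
        rcases hx with (hx | hx) | ⟨e, he, hx⟩
        · exact Or.inr (Or.inl hx)
        · exact Or.inr (Or.inr hx)
        · rcases he with ⟨i, rfl⟩ | he
          · rcases hx with rfl | rfl
            exacts [Or.inl ⟨i, rfl⟩, Or.inl ⟨i+1, rfl⟩]
          · simp only [Set.mem_insert_iff, Set.mem_singleton_iff] at he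
            rcases he with rfl | rfl | rfl | rfl <;> simp only [uA, dA] at hx <;>
                (try rw [hb2] at hx) <;> rcases hx with hx | hx
            · exact Or.inr (Or.inl hx)
            · exact Or.inl ⟨a, hx⟩
            · exact Or.inl ⟨a, hx⟩
            · exact Or.inr (Or.inl hx)
            · exact Or.inr (Or.inr hx)
            · exact Or.inl ⟨c, hx⟩
            · exact Or.inl ⟨c, hx⟩
            · exact Or.inr (Or.inr hx)
      rcases hform with ⟨i, rfl⟩ | rfl | rfl
      · exact ⟨rch_row hr i a, rch_row hr a i⟩
      · exact ⟨pd a hda, pu a hua⟩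
      · exact ⟨(pd c hdc).trans (rch_row hr c a), (rch_row hr a c).trans (pu c huc)⟩
  · -- B1 ∩ B2
    rw [Set.disjoint_left]
    rintro e ⟨i, rfl⟩ (⟨i', he⟩ | he)
    · exact ne_add_one hm b (rA_inj he).2
    · simp only [Set.mem_insert_iff, Set.mem_singleton_iff] at he
      rcases he with he | he | he | he
      exacts [uA_ne_rA hn he.symm, dA_ne_rA hn he.symm, uA_ne_rA hn he.symm,
        dA_ne_rA hn he.symm]
  · -- B1 ∩ B3
    rw [Set.disjoint_left]
    rintro e ⟨i, rfl⟩ (⟨i', he⟩ | he)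
    · exact ne_sub_one hm b (rA_inj he).2
    · simp only [Set.mem_insert_iff, Set.mem_singleton_iff] at he
      rcases he with he | he | he | he
      exacts [dA_ne_rA hn he.symm, uA_ne_rA hn he.symm, dA_ne_rA hn he.symm,
        uA_ne_rA hn he.symm]
  · -- B2 ∩ B3
    rw [Set.disjoint_left]
    rintro e he1 he2
    rcases he1 with ⟨i, rfl⟩ | he1
    · rcases he2 with ⟨i', he⟩ | he
      · exact add_one_ne_sub_one hm b (rA_inj he).2
      · simp only [Set.mem_insert_iff, Set.mem_singleton_iff] at he
        rcases he with he | he | he | he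
        exacts [dA_ne_rA hn he.symm, uA_ne_rA hn he.symm, dA_ne_rA hn he.symm,
          uA_ne_rA hn he.symm]
    · simp only [Set.mem_insert_iff, Set.mem_singleton_iff] at he1
      rcases he2 with ⟨i', he⟩ | he2
      · rcases he1 with rfl | rfl | rfl | rfl
        exacts [uA_ne_rA hn he, dA_ne_rA hn he, uA_ne_rA hn he, dA_ne_rA hn he]
      · simp only [Set.mem_insert_iff, Set.mem_singleton_iff] at he2
        have g1 : b ≠ b - 1 := ne_sub_one hm b
        have g2 : b + 1 ≠ b := fun h => ne_add_one hm b h.symm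
        rcases he1 with rfl | rfl | rfl | rfl <;> rcases he2 with he | he | he | he <;>
          first
            | exact absurd he (uA_ne_dA hm)
            | exact absurd he.symm (uA_ne_dA hm)
            | exact g1 (uA_inj he).2
            | exact g2 (dA_inj he).2


lemma cast0 (b : Fin m) : b + ((0:ℕ) : Fin m) = b := by simp

lemma badd_ne0 {ρ : ℕ} (h1 : ρ < m) (hρ : ρ ≠ 0) (b : Fin m) : b ≠ b + (ρ : Fin m) := by
  intro h
  have h2 : b + ((0:ℕ) : Fin m) = b + (ρ : Fin m) := by rw [cast0]; exact h
  exact hρ (badd_inj (by omega) h1 h2).symm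

lemma badd_add_one (b : Fin m) (ρ : ℕ) : (b + (ρ : Fin m)) + 1 = b + ((ρ+1 : ℕ) : Fin m) := by
  push_cast; ring

lemma badd_sub_one {ρ : ℕ} (h : 1 ≤ ρ) (b : Fin m) :
    (b + (ρ : Fin m)) - 1 = b + ((ρ-1 : ℕ) : Fin m) := by
  rw [Nat.cast_sub h]; push_cast; ring

lemma badd_absurd {b : Fin m} {ρ ρ' : ℕ} (h : b + (ρ : Fin m) = b + (ρ' : Fin m))
    (h1 : ρ < m) (h2 : ρ' < m) (hne : ρ ≠ ρ') : False := hne (badd_inj h1 h2 h)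

lemma badd0_absurd {b : Fin m} {ρ : ℕ} (h : b = b + (ρ : Fin m)) (h1 : ρ < m)
    (h2 : ρ ≠ 0) : False := badd_ne0 h1 h2 b h

lemma caseC (hn : 3 ≤ n) (hm : 3 ≤ m) {a c : Fin n} (hac : c ≠ a) (b : Fin m)
    {δ : ℕ} (hδ1 : 1 ≤ δ) (hδ2 : δ + 2 ≤ m) :
    ∃ B1 B2 B3 : Set (Arc n m),
      (PD n m).IsStrongSubgraphOn {(a,b),(c,b+(δ : Fin m))} B1 ∧
      (PD n m).IsStrongSubgraphOn {(a,b),(c,b+(δ : Fin m))} B2 ∧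
      (PD n m).IsStrongSubgraphOn {(a,b),(c,b+(δ : Fin m))} B3 ∧
      Disjoint B1 B2 ∧ Disjoint B1 B3 ∧ Disjoint B2 B3 := by
  refine ⟨rowS b ∪ dS c b 1 (δ+1) ∪ uS c b 0 δ,
    rowS (b+(δ : Fin m)) ∪ uS a b 0 δ ∪ dS a b 1 (δ+1),
    rowS (b+((δ+1 : ℕ) : Fin m)) ∪ uS a b (δ+1) m ∪ dS a b (δ+2) m ∪ {dA a b}
      ∪ {uA c (b+(δ : Fin m))} ∪ {dA c (b+((δ+1 : ℕ) : Fin m))}, ?_, ?_, ?_, ?_, ?_, ?_⟩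
  · -- B1 strong
    set B : Set (Arc n m) := rowS b ∪ dS c b 1 (δ+1) ∪ uS c b 0 δ with hBdef
    have hr : ∀ i, rA i b ∈ B := fun i => Or.inl (Or.inl ⟨i, rfl⟩)
    -- pendant reach: from (c, b+ρ) down to (c, b), and up back, for ρ ≤ δ
    have down : ∀ ρ : ℕ, ρ ≤ δ → Rch B (c, b + (ρ : Fin m)) (c, b) := by
      intro ρ hρ
      have := rch_d (B := B) (x := c) (b := b) ρ ρ le_rfl (fun ρ' h1 h2 =>
        Or.inl (Or.inr ⟨ρ', by omega, by omega, rfl⟩))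
      rwa [Nat.sub_self, cast0] at this
    have up : ∀ ρ : ℕ, ρ ≤ δ → Rch B (c, b) (c, b + (ρ : Fin m)) := by
      intro ρ hρ
      have := rch_u (B := B) (x := c) (b := b) 0 ρ (fun ρ' h1 h2 =>
        Or.inr ⟨ρ', by omega, by omega, rfl⟩)
      rwa [cast0, Nat.zero_add] at this
    refine strong_of_hub ?_ (a, b) ?_
    · rintro e ((⟨i, rfl⟩ | ⟨ρ, h1, h2, rfl⟩) | ⟨ρ, h1, h2, rfl⟩)
      exacts [rA_mem i b, dA_mem _ _, uA_mem _ _]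
    · intro x hx
      have hform : (∃ i, x = (i, b)) ∨ (∃ ρ, ρ ≤ δ ∧ x = (c, b + (ρ : Fin m))) := by
        rcases hx with (hx | hx) | ⟨e, he, hx⟩
        · exact Or.inl ⟨a, hx⟩
        · exact Or.inr ⟨δ, le_rfl, hx⟩
        · rcases he with (⟨i, rfl⟩ | ⟨ρ, h1, h2, rfl⟩) | ⟨ρ, h1, h2, rfl⟩
          · rcases hx with rfl | rfl
            exacts [Or.inl ⟨i, rfl⟩, Or.inl ⟨i+1, rfl⟩]
          · rcases hx with rfl | rfl
            · exact Or.inr ⟨ρ, by omega, rfl⟩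
            · refine Or.inr ⟨ρ-1, by omega, ?_⟩
              simp only [dA, badd_sub_one h1]
          · rcases hx with rfl | rfl
            · exact Or.inr ⟨ρ, by omega, rfl⟩
            · refine Or.inr ⟨ρ+1, by omega, ?_⟩
              simp only [uA, badd_add_one]
      rcases hform with ⟨i, rfl⟩ | ⟨ρ, hρ, rfl⟩
      · exact ⟨rch_row hr i a, rch_row hr a i⟩
      · exact ⟨(down ρ hρ).trans (rch_row hr c a),
          (rch_row hr a c).trans (up ρ hρ)⟩
  · -- B2 strong
    set B : Set (Arc n m) := rowS (b+(δ : Fin m)) ∪ uS a b 0 δ ∪ dS a b 1 (δ+1) with hBdef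
    have hr : ∀ i, rA i (b+(δ : Fin m)) ∈ B := fun i => Or.inl (Or.inl ⟨i, rfl⟩)
    have up : ∀ ρ : ℕ, ρ ≤ δ → Rch B (a, b + (ρ : Fin m)) (a, b + (δ : Fin m)) := by
      intro ρ hρ
      have := rch_u (B := B) (x := a) (b := b) ρ (δ - ρ) (fun ρ' h1 h2 =>
        Or.inl (Or.inr ⟨ρ', by omega, by omega, rfl⟩))
      rwa [show ρ + (δ - ρ) = δ by omega] at this
    have down : ∀ ρ : ℕ, ρ ≤ δ → Rch B (a, b + (δ : Fin m)) (a, b + (ρ : Fin m)) := by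
      intro ρ hρ
      have := rch_d (B := B) (x := a) (b := b) δ (δ - ρ) (by omega) (fun ρ' h1 h2 =>
        Or.inr ⟨ρ', by omega, by omega, rfl⟩)
      rwa [show δ - (δ - ρ) = ρ by omega] at this
    refine strong_of_hub ?_ (a, b + (δ : Fin m)) ?_
    · rintro e ((⟨i, rfl⟩ | ⟨ρ, h1, h2, rfl⟩) | ⟨ρ, h1, h2, rfl⟩)
      exacts [rA_mem _ _, uA_mem _ _, dA_mem _ _]
    · intro x hx
      have hform : (∃ i, x = (i, b + (δ : Fin m))) ∨
          (∃ ρ, ρ ≤ δ ∧ x = (a, b + (ρ : Fin m))) := by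
        rcases hx with (hx | hx) | ⟨e, he, hx⟩
        · refine Or.inr ⟨0, by omega, ?_⟩
          rw [cast0]; exact hx
        · exact Or.inl ⟨c, hx⟩
        · rcases he with (⟨i, rfl⟩ | ⟨ρ, h1, h2, rfl⟩) | ⟨ρ, h1, h2, rfl⟩
          · rcases hx with rfl | rfl
            exacts [Or.inl ⟨i, rfl⟩, Or.inl ⟨i+1, rfl⟩]
          · rcases hx with rfl | rfl
            · exact Or.inr ⟨ρ, by omega, rfl⟩
            · refine Or.inr ⟨ρ+1, by omega, ?_⟩
              simp only [uA, badd_add_one]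
          · rcases hx with rfl | rfl
            · exact Or.inr ⟨ρ, by omega, rfl⟩
            · refine Or.inr ⟨ρ-1, by omega, ?_⟩
              simp only [dA, badd_sub_one h1]
      rcases hform with ⟨i, rfl⟩ | ⟨ρ, hρ, rfl⟩
      · exact ⟨rch_row hr i a, rch_row hr a i⟩
      · exact ⟨up ρ hρ, down ρ hρ⟩
  · -- B3 strong
    set B : Set (Arc n m) := rowS (b+((δ+1 : ℕ) : Fin m)) ∪ uS a b (δ+1) m ∪ dS a b (δ+2) m
      ∪ {dA a b} ∪ {uA c (b+(δ : Fin m))} ∪ {dA c (b+((δ+1 : ℕ) : Fin m))} with hBdef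
    have hr : ∀ i, rA i (b+((δ+1 : ℕ) : Fin m)) ∈ B := fun i =>
      Or.inl (Or.inl (Or.inl (Or.inl (Or.inl ⟨i, rfl⟩))))
    have hmemU : ∀ ρ : ℕ, δ+1 ≤ ρ → ρ < m → uA a (b + (ρ : Fin m)) ∈ B := fun ρ h1 h2 =>
      Or.inl (Or.inl (Or.inl (Or.inl (Or.inr ⟨ρ, h1, h2, rfl⟩))))
    have hmemD : ∀ ρ : ℕ, δ+2 ≤ ρ → ρ < m → dA a (b + (ρ : Fin m)) ∈ B := fun ρ h1 h2 =>
      Or.inl (Or.inl (Or.inl (Or.inr ⟨ρ, h1, h2, rfl⟩)))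
    have hdab : dA a b ∈ B := Or.inl (Or.inl (Or.inr rfl))
    have huc : uA c (b+(δ : Fin m)) ∈ B := Or.inl (Or.inr rfl)
    have hdc : dA c (b+((δ+1 : ℕ) : Fin m)) ∈ B := Or.inr rfl
    -- from (a, b+ρ) with δ+1 ≤ ρ ≤ m-1, up to (a, b)
    have upb : ∀ ρ : ℕ, δ+1 ≤ ρ → ρ < m → Rch B (a, b + (ρ : Fin m)) (a, b) := by
      intro ρ h1 h2
      have := rch_u (B := B) (x := a) (b := b) ρ (m - ρ) (fun ρ' g1 g2 =>
        hmemU ρ' (by omega) (by omega))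
      rwa [show ρ + (m - ρ) = m by omega, badd_m] at this
    -- from (a,b) to hub (a, b+(δ+1))
    have Rqa : Rch B (a, b) (a, b + ((δ+1 : ℕ) : Fin m)) := by
      have step1 : Rch B (a, b) (a, b + ((m-1 : ℕ) : Fin m)) := by
        refine Relation.ReflTransGen.single ?_
        show ((a, b), (a, b + ((m-1 : ℕ) : Fin m))) ∈ B
        rw [show ((a, b), (a, b + ((m-1 : ℕ) : Fin m))) = dA a b from by
          rw [dA, bsub_one]]
        exact hdab
      have step2 := rch_d (B := B) (x := a) (b := b) (m-1) (m-1-(δ+1)) (by omega)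
        (fun ρ' g1 g2 => hmemD ρ' (by omega) (by omega))
      rw [show m - 1 - (m - 1 - (δ+1)) = δ+1 by omega] at step2
      exact step1.trans step2
    have Rah : Rch B (a, b + ((δ+1 : ℕ) : Fin m)) (a, b) := by
      have := rch_u (B := B) (x := a) (b := b) (δ+1) (m - (δ+1)) (fun ρ' g1 g2 =>
        hmemU ρ' (by omega) (by omega))
      rwa [show δ + 1 + (m - (δ+1)) = m by omega, badd_m] at this
    have hubdown : ∀ ρ : ℕ, δ+1 ≤ ρ → ρ < m →
        Rch B (a, b + ((δ+1 : ℕ) : Fin m)) (a, b + (ρ : Fin m)) := by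
      intro ρ h1 h2
      have := rch_u (B := B) (x := a) (b := b) (δ+1) (ρ - (δ+1)) (fun ρ' g1 g2 =>
        hmemU ρ' (by omega) (by omega))
      rwa [show δ + 1 + (ρ - (δ+1)) = ρ by omega] at this
    -- v = (c, b+δ)
    have Rv1 : Rch B (c, b + (δ : Fin m)) (c, b + ((δ+1 : ℕ) : Fin m)) := by
      refine Relation.ReflTransGen.single ?_
      show ((c, b + (δ : Fin m)), (c, b + ((δ+1 : ℕ) : Fin m))) ∈ B
      rw [show ((c, b + (δ : Fin m)), (c, b + ((δ+1 : ℕ) : Fin m))) = uA c (b + (δ : Fin m))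
        from by rw [uA, badd_add_one]]
      exact huc
    have Rv2 : Rch B (c, b + ((δ+1 : ℕ) : Fin m)) (c, b + (δ : Fin m)) := by
      refine Relation.ReflTransGen.single ?_
      show ((c, b + ((δ+1 : ℕ) : Fin m)), (c, b + (δ : Fin m))) ∈ B
      rw [show ((c, b + ((δ+1 : ℕ) : Fin m)), (c, b + (δ : Fin m)))
          = dA c (b + ((δ+1 : ℕ) : Fin m)) from by
        rw [dA, badd_sub_one (by omega : 1 ≤ δ+1)]
        simp]
      exact hdc
    refine strong_of_hub ?_ (a, b + ((δ+1 : ℕ) : Fin m)) ?_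
    · rintro e (((((⟨i, rfl⟩ | ⟨ρ, h1, h2, rfl⟩) | ⟨ρ, h1, h2, rfl⟩) | rfl) | rfl) | rfl)
      exacts [rA_mem _ _, uA_mem _ _, dA_mem _ _, dA_mem _ _, uA_mem _ _, dA_mem _ _]
    · intro x hx
      have hform : (∃ i, x = (i, b + ((δ+1 : ℕ) : Fin m))) ∨
          (∃ ρ, (ρ = 0 ∨ (δ+1 ≤ ρ ∧ ρ < m)) ∧ x = (a, b + (ρ : Fin m))) ∨
          x = (c, b + (δ : Fin m)) := by
        rcases hx with (hx | hx) | ⟨e, he, hx⟩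
        · refine Or.inr (Or.inl ⟨0, Or.inl rfl, ?_⟩)
          rw [cast0]; exact hx
        · exact Or.inr (Or.inr hx)
        · rcases he with (((((⟨i, rfl⟩ | ⟨ρ, h1, h2, rfl⟩) | ⟨ρ, h1, h2, rfl⟩) | rfl) | rfl) | rfl)
          · rcases hx with rfl | rfl
            exacts [Or.inl ⟨i, rfl⟩, Or.inl ⟨i+1, rfl⟩]
          · rcases hx with rfl | rfl
            · exact Or.inr (Or.inl ⟨ρ, Or.inr ⟨h1, h2⟩, rfl⟩)
            · rcases Nat.lt_or_ge (ρ+1) m with h3 | h3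
              · refine Or.inr (Or.inl ⟨ρ+1, Or.inr ⟨by omega, h3⟩, ?_⟩)
                simp only [uA, badd_add_one]
              · refine Or.inr (Or.inl ⟨0, Or.inl rfl, ?_⟩)
                have : ρ + 1 = m := by omega
                simp only [uA, badd_add_one, this, badd_m, cast0]
          · rcases hx with rfl | rfl
            · exact Or.inr (Or.inl ⟨ρ, Or.inr ⟨by omega, h2⟩, rfl⟩)
            · refine Or.inr (Or.inl ⟨ρ-1, Or.inr ⟨by omega, by omega⟩, ?_⟩)
              simp only [dA, badd_sub_one (by omega : 1 ≤ ρ)]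
          · rcases hx with rfl | rfl
            · refine Or.inr (Or.inl ⟨0, Or.inl rfl, ?_⟩)
              rw [cast0]; rfl
            · refine Or.inr (Or.inl ⟨m-1, Or.inr ⟨by omega, by omega⟩, ?_⟩)
              simp only [dA, bsub_one]
          · rcases hx with rfl | rfl
            · exact Or.inr (Or.inr rfl)
            · refine Or.inl ⟨c, ?_⟩
              simp only [uA, badd_add_one]
          · rcases hx with rfl | rfl
            · exact Or.inl ⟨c, rfl⟩
            · refine Or.inr (Or.inr ?_)
              simp only [dA, badd_sub_one (by omega : 1 ≤ δ+1)]
              simp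
      rcases hform with ⟨i, rfl⟩ | ⟨ρ, hρ, rfl⟩ | rfl
      · exact ⟨rch_row hr i a, rch_row hr a i⟩
      · rcases hρ with rfl | ⟨h1, h2⟩
        · rw [cast0]
          exact ⟨Rqa, Rah⟩
        · exact ⟨(upb ρ h1 h2).trans Rqa, hubdown ρ h1 h2⟩
      · exact ⟨Rv1.trans (rch_row hr c a), (rch_row hr a c).trans Rv2⟩
  · -- Disjoint B1 B2
    rw [Set.disjoint_left]
    rintro e he1 he2
    rcases he1 with (⟨i, rfl⟩ | ⟨ρ, h1, h2, rfl⟩) | ⟨ρ, h1, h2, rfl⟩ <;>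
      rcases he2 with (⟨i', he2⟩ | ⟨ρ', g1, g2, he2⟩) | ⟨ρ', g1, g2, he2⟩ <;>
      first
        | exact uA_ne_rA hn he2
        | exact uA_ne_rA hn he2.symm
        | exact dA_ne_rA hn he2
        | exact dA_ne_rA hn he2.symm
        | exact absurd he2 (uA_ne_dA hm)
        | exact absurd he2.symm (uA_ne_dA hm)
        | exact hac (uA_inj he2).1
        | exact hac ((uA_inj he2).1).symm
        | exact hac (dA_inj he2).1
        | exact hac ((dA_inj he2).1).symm
        | exact badd_absurd (rA_inj he2).2 (by omega) (by omega) (by omega)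
        | exact badd_absurd ((rA_inj he2).2).symm (by omega) (by omega) (by omega)
        | exact badd_absurd (uA_inj he2).2 (by omega) (by omega) (by omega)
        | exact badd_absurd (dA_inj he2).2 (by omega) (by omega) (by omega)
        | exact badd0_absurd (rA_inj he2).2 (by omega) (by omega)
        | exact badd0_absurd ((rA_inj he2).2).symm (by omega) (by omega)
        | exact badd0_absurd ((dA_inj he2).2).symm (by omega) (by omega)
        | exact badd0_absurd (dA_inj he2).2 (by omega) (by omega)
  · -- Disjoint B1 B3
    rw [Set.disjoint_left]
    rintro e he1 he2
    rcases he1 with (⟨i, rfl⟩ | ⟨ρ, h1, h2, rfl⟩) | ⟨ρ, h1, h2, rfl⟩ <;>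
      rcases he2 with ((((⟨i', he2⟩ | ⟨ρ', g1, g2, he2⟩) | ⟨ρ', g1, g2, he2⟩) | he2) | he2) | he2 <;>
      (try simp only [Set.mem_singleton_iff] at he2) <;>
      first
        | exact uA_ne_rA hn he2
        | exact uA_ne_rA hn he2.symm
        | exact dA_ne_rA hn he2
        | exact dA_ne_rA hn he2.symm
        | exact absurd he2 (uA_ne_dA hm)
        | exact absurd he2.symm (uA_ne_dA hm)
        | exact hac (uA_inj he2).1
        | exact hac ((uA_inj he2).1).symm
        | exact hac (dA_inj he2).1
        | exact hac ((dA_inj he2).1).symm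
        | exact badd_absurd (rA_inj he2).2 (by omega) (by omega) (by omega)
        | exact badd_absurd ((rA_inj he2).2).symm (by omega) (by omega) (by omega)
        | exact badd_absurd (uA_inj he2).2 (by omega) (by omega) (by omega)
        | exact badd_absurd (dA_inj he2).2 (by omega) (by omega) (by omega)
        | exact badd0_absurd (rA_inj he2).2 (by omega) (by omega)
        | exact badd0_absurd ((rA_inj he2).2).symm (by omega) (by omega)
        | exact badd0_absurd ((dA_inj he2).2).symm (by omega) (by omega)
        | exact badd0_absurd (dA_inj he2).2 (by omega) (by omega)
  · -- Disjoint B2 B3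
    rw [Set.disjoint_left]
    rintro e he1 he2
    rcases he1 with (⟨i, rfl⟩ | ⟨ρ, h1, h2, rfl⟩) | ⟨ρ, h1, h2, rfl⟩ <;>
      rcases he2 with ((((⟨i', he2⟩ | ⟨ρ', g1, g2, he2⟩) | ⟨ρ', g1, g2, he2⟩) | he2) | he2) | he2 <;>
      (try simp only [Set.mem_singleton_iff] at he2) <;>
      first
        | exact uA_ne_rA hn he2
        | exact uA_ne_rA hn he2.symm
        | exact dA_ne_rA hn he2
        | exact dA_ne_rA hn he2.symm
        | exact absurd he2 (uA_ne_dA hm)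
        | exact absurd he2.symm (uA_ne_dA hm)
        | exact hac (uA_inj he2).1
        | exact hac ((uA_inj he2).1).symm
        | exact hac (dA_inj he2).1
        | exact hac ((dA_inj he2).1).symm
        | exact badd_absurd (rA_inj he2).2 (by omega) (by omega) (by omega)
        | exact badd_absurd ((rA_inj he2).2).symm (by omega) (by omega) (by omega)
        | exact badd_absurd (uA_inj he2).2 (by omega) (by omega) (by omega)
        | exact badd_absurd (dA_inj he2).2 (by omega) (by omega) (by omega)
        | exact badd0_absurd (rA_inj he2).2 (by omega) (by omega)
        | exact badd0_absurd ((rA_inj he2).2).symm (by omega) (by omega)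
        | exact badd0_absurd ((dA_inj he2).2).symm (by omega) (by omega)
        | exact badd0_absurd (dA_inj he2).2 (by omega) (by omega)


lemma cast1 (b : Fin m) : b + ((1:ℕ) : Fin m) = b + 1 := by norm_num

lemma caseD (hn : 3 ≤ n) (hm : 3 ≤ m) {a c : Fin n} (hac : c ≠ a) (b : Fin m) :
    ∃ B1 B2 B3 : Set (Arc n m),
      (PD n m).IsStrongSubgraphOn {(a,b),(c,b+((m-1 : ℕ) : Fin m))} B1 ∧
      (PD n m).IsStrongSubgraphOn {(a,b),(c,b+((m-1 : ℕ) : Fin m))} B2 ∧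
      (PD n m).IsStrongSubgraphOn {(a,b),(c,b+((m-1 : ℕ) : Fin m))} B3 ∧
      Disjoint B1 B2 ∧ Disjoint B1 B3 ∧ Disjoint B2 B3 := by
  have hm1 : (m - 1) + 1 = m := by omega
  refine ⟨rowS b ∪ {uA c (b+((m-1 : ℕ) : Fin m))} ∪ {dA c b},
    rowS (b+((m-1 : ℕ) : Fin m)) ∪ {dA a b} ∪ {uA a (b+((m-1 : ℕ) : Fin m))},
    rowS (b+((1 : ℕ) : Fin m)) ∪ {uA a b} ∪ {dA a (b+((1 : ℕ) : Fin m))}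
      ∪ dS c b 2 m ∪ uS c b 1 (m-1), ?_, ?_, ?_, ?_, ?_, ?_⟩
  · -- B1 strong
    set B : Set (Arc n m) := rowS b ∪ {uA c (b+((m-1 : ℕ) : Fin m))} ∪ {dA c b} with hBdef
    have hr : ∀ i, rA i b ∈ B := fun i => Or.inl (Or.inl ⟨i, rfl⟩)
    have hu : uA c (b+((m-1 : ℕ) : Fin m)) ∈ B := Or.inl (Or.inr rfl)
    have hd : dA c b ∈ B := Or.inr rfl
    have Rv1 : Rch B (c, b+((m-1 : ℕ) : Fin m)) (c, b) := by
      refine Relation.ReflTransGen.single ?_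
      show ((c, b+((m-1 : ℕ) : Fin m)), (c, b)) ∈ B
      rw [show ((c, b+((m-1 : ℕ) : Fin m)), (c, b)) = uA c (b+((m-1 : ℕ) : Fin m)) from by
        rw [uA, badd_add_one, hm1, badd_m]]
      exact hu
    have Rv2 : Rch B (c, b) (c, b+((m-1 : ℕ) : Fin m)) := by
      refine Relation.ReflTransGen.single ?_
      show ((c, b), (c, b+((m-1 : ℕ) : Fin m))) ∈ B
      rw [show ((c, b), (c, b+((m-1 : ℕ) : Fin m))) = dA c b from by rw [dA, bsub_one]]
      exact hd
    refine strong_of_hub ?_ (a, b) ?_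
    · rintro e ((⟨i, rfl⟩ | rfl) | rfl)
      exacts [rA_mem _ _, uA_mem _ _, dA_mem _ _]
    · intro x hx
      have hform : (∃ i, x = (i, b)) ∨ x = (c, b+((m-1 : ℕ) : Fin m)) := by
        rcases hx with (hx | hx) | ⟨e, he, hx⟩
        · exact Or.inl ⟨a, hx⟩
        · exact Or.inr hx
        · rcases he with (⟨i, rfl⟩ | rfl) | rfl
          · rcases hx with rfl | rfl
            exacts [Or.inl ⟨i, rfl⟩, Or.inl ⟨i+1, rfl⟩]
          · rcases hx with rfl | rfl
            · exact Or.inr rfl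
            · refine Or.inl ⟨c, ?_⟩
              simp only [uA, badd_add_one, hm1, badd_m]
          · rcases hx with rfl | rfl
            · exact Or.inl ⟨c, rfl⟩
            · refine Or.inr ?_
              simp only [dA, bsub_one]
      rcases hform with ⟨i, rfl⟩ | rfl
      · exact ⟨rch_row hr i a, rch_row hr a i⟩
      · exact ⟨Rv1.trans (rch_row hr c a), (rch_row hr a c).trans Rv2⟩
  · -- B2 strong
    set B : Set (Arc n m) := rowS (b+((m-1 : ℕ) : Fin m)) ∪ {dA a b}
      ∪ {uA a (b+((m-1 : ℕ) : Fin m))} with hBdef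
    have hr : ∀ i, rA i (b+((m-1 : ℕ) : Fin m)) ∈ B := fun i => Or.inl (Or.inl ⟨i, rfl⟩)
    have hd : dA a b ∈ B := Or.inl (Or.inr rfl)
    have hu : uA a (b+((m-1 : ℕ) : Fin m)) ∈ B := Or.inr rfl
    have Ru1 : Rch B (a, b) (a, b+((m-1 : ℕ) : Fin m)) := by
      refine Relation.ReflTransGen.single ?_
      show ((a, b), (a, b+((m-1 : ℕ) : Fin m))) ∈ B
      rw [show ((a, b), (a, b+((m-1 : ℕ) : Fin m))) = dA a b from by rw [dA, bsub_one]]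
      exact hd
    have Ru2 : Rch B (a, b+((m-1 : ℕ) : Fin m)) (a, b) := by
      refine Relation.ReflTransGen.single ?_
      show ((a, b+((m-1 : ℕ) : Fin m)), (a, b)) ∈ B
      rw [show ((a, b+((m-1 : ℕ) : Fin m)), (a, b)) = uA a (b+((m-1 : ℕ) : Fin m)) from by
        rw [uA, badd_add_one, hm1, badd_m]]
      exact hu
    refine strong_of_hub ?_ (a, b+((m-1 : ℕ) : Fin m)) ?_
    · rintro e ((⟨i, rfl⟩ | rfl) | rfl)
      exacts [rA_mem _ _, dA_mem _ _, uA_mem _ _]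
    · intro x hx
      have hform : (∃ i, x = (i, b+((m-1 : ℕ) : Fin m))) ∨ x = (a, b) := by
        rcases hx with (hx | hx) | ⟨e, he, hx⟩
        · exact Or.inr hx
        · exact Or.inl ⟨c, hx⟩
        · rcases he with (⟨i, rfl⟩ | rfl) | rfl
          · rcases hx with rfl | rfl
            exacts [Or.inl ⟨i, rfl⟩, Or.inl ⟨i+1, rfl⟩]
          · rcases hx with rfl | rfl
            · exact Or.inr rfl
            · refine Or.inl ⟨a, ?_⟩
              simp only [dA, bsub_one]
          · rcases hx with rfl | rfl
            · exact Or.inl ⟨a, rfl⟩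
            · refine Or.inr ?_
              simp only [uA, badd_add_one, hm1, badd_m]
      rcases hform with ⟨i, rfl⟩ | rfl
      · exact ⟨rch_row hr i a, rch_row hr a i⟩
      · exact ⟨Ru1, Ru2⟩
  · -- B3 strong
    set B : Set (Arc n m) := rowS (b+((1 : ℕ) : Fin m)) ∪ {uA a b} ∪ {dA a (b+((1 : ℕ) : Fin m))}
      ∪ dS c b 2 m ∪ uS c b 1 (m-1) with hBdef
    have hr : ∀ i, rA i (b+((1 : ℕ) : Fin m)) ∈ B := fun i =>
      Or.inl (Or.inl (Or.inl (Or.inl ⟨i, rfl⟩)))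
    have hu : uA a b ∈ B := Or.inl (Or.inl (Or.inl (Or.inr rfl)))
    have hd : dA a (b+((1 : ℕ) : Fin m)) ∈ B := Or.inl (Or.inl (Or.inr rfl))
    have hmemD : ∀ ρ : ℕ, 2 ≤ ρ → ρ < m → dA c (b + (ρ : Fin m)) ∈ B := fun ρ h1 h2 =>
      Or.inl (Or.inr ⟨ρ, h1, h2, rfl⟩)
    have hmemU : ∀ ρ : ℕ, 1 ≤ ρ → ρ < m-1 → uA c (b + (ρ : Fin m)) ∈ B := fun ρ h1 h2 =>
      Or.inr ⟨ρ, h1, h2, rfl⟩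
    have Ru1 : Rch B (a, b) (a, b+((1 : ℕ) : Fin m)) := by
      refine Relation.ReflTransGen.single ?_
      show ((a, b), (a, b+((1 : ℕ) : Fin m))) ∈ B
      rw [show ((a, b), (a, b+((1 : ℕ) : Fin m))) = uA a b from by
        rw [uA, cast1]]
      exact hu
    have Ru2 : Rch B (a, b+((1 : ℕ) : Fin m)) (a, b) := by
      refine Relation.ReflTransGen.single ?_
      show ((a, b+((1 : ℕ) : Fin m)), (a, b)) ∈ B
      rw [show ((a, b+((1 : ℕ) : Fin m)), (a, b)) = dA a (b+((1 : ℕ) : Fin m)) from by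
        rw [dA, badd_sub_one (le_refl 1)]
        simp]
      exact hd
    have down : ∀ ρ : ℕ, 1 ≤ ρ → ρ ≤ m-1 → Rch B (c, b + (ρ : Fin m)) (c, b+((1 : ℕ) : Fin m)) := by
      intro ρ h1 h2
      have := rch_d (B := B) (x := c) (b := b) ρ (ρ-1) (by omega) (fun ρ' g1 g2 =>
        hmemD ρ' (by omega) (by omega))
      rwa [show ρ - (ρ - 1) = 1 by omega] at this
    have up : ∀ ρ : ℕ, 1 ≤ ρ → ρ ≤ m-1 → Rch B (c, b+((1 : ℕ) : Fin m)) (c, b + (ρ : Fin m)) := by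
      intro ρ h1 h2
      have := rch_u (B := B) (x := c) (b := b) 1 (ρ-1) (fun ρ' g1 g2 =>
        hmemU ρ' (by omega) (by omega))
      rwa [show 1 + (ρ - 1) = ρ by omega] at this
    refine strong_of_hub ?_ (a, b+((1 : ℕ) : Fin m)) ?_
    · rintro e ((((⟨i, rfl⟩ | rfl) | rfl) | ⟨ρ, h1, h2, rfl⟩) | ⟨ρ, h1, h2, rfl⟩)
      exacts [rA_mem _ _, uA_mem _ _, dA_mem _ _, dA_mem _ _, uA_mem _ _]
    · intro x hx
      have hform : (∃ i, x = (i, b+((1 : ℕ) : Fin m))) ∨ x = (a, b) ∨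
          (∃ ρ, 1 ≤ ρ ∧ ρ ≤ m-1 ∧ x = (c, b + (ρ : Fin m))) := by
        rcases hx with (hx | hx) | ⟨e, he, hx⟩
        · exact Or.inr (Or.inl hx)
        · exact Or.inr (Or.inr ⟨m-1, by omega, le_rfl, hx⟩)
        · rcases he with (((⟨i, rfl⟩ | rfl) | rfl) | ⟨ρ, h1, h2, rfl⟩) | ⟨ρ, h1, h2, rfl⟩
          · rcases hx with rfl | rfl
            exacts [Or.inl ⟨i, rfl⟩, Or.inl ⟨i+1, rfl⟩]
          · rcases hx with rfl | rfl
            · exact Or.inr (Or.inl rfl)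
            · refine Or.inl ⟨a, ?_⟩
              simp only [uA, cast1]
          · rcases hx with rfl | rfl
            · exact Or.inl ⟨a, rfl⟩
            · refine Or.inr (Or.inl ?_)
              simp only [dA, badd_sub_one (le_refl 1)]
              simp
          · rcases hx with rfl | rfl
            · exact Or.inr (Or.inr ⟨ρ, by omega, by omega, rfl⟩)
            · refine Or.inr (Or.inr ⟨ρ-1, by omega, by omega, ?_⟩)
              simp only [dA, badd_sub_one (by omega : 1 ≤ ρ)]
          · rcases hx with rfl | rfl
            · exact Or.inr (Or.inr ⟨ρ, by omega, by omega, rfl⟩)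
            · refine Or.inr (Or.inr ⟨ρ+1, by omega, by omega, ?_⟩)
              simp only [uA, badd_add_one]
      rcases hform with ⟨i, rfl⟩ | rfl | ⟨ρ, h1, h2, rfl⟩
      · exact ⟨rch_row hr i a, rch_row hr a i⟩
      · exact ⟨Ru1, Ru2⟩
      · exact ⟨(down ρ h1 h2).trans (rch_row hr c a),
          (rch_row hr a c).trans (up ρ h1 h2)⟩
  · -- Disjoint B1 B2
    rw [Set.disjoint_left]
    rintro e he1 he2
    rcases he1 with (⟨i, rfl⟩ | rfl) | rfl <;>
      rcases he2 with (⟨i', he2⟩ | he2) | he2 <;>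
      (try simp only [Set.mem_singleton_iff] at he2) <;>
      first
        | exact uA_ne_rA hn he2
        | exact uA_ne_rA hn he2.symm
        | exact dA_ne_rA hn he2
        | exact dA_ne_rA hn he2.symm
        | exact absurd he2 (uA_ne_dA hm)
        | exact absurd he2.symm (uA_ne_dA hm)
        | exact hac (uA_inj he2).1
        | exact hac ((uA_inj he2).1).symm
        | exact hac (dA_inj he2).1
        | exact hac ((dA_inj he2).1).symm
        | exact badd_absurd (rA_inj he2).2 (by omega) (by omega) (by omega)
        | exact badd_absurd (uA_inj he2).2 (by omega) (by omega) (by omega)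
        | exact badd_absurd (dA_inj he2).2 (by omega) (by omega) (by omega)
        | exact badd0_absurd (rA_inj he2).2 (by omega) (by omega)
        | exact badd0_absurd ((rA_inj he2).2).symm (by omega) (by omega)
        | exact badd0_absurd (uA_inj he2).2 (by omega) (by omega)
        | exact badd0_absurd ((uA_inj he2).2).symm (by omega) (by omega)
        | exact badd0_absurd (dA_inj he2).2 (by omega) (by omega)
        | exact badd0_absurd ((dA_inj he2).2).symm (by omega) (by omega)
  · -- Disjoint B1 B3
    rw [Set.disjoint_left]
    rintro e he1 he2
    rcases he1 with (⟨i, rfl⟩ | rfl) | rfl <;>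
      rcases he2 with ((((⟨i', he2⟩ | he2) | he2) | ⟨ρ', g1, g2, he2⟩) | ⟨ρ', g1, g2, he2⟩) <;>
      (try simp only [Set.mem_singleton_iff] at he2) <;>
      first
        | exact uA_ne_rA hn he2
        | exact uA_ne_rA hn he2.symm
        | exact dA_ne_rA hn he2
        | exact dA_ne_rA hn he2.symm
        | exact absurd he2 (uA_ne_dA hm)
        | exact absurd he2.symm (uA_ne_dA hm)
        | exact hac (uA_inj he2).1
        | exact hac ((uA_inj he2).1).symm
        | exact hac (dA_inj he2).1
        | exact hac ((dA_inj he2).1).symm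
        | exact badd_absurd (rA_inj he2).2 (by omega) (by omega) (by omega)
        | exact badd_absurd (uA_inj he2).2 (by omega) (by omega) (by omega)
        | exact badd_absurd (dA_inj he2).2 (by omega) (by omega) (by omega)
        | exact badd0_absurd (rA_inj he2).2 (by omega) (by omega)
        | exact badd0_absurd ((rA_inj he2).2).symm (by omega) (by omega)
        | exact badd0_absurd (uA_inj he2).2 (by omega) (by omega)
        | exact badd0_absurd ((uA_inj he2).2).symm (by omega) (by omega)
        | exact badd0_absurd (dA_inj he2).2 (by omega) (by omega)
        | exact badd0_absurd ((dA_inj he2).2).symm (by omega) (by omega)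
  · -- Disjoint B2 B3
    rw [Set.disjoint_left]
    rintro e he1 he2
    rcases he1 with (⟨i, rfl⟩ | rfl) | rfl <;>
      rcases he2 with ((((⟨i', he2⟩ | he2) | he2) | ⟨ρ', g1, g2, he2⟩) | ⟨ρ', g1, g2, he2⟩) <;>
      (try simp only [Set.mem_singleton_iff] at he2) <;>
      first
        | exact uA_ne_rA hn he2
        | exact uA_ne_rA hn he2.symm
        | exact dA_ne_rA hn he2
        | exact dA_ne_rA hn he2.symm
        | exact absurd he2 (uA_ne_dA hm)
        | exact absurd he2.symm (uA_ne_dA hm)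
        | exact hac (uA_inj he2).1
        | exact hac ((uA_inj he2).1).symm
        | exact hac (dA_inj he2).1
        | exact hac ((dA_inj he2).1).symm
        | exact badd_absurd (rA_inj he2).2 (by omega) (by omega) (by omega)
        | exact badd_absurd (uA_inj he2).2 (by omega) (by omega) (by omega)
        | exact badd_absurd (dA_inj he2).2 (by omega) (by omega) (by omega)
        | exact badd0_absurd (rA_inj he2).2 (by omega) (by omega)
        | exact badd0_absurd ((rA_inj he2).2).symm (by omega) (by omega)
        | exact badd0_absurd (uA_inj he2).2 (by omega) (by omega)
        | exact badd0_absurd ((uA_inj he2).2).symm (by omega) (by omega)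
        | exact badd0_absurd (dA_inj he2).2 (by omega) (by omega)
        | exact badd0_absurd ((dA_inj he2).2).symm (by omega) (by omega)


lemma exists3 (hn : 3 ≤ n) (hm : 3 ≤ m) (u v : Fin n × Fin m) :
    ∃ B1 B2 B3 : Set (Arc n m),
      (PD n m).IsStrongSubgraphOn {u,v} B1 ∧
      (PD n m).IsStrongSubgraphOn {u,v} B2 ∧
      (PD n m).IsStrongSubgraphOn {u,v} B3 ∧
      Disjoint B1 B2 ∧ Disjoint B1 B3 ∧ Disjoint B2 B3 := by
  obtain ⟨a, b⟩ := u
  obtain ⟨c, d⟩ := v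
  by_cases hac : c = a
  · subst hac
    exact caseA hn hm c b d
  · by_cases hbd : d = b
    · subst hbd
      exact caseB hn hm a c d
    · set δ := (d - b).val with hδdef
      have hd : b + (δ : Fin m) = d := by
        rw [hδdef, Fin.cast_val_eq_self, add_sub_cancel]
      have hδ1 : 1 ≤ δ := by
        rcases Nat.eq_zero_or_pos δ with h0 | h1
        · exfalso
          apply hbd
          rw [← hd, h0]
          simp [cast0]
        · exact h1
      have hδm : δ < m := (d - b).isLt
      rcases Nat.lt_or_ge δ (m - 1) with h2 | h2
      · have := caseC hn hm hac b hδ1 (by omega : δ + 2 ≤ m)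
        rwa [hd] at this
      · have hδeq : δ = m - 1 := by omega
        have := caseD hn hm hac b
        rwa [← hδeq, hd] at this

lemma mem_K_le_three (hn : 3 ≤ n) (hm : 3 ≤ m) {u v : Fin n × Fin m} (huv : u ≠ v)
    {k : ℕ}
    (hk : ∃ f : Fin k → Set (Arc n m),
      (∀ i, (PD n m).IsStrongSubgraphOn {u,v} (f i)) ∧
      ∀ i j, i ≠ j → Disjoint (f i) (f j)) : k ≤ 3 := by
  obtain ⟨f, hstr, hdisj⟩ := hk
  have hout : ∀ i, ∃ w, (u, w) ∈ f i := by
    intro i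
    have hreach := (hstr i).2 u (Or.inl (by simp)) v (Or.inl (by simp))
    rcases hreach.cases_head with heq | ⟨w, hw, _⟩
    · exact absurd heq huv
    · exact ⟨w, hw⟩
  choose g hg using hout
  set T : Finset (Fin n × Fin m) :=
    {(u.1 + 1, u.2), (u.1, u.2 + 1), (u.1, u.2 - 1)} with hT
  have hmem : ∀ i, g i ∈ T := by
    intro i
    have hadj : (PD n m).Adj u (g i) := (hstr i).1 (hg i)
    rcases hadj with ⟨h1, h2⟩ | ⟨h1, h2⟩
    · have hg1 : (g i).1 = u.1 + 1 := by
        apply Fin.ext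
        rw [val_add_one]
        exact h1
      have : g i = (u.1 + 1, u.2) := Prod.ext hg1 h2.symm
      simp [hT, this]
    · rcases h2 with h2 | h2
      · have hg2 : (g i).2 = u.2 + 1 := by
          apply Fin.ext
          rw [val_add_one]
          exact h2
        have : g i = (u.1, u.2 + 1) := Prod.ext h1.symm hg2
        simp [hT, this]
      · have hg2 : u.2 = (g i).2 + 1 := by
          apply Fin.ext
          rw [val_add_one]
          exact h2
        have hg2' : (g i).2 = u.2 - 1 := by
          rw [hg2, add_sub_cancel_right]
        have : g i = (u.1, u.2 - 1) := Prod.ext h1.symm hg2'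
        simp [hT, this]
  have hinj : Set.InjOn g (Finset.univ : Finset (Fin k)) := by
    intro i _ j _ heq
    by_contra hne
    have h1 : (u, g i) ∈ f i := hg i
    have h2 : (u, g i) ∈ f j := by rw [heq]; exact hg j
    exact Set.disjoint_left.mp (hdisj i j hne) h1 h2
  have hcard := Finset.card_le_card_of_injOn g (fun i _ => hmem i) hinj
  have hTcard : T.card ≤ 3 := by
    have h1 := Finset.card_insert_le (u.1 + 1, u.2)
      (insert (u.1, u.2 + 1) ({(u.1, u.2 - 1)} : Finset (Fin n × Fin m)))
    have h2 := Finset.card_insert_le (u.1, u.2 + 1) ({(u.1, u.2 - 1)} : Finset (Fin n × Fin m))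
    have h3 : ({(u.1, u.2 - 1)} : Finset (Fin n × Fin m)).card = 1 := Finset.card_singleton _
    rw [hT]
    omega
  simpa using hcard.trans hTcard

lemma lambdaS_eq_three (hn : 3 ≤ n) (hm : 3 ≤ m) {u v : Fin n × Fin m} (huv : u ≠ v) :
    (PD n m).lambdaS {u,v} = 3 := by
  rw [Digraph.lambdaS]
  set K := {k | ∃ f : Fin k → Set (Arc n m),
    (∀ i, (PD n m).IsStrongSubgraphOn {u,v} (f i)) ∧
    ∀ i j, i ≠ j → Disjoint (f i) (f j)} with hK
  have hub : ∀ k ∈ K, k ≤ 3 := fun k hk => mem_K_le_three hn hm huv hk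
  have h3 : 3 ∈ K := by
    obtain ⟨B1, B2, B3, hs1, hs2, hs3, d12, d13, d23⟩ := exists3 hn hm u v
    refine ⟨![B1, B2, B3], ?_, ?_⟩
    · intro i
      fin_cases i <;> simpa
    · intro i j hij
      fin_cases i <;> fin_cases j <;> simp_all <;>
        first
          | exact d12 | exact d13 | exact d23
          | exact d12.symm | exact d13.symm | exact d23.symm
  exact le_antisymm (csSup_le ⟨3, h3⟩ hub) (le_csSup ⟨3, hub⟩ h3)

end St13

theorem stmt13 (n m : ℕ) (hn : 3 ≤ n) (hm : 3 ≤ m) :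
    ((dirCycle n).cartProd (biCycle m)).lambdaK 2 = 3 := by
  haveI : NeZero n := ⟨by omega⟩
  haveI : NeZero m := ⟨by omega⟩
  have key : ∀ u v : Fin n × Fin m, u ≠ v →
      ((dirCycle n).cartProd (biCycle m)).lambdaS {u,v} = 3 := fun u v huv =>
    St13.lambdaS_eq_three hn hm huv
  rw [Digraph.lambdaK]
  have hne01 : ((0,0) : Fin n × Fin m) ≠ (0,1) := by
    intro h
    have := (Prod.ext_iff.mp h).2
    exact St13.one_ne_zero' hm this.symm
  have h3mem : 3 ∈ {r | ∃ S : Set (Fin n × Fin m), S.ncard = 2 ∧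
      ((dirCycle n).cartProd (biCycle m)).lambdaS S = r} :=
    ⟨{(0,0),(0,1)}, Set.ncard_pair hne01, key _ _ hne01⟩
  refine le_antisymm (Nat.sInf_le h3mem) (le_csInf ⟨3, h3mem⟩ ?_)
  rintro r ⟨S, hS2, hSr⟩
  obtain ⟨u, v, huv, rfl⟩ := Set.ncard_eq_two.mp hS2
  rw [← hSr, key u v huv]
end

section
/- For an integer n ≥ 3 and any tree T on m ≥ 2 vertices, λ_2(→C_n □ ↔T) = 2, where →C_n is the directed cycle on n vertices and ↔T is the complete biorientation of T. -/
namespace SSAux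

open Relation SimpleGraph
open Fin.CommRing

set_option linter.unusedSectionVars false
set_option linter.unusedVariables false

variable {V : Type*} {n : ℕ} [NeZero n]

def Reach (B : Set ((Fin n × V) × (Fin n × V))) (x y : Fin n × V) : Prop :=
  Relation.ReflTransGen (fun a b => (a, b) ∈ B) x y

lemma Reach.mono {B B' : Set ((Fin n × V) × (Fin n × V))} (h : B ⊆ B') {x y : Fin n × V}
    (hr : Reach B x y) : Reach B' x y :=
  Relation.ReflTransGen.mono (fun a b hab => h hab) x y hr

lemma Reach.trans {B : Set ((Fin n × V) × (Fin n × V))} {x y z : Fin n × V}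
    (h1 : Reach B x y) (h2 : Reach B y z) : Reach B x z :=
  Relation.ReflTransGen.trans h1 h2

def cycArcs (n : ℕ) [NeZero n] (s : V) : Set ((Fin n × V) × (Fin n × V)) :=
  {e | e.1.2 = s ∧ e.2.2 = s ∧ e.2.1 = e.1.1 + 1}

lemma mem_cycArcs (s : V) (i : Fin n) : (((i, s)), ((i + 1, s))) ∈ cycArcs n s :=
  ⟨rfl, rfl, rfl⟩

lemma fin_val_add_one (hn : 2 ≤ n) (i : Fin n) : ((i + 1 : Fin n) : ℕ) = ((i : ℕ) + 1) % n := by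
  rw [Fin.add_def]
  congr 1
  simp [Fin.val_one']

lemma fin_succ_ne (hn : 2 ≤ n) (i : Fin n) : i + 1 ≠ i := by
  intro h
  have h2 := congrArg Fin.val h
  rw [fin_val_add_one hn] at h2
  rcases Nat.lt_or_ge ((i : ℕ) + 1) n with h3 | h3
  · rw [Nat.mod_eq_of_lt h3] at h2; omega
  · have : (i : ℕ) < n := i.isLt
    have : (i : ℕ) + 1 = n := by omega
    rw [this, Nat.mod_self] at h2
    omega

lemma fin_sub_one_ne (hn : 2 ≤ n) (a : Fin n) : a - 1 ≠ a := by
  intro h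
  have := fin_succ_ne hn (a - 1)
  rw [sub_add_cancel] at this
  exact this h.symm

lemma cyc_aux (hn : 2 ≤ n) {B : Set ((Fin n × V) × (Fin n × V))} (s : V) :
    ∀ (d : ℕ) (i : Fin n), (∀ k : ℕ, k < d → (((i + (k : Fin n), s)), ((i + (k : Fin n) + 1, s))) ∈ B) →
      Reach B (i, s) (i + (d : Fin n), s) := by
  intro d
  induction d with
  | zero => intro i _; simp only [Nat.cast_zero, add_zero]; exact Relation.ReflTransGen.refl
  | succ d ih =>
    intro i h
    have h0 : (((i, s)), ((i + 1, s))) ∈ B := by simpa using h 0 (Nat.succ_pos d)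
    have h1 : Reach B (i + 1, s) ((i + 1) + (d : Fin n), s) := by
      apply ih
      intro k hk
      have := h (k + 1) (by omega)
      push_cast at this ⊢
      convert this using 3 <;> ring
    have : i + ((d : ℕ) + 1 : ℕ) = (i + 1) + (d : Fin n) := by push_cast; ring
    rw [this]
    exact Relation.ReflTransGen.head h0 h1

lemma cyc_reach_to (hn : 2 ≤ n) {B : Set ((Fin n × V) × (Fin n × V))} (s : V) (m : Fin n)
    (hB : ∀ c : Fin n, c ≠ m → (((c, s)), ((c + 1, s))) ∈ B) (i : Fin n) :
    Reach B (i, s) (m, s) := by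
  have key := cyc_aux hn (B := B) s ((m - i : Fin n) : ℕ) i ?_
  · rwa [Fin.cast_val_eq_self, add_sub_cancel] at key
  · intro k hk
    apply hB
    intro hc
    have : (k : Fin n) = m - i := by
      have := congrArg (fun x => x - i) hc
      simpa using this
    have hv : (k : ℕ) % n = ((m - i : Fin n) : ℕ) := congrArg Fin.val this
    have hklt : k < n := lt_of_lt_of_le hk (le_of_lt (m - i).isLt)
    rw [Nat.mod_eq_of_lt hklt] at hv
    omega

lemma cyc_reach_from (hn : 2 ≤ n) {B : Set ((Fin n × V) × (Fin n × V))} (s : V) (m : Fin n)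
    (hB : ∀ c : Fin n, c ≠ m - 1 → (((c, s)), ((c + 1, s))) ∈ B) (j : Fin n) :
    Reach B (m, s) (j, s) := by
  have key := cyc_aux hn (B := B) s ((j - m : Fin n) : ℕ) m ?_
  · rwa [Fin.cast_val_eq_self, add_sub_cancel] at key
  · intro k hk
    apply hB
    intro hc
    have h1 : m + (k : Fin n) + 1 = m := by rw [hc]; rw [sub_add_cancel]
    have h2 : ((k : ℕ) + 1 : Fin n) = 0 := by
      have := congrArg (fun x => x - m) h1
      push_cast at this ⊢
      linear_combination this
    have hklt : k < n := lt_of_lt_of_le hk (le_of_lt (j - m).isLt)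
    have hd := (j - m).isLt
    have hv := congrArg Fin.val h2
    rw [Fin.add_def, Fin.val_natCast, Fin.val_one', Fin.val_zero] at hv
    rw [Nat.mod_eq_of_lt hklt, Nat.mod_eq_of_lt (show 1 < n by omega)] at hv
    have hv2 : (k + 1) % n = 0 := hv
    rcases Nat.lt_or_ge (k + 1) n with h | h
    · rw [Nat.mod_eq_of_lt h] at hv2; omega
    · omega

lemma cyc_full_reach (hn : 2 ≤ n) {B : Set ((Fin n × V) × (Fin n × V))} (s : V)
    (hsub : cycArcs n s ⊆ B) (i j : Fin n) : Reach B (i, s) (j, s) :=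
  cyc_reach_to hn s j (fun c _ => hsub (mem_cycArcs s c)) i



def treeArcsAt (T : SimpleGraph V) (n : ℕ) [NeZero n] (c : Fin n) :
    Set ((Fin n × V) × (Fin n × V)) :=
  {e | e.1.1 = c ∧ e.2.1 = c ∧ T.Adj e.1.2 e.2.2}

lemma tree_reach {T : SimpleGraph V} {B : Set ((Fin n × V) × (Fin n × V))} {c : Fin n}
    (hsub : treeArcsAt T n c ⊆ B) (hconn : T.Preconnected) (x y : V) :
    Reach B (c, x) (c, y) := by
  obtain ⟨w⟩ := hconn x y
  induction w with
  | nil => exact Relation.ReflTransGen.refl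
  | @cons u v' w' h q ih =>
    exact Relation.ReflTransGen.head (hsub ⟨rfl, rfl, h⟩) ih

def fwdArcs (T : SimpleGraph V) (n : ℕ) [NeZero n] (c : Fin n) {s t : V} (w : T.Walk s t) :
    Set ((Fin n × V) × (Fin n × V)) :=
  {e | ∃ d ∈ w.darts, e = ((c, d.fst), (c, d.snd))}

lemma fwdArcs_mono {T : SimpleGraph V} {c : Fin n} {s t s' t' : V} {w : T.Walk s t}
    {w' : T.Walk s' t'} (h : ∀ d ∈ w.darts, d ∈ w'.darts) :
    fwdArcs T n c w ⊆ fwdArcs T n c w' := by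
  rintro e ⟨d, hd, rfl⟩
  exact ⟨d, h d hd, rfl⟩

lemma fwd_reach_support {T : SimpleGraph V} {B : Set ((Fin n × V) × (Fin n × V))} {c : Fin n}
    {s t : V} (w : T.Walk s t) (hsub : fwdArcs T n c w ⊆ B) :
    ∀ x ∈ w.support, Reach B (c, s) (c, x) ∧ Reach B (c, x) (c, t) := by
  induction w with
  | nil =>
    intro x hx
    simp only [SimpleGraph.Walk.support_nil, List.mem_singleton] at hx
    subst hx
    exact ⟨Relation.ReflTransGen.refl, Relation.ReflTransGen.refl⟩
  | @cons u v' w' h q ih =>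
    intro x hx
    have harc : ((c, u), (c, v')) ∈ B := by
      apply hsub
      exact ⟨⟨(u, v'), h⟩, by simp [SimpleGraph.Walk.darts_cons], rfl⟩
    have hsub' : fwdArcs T n c q ⊆ B := by
      refine subset_trans (fwdArcs_mono ?_) hsub
      intro d hd
      simp [SimpleGraph.Walk.darts_cons, hd]
    simp only [SimpleGraph.Walk.support_cons, List.mem_cons] at hx
    rcases hx with rfl | hx
    · refine ⟨Relation.ReflTransGen.refl, ?_⟩
      exact Relation.ReflTransGen.head harc
        (ih hsub' v' (SimpleGraph.Walk.start_mem_support q)).2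
    · refine ⟨Relation.ReflTransGen.head harc (ih hsub' x hx).1, (ih hsub' x hx).2⟩

lemma fwd_reach {T : SimpleGraph V} {B : Set ((Fin n × V) × (Fin n × V))} {c : Fin n}
    {s t : V} (w : T.Walk s t) (hsub : fwdArcs T n c w ⊆ B) :
    Reach B (c, s) (c, t) :=
  (fwd_reach_support w hsub t (SimpleGraph.Walk.end_mem_support w)).1

lemma mem_fwdArcs_shape {T : SimpleGraph V} {c : Fin n} {s t : V} {w : T.Walk s t}
    {e : (Fin n × V) × (Fin n × V)} (he : e ∈ fwdArcs T n c w) :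
    e.1.1 = c ∧ e.2.1 = c ∧ T.Adj e.1.2 e.2.2 := by
  obtain ⟨d, hd, rfl⟩ := he
  exact ⟨rfl, rfl, d.adj⟩

lemma fwd_bwd_disjoint {T : SimpleGraph V} {c c' : Fin n} {s t : V} {p : T.Walk s t}
    (hp : p.IsPath) : Disjoint (fwdArcs T n c p) (fwdArcs T n c' p.reverse) := by
  rw [Set.disjoint_left]
  rintro e ⟨d, hd, rfl⟩ ⟨d', hd', he⟩
  have h1 : d.fst = d'.fst ∧ d.snd = d'.snd := by
    constructor
    · exact congrArg (fun q => q.1.2) he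
    · exact congrArg (fun q => q.2.2) he
  rw [SimpleGraph.Walk.mem_darts_reverse] at hd'
  have hedge : d.edge = d'.symm.edge := by
    rw [SimpleGraph.Dart.edge, SimpleGraph.Dart.edge]
    have : d'.symm.toProd = (d'.snd, d'.fst) := rfl
    rw [this]
    have h2 : d.toProd = (d.fst, d.snd) := rfl
    rw [h2, h1.1, h1.2]
    exact Sym2.eq_swap
  have hnodup : p.edges.Nodup := hp.edges_nodup
  have hinj := List.inj_on_of_nodup_map (f := SimpleGraph.Dart.edge) (by
    rwa [show p.darts.map SimpleGraph.Dart.edge = p.edges from rfl])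
  have : d = d'.symm := hinj hd hd' hedge
  have h3 : d.fst = d'.snd := by rw [this]; rfl
  rw [← h1.2] at h3
  exact d.adj.ne h3


lemma dirCycle_adj (hn : 2 ≤ n) (i : Fin n) : (dirCycle n).Adj i (i + 1) :=
  fin_val_add_one hn i

lemma cycArcs_subset_arcSet (hn : 2 ≤ n) {T : SimpleGraph V} (s : V) :
    cycArcs n s ⊆ ((dirCycle n).cartProd T.biorient).ArcSet := by
  rintro ⟨⟨i, x⟩, ⟨j, y⟩⟩ ⟨h1, h2, h3⟩
  simp only at h1 h2 h3
  subst h1; subst h2; subst h3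
  exact Or.inl ⟨dirCycle_adj hn i, rfl⟩

lemma treeArcsAt_subset_arcSet {T : SimpleGraph V} (c : Fin n) :
    treeArcsAt T n c ⊆ ((dirCycle n).cartProd T.biorient).ArcSet := by
  rintro ⟨⟨i, x⟩, ⟨j, y⟩⟩ ⟨h1, h2, h3⟩
  simp only at h1 h2 h3
  subst h1; subst h2
  exact Or.inr ⟨rfl, h3⟩

lemma fwdArcs_subset_arcSet {T : SimpleGraph V} (c : Fin n) {s t : V} (w : T.Walk s t) :
    fwdArcs T n c w ⊆ ((dirCycle n).cartProd T.biorient).ArcSet := by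
  rintro e he
  obtain ⟨h1, h2, h3⟩ := mem_fwdArcs_shape he
  obtain ⟨⟨i, x⟩, ⟨j, y⟩⟩ := e
  simp only at h1 h2 h3
  subst h1; subst h2
  exact Or.inr ⟨rfl, h3⟩

lemma strong_of_hub (D : Digraph (Fin n × V)) (S : Set (Fin n × V))
    (B : Set ((Fin n × V) × (Fin n × V))) (hsub : B ⊆ D.ArcSet) (hub : Fin n × V)
    (h : ∀ x ∈ S ∪ {v | ∃ e ∈ B, v = e.1 ∨ v = e.2}, Reach B x hub ∧ Reach B hub x) :
    D.IsStrongSubgraphOn S B :=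
  ⟨hsub, fun u hu w hw => ((h u hu).1).trans (h w hw).2⟩

/-- Case 2 subgraph: `s`-layer cycle plus all bidirected tree arcs at position `b`. -/
lemma case2_strong (hn : 2 ≤ n) {T : SimpleGraph V} (hconn : T.Preconnected)
    (a b : Fin n) (s t : V) :
    ((dirCycle n).cartProd T.biorient).IsStrongSubgraphOn {(a, s), (b, t)}
      (cycArcs n s ∪ treeArcsAt T n b) := by
  set B := cycArcs n s ∪ treeArcsAt T n b with hB
  have hsubc : cycArcs n s ⊆ B := Set.subset_union_left
  have hsubt : treeArcsAt T n b ⊆ B := Set.subset_union_right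
  refine strong_of_hub _ _ _ ?_ (b, s) ?_
  · exact Set.union_subset (cycArcs_subset_arcSet hn s) (treeArcsAt_subset_arcSet b)
  · intro x hx
    have hcyc : ∀ i j : Fin n, Reach B (i, s) (j, s) := cyc_full_reach hn s hsubc
    have htree : ∀ z z' : V, Reach B (b, z) (b, z') := tree_reach hsubt hconn
    rcases hx with hx | hx
    · rcases hx with hx | hx
      · rw [hx]; exact ⟨hcyc a b, hcyc b a⟩
      · rw [Set.mem_singleton_iff] at hx
        rw [hx]; exact ⟨htree t s, htree s t⟩
    · obtain ⟨e, he, hxe⟩ := hx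
      rcases he with he | he
      · obtain ⟨⟨i, x1⟩, ⟨j, y1⟩⟩ := e
        obtain ⟨h1, h2, h3⟩ := he
        simp only at h1 h2 h3
        subst h1; subst h2
        rcases hxe with rfl | rfl
        · exact ⟨hcyc i b, hcyc b i⟩
        · exact ⟨hcyc j b, hcyc b j⟩
      · rcases hxe with rfl | rfl
        · have hx1 : e.1 = (b, e.1.2) := Prod.ext he.1 rfl
          rw [hx1]; exact ⟨htree _ s, htree s _⟩
        · have hx2 : e.2 = (b, e.2.2) := Prod.ext he.2.1 rfl
          rw [hx2]; exact ⟨htree _ s, htree s _⟩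

/-- Case 1 second subgraph. -/
lemma case1_strong (hn : 2 ≤ n) {T : SimpleGraph V} (hconn : T.Preconnected)
    (a b : Fin n) (s s' : V) :
    ((dirCycle n).cartProd T.biorient).IsStrongSubgraphOn {(a, s), (b, s)}
      (cycArcs n s' ∪ treeArcsAt T n a ∪ treeArcsAt T n b) := by
  set B := cycArcs n s' ∪ treeArcsAt T n a ∪ treeArcsAt T n b with hB
  have hsubc : cycArcs n s' ⊆ B := fun e he => Or.inl (Or.inl he)
  have hsuba : treeArcsAt T n a ⊆ B := fun e he => Or.inl (Or.inr he)
  have hsubb : treeArcsAt T n b ⊆ B := fun e he => Or.inr he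
  have hcyc : ∀ i j : Fin n, Reach B (i, s') (j, s') := cyc_full_reach hn s' hsubc
  have htreea : ∀ z z' : V, Reach B (a, z) (a, z') := tree_reach hsuba hconn
  have htreeb : ∀ z z' : V, Reach B (b, z) (b, z') := tree_reach hsubb hconn
  have hbto : ∀ z : V, Reach B (b, z) (a, s') := fun z => (htreeb z s').trans (hcyc b a)
  have hbfrom : ∀ z : V, Reach B (a, s') (b, z) := fun z => (hcyc a b).trans (htreeb s' z)
  refine strong_of_hub _ _ _ ?_ (a, s') ?_
  · exact Set.union_subset (Set.union_subset (cycArcs_subset_arcSet hn s')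
      (treeArcsAt_subset_arcSet a)) (treeArcsAt_subset_arcSet b)
  · intro x hx
    rcases hx with hx | hx
    · rcases hx with hx | hx
      · rw [hx]; exact ⟨htreea s s', htreea s' s⟩
      · rw [Set.mem_singleton_iff] at hx
        rw [hx]; exact ⟨hbto s, hbfrom s⟩
    · obtain ⟨e, he, hxe⟩ := hx
      rcases he with (he | he) | he
      · obtain ⟨⟨i, x1⟩, ⟨j, y1⟩⟩ := e
        obtain ⟨h1, h2, h3⟩ := he
        simp only at h1 h2 h3
        subst h1; subst h2
        rcases hxe with rfl | rfl
        · exact ⟨hcyc i a, hcyc a i⟩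
        · exact ⟨hcyc j a, hcyc a j⟩
      · rcases hxe with rfl | rfl
        · have hx1 : e.1 = (a, e.1.2) := Prod.ext he.1 rfl
          rw [hx1]; exact ⟨htreea _ s', htreea s' _⟩
        · have hx2 : e.2 = (a, e.2.2) := Prod.ext he.2.1 rfl
          rw [hx2]; exact ⟨htreea _ s', htreea s' _⟩
      · rcases hxe with rfl | rfl
        · have hx1 : e.1 = (b, e.1.2) := Prod.ext he.1 rfl
          rw [hx1]; exact ⟨hbto _, hbfrom _⟩
        · have hx2 : e.2 = (b, e.2.2) := Prod.ext he.2.1 rfl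
          rw [hx2]; exact ⟨hbto _, hbfrom _⟩

def case3B (T : SimpleGraph V) (n : ℕ) [NeZero n] (a : Fin n) {s t : V} (w : T.Walk s t) :
    Set ((Fin n × V) × (Fin n × V)) :=
  (cycArcs n s \ {((a - 1, s), (a, s))}) ∪ {((a - 1, t), (a, t))} ∪ fwdArcs T n (a - 1) w ∪
    fwdArcs T n a w.reverse

lemma case3_strong (hn : 2 ≤ n) {T : SimpleGraph V} (a : Fin n) {s t : V} (w : T.Walk s t) :
    ((dirCycle n).cartProd T.biorient).IsStrongSubgraphOn {(a, s), (a, t)}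
      (case3B T n a w) := by
  set B := case3B T n a w with hBdef
  have hcyc_in : ∀ c : Fin n, c ≠ a - 1 → (((c, s)), ((c + 1, s))) ∈ B := by
    intro c hc
    refine Or.inl (Or.inl (Or.inl ⟨mem_cycArcs s c, ?_⟩))
    intro hmem
    rw [Set.mem_singleton_iff] at hmem
    exact hc (congrArg (fun q => q.1.1) hmem)
  have hsub1 : fwdArcs T n (a - 1) w ⊆ B := fun e he => Or.inl (Or.inr he)
  have hsub2 : fwdArcs T n a w.reverse ⊆ B := fun e he => Or.inr he
  have harc2 : (((a - 1, t) : Fin n × V), ((a, t) : Fin n × V)) ∈ B :=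
    Or.inl (Or.inl (Or.inr rfl))
  have hto : ∀ i, Reach B (i, s) (a - 1, s) := cyc_reach_to hn s (a - 1) hcyc_in
  have hfrom : ∀ j, Reach B (a, s) (j, s) := cyc_reach_from hn s a hcyc_in
  have hdown := fwd_reach_support w hsub1
  have hup := fwd_reach_support w.reverse hsub2
  have hTT : Reach B (a, t) (a, s) := fwd_reach w.reverse hsub2
  have hstep : Reach B (a - 1, t) (a, t) := Relation.ReflTransGen.single harc2
  have hloop : Reach B (a - 1, s) (a, s) :=
    ((fwd_reach w hsub1).trans hstep).trans hTT
  have htos : ∀ i, Reach B (i, s) (a, s) := fun i => (hto i).trans hloop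
  have hfromat : Reach B (a, s) (a, t) :=
    (hfrom (a - 1)).trans ((fwd_reach w hsub1).trans hstep)
  refine strong_of_hub _ _ _ ?_ (a, s) ?_
  · refine Set.union_subset (Set.union_subset (Set.union_subset ?_ ?_) ?_) ?_
    · exact subset_trans Set.diff_subset (cycArcs_subset_arcSet hn s)
    · intro e he
      rw [Set.mem_singleton_iff] at he
      subst he
      refine Or.inl ⟨?_, rfl⟩
      show (dirCycle n).Adj (a - 1) a
      have h : (a - 1) + 1 = a := sub_add_cancel a 1
      have h2 := dirCycle_adj hn (a - 1)
      rwa [h] at h2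
    · exact fwdArcs_subset_arcSet (a - 1) w
    · exact fwdArcs_subset_arcSet a w.reverse
  · intro x hx
    rcases hx with hx | hx
    · rcases hx with hx | hx
      · rw [hx]; exact ⟨Relation.ReflTransGen.refl, Relation.ReflTransGen.refl⟩
      · rw [Set.mem_singleton_iff] at hx
        rw [hx]; exact ⟨hTT, hfromat⟩
    · obtain ⟨e, he, hxe⟩ := hx
      rcases he with ((he | he) | he) | he
      · -- cycle layer s
        have h1 : e.1.2 = s := he.1.1
        have h2 : e.2.2 = s := he.1.2.1
        rcases hxe with rfl | rfl
        · have hx1 : e.1 = (e.1.1, s) := Prod.ext rfl h1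
          rw [hx1]; exact ⟨htos _, hfrom _⟩
        · have hx2 : e.2 = (e.2.1, s) := Prod.ext rfl h2
          rw [hx2]; exact ⟨htos _, hfrom _⟩
      · -- the special arc ((a-1,t),(a,t))
        rw [Set.mem_singleton_iff] at he
        subst he
        rcases hxe with rfl | rfl
        · exact ⟨hstep.trans hTT,
            (hfrom (a - 1)).trans (fwd_reach w hsub1)⟩
        · exact ⟨hTT, hfromat⟩
      · -- fwdArcs at a-1
        obtain ⟨d, hd, rfl⟩ := he
        rcases hxe with rfl | rfl
        · have hm := hdown d.fst (SimpleGraph.Walk.dart_fst_mem_support_of_mem_darts w hd)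
          exact ⟨(hm.2.trans hstep).trans hTT,
            (hfrom (a - 1)).trans hm.1⟩
        · have hm := hdown d.snd (SimpleGraph.Walk.dart_snd_mem_support_of_mem_darts w hd)
          exact ⟨(hm.2.trans hstep).trans hTT,
            (hfrom (a - 1)).trans hm.1⟩
      · -- fwdArcs at a on reverse
        obtain ⟨d, hd, rfl⟩ := he
        rcases hxe with rfl | rfl
        · have hm := hup d.fst
            (SimpleGraph.Walk.dart_fst_mem_support_of_mem_darts w.reverse hd)
          exact ⟨hm.2, hfromat.trans hm.1⟩
        · have hm := hup d.snd
            (SimpleGraph.Walk.dart_snd_mem_support_of_mem_darts w.reverse hd)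
          exact ⟨hm.2, hfromat.trans hm.1⟩

lemma case3_disjoint (hn : 2 ≤ n) {T : SimpleGraph V} (a : Fin n) {s t : V} (hst : s ≠ t)
    (p : T.Walk s t) (hp : p.IsPath) :
    Disjoint (case3B T n a p) (case3B T n a p.reverse) := by
  have hsne : ∀ i : Fin n, i + 1 ≠ i := fin_succ_ne hn
  have hane : a - 1 ≠ a := fin_sub_one_ne hn a
  rw [Set.disjoint_left]
  rintro e he1 he2
  rcases he1 with ((he1 | he1) | he1) | he1 <;>
    rcases he2 with ((he2 | he2) | he2) | he2
  · exact hst (he1.1.1.symm.trans he2.1.1)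
  · exact he1.2 he2
  · -- cyc s vs fwd (a-1) p.reverse
    obtain ⟨hc1, hc2, hc3⟩ := mem_fwdArcs_shape he2
    exact hsne e.1.1 (by rw [← he1.1.2.2, hc1, hc2])
  · obtain ⟨hc1, hc2, hc3⟩ := mem_fwdArcs_shape he2
    exact hsne e.1.1 (by rw [← he1.1.2.2, hc1, hc2])
  · rw [Set.mem_singleton_iff] at he1
    exact he2.2 (by rw [he1]; rfl)
  · rw [Set.mem_singleton_iff] at he1
    rw [Set.mem_singleton_iff] at he2
    exact hst (by
      have := he1.symm.trans he2
      exact (congrArg (fun q => q.2.2) this).symm)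
  · rw [Set.mem_singleton_iff] at he1
    obtain ⟨hc1, hc2, hc3⟩ := mem_fwdArcs_shape he2
    subst he1
    exact hane hc2.symm
  · rw [Set.mem_singleton_iff] at he1
    obtain ⟨hc1, hc2, hc3⟩ := mem_fwdArcs_shape he2
    subst he1
    exact hane hc1
  · obtain ⟨hc1, hc2, hc3⟩ := mem_fwdArcs_shape he1
    exact hsne e.1.1 (by rw [← he2.1.2.2, hc1, hc2])
  · rw [Set.mem_singleton_iff] at he2
    obtain ⟨hc1, hc2, hc3⟩ := mem_fwdArcs_shape he1
    subst he2
    exact hane hc2.symm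
  · exact (fwd_bwd_disjoint hp).le_bot ⟨he1, he2⟩ |>.elim
  · obtain ⟨hc1, hc2, hc3⟩ := mem_fwdArcs_shape he1
    obtain ⟨hd1, hd2, hd3⟩ := mem_fwdArcs_shape he2
    exact hane (hc1.symm.trans hd1)
  · obtain ⟨hc1, hc2, hc3⟩ := mem_fwdArcs_shape he1
    exact hsne e.1.1 (by rw [← he2.1.2.2, hc1, hc2])
  · rw [Set.mem_singleton_iff] at he2
    obtain ⟨hc1, hc2, hc3⟩ := mem_fwdArcs_shape he1
    subst he2
    exact hane hc1
  · obtain ⟨hc1, hc2, hc3⟩ := mem_fwdArcs_shape he1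
    obtain ⟨hd1, hd2, hd3⟩ := mem_fwdArcs_shape he2
    exact hane (hd1.symm.trans hc1)
  · exact (fwd_bwd_disjoint (hp.reverse)).le_bot ⟨he1, he2⟩ |>.elim

lemma cyc_only_strong (hn : 2 ≤ n) {T : SimpleGraph V} (a b : Fin n) (s : V) :
    ((dirCycle n).cartProd T.biorient).IsStrongSubgraphOn {(a, s), (b, s)} (cycArcs n s) := by
  refine strong_of_hub _ _ _ (cycArcs_subset_arcSet hn s) (a, s) ?_
  intro x hx
  have hcyc : ∀ i j : Fin n, Reach (cycArcs n s) (i, s) (j, s) :=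
    cyc_full_reach hn s (subset_refl _)
  rcases hx with hx | hx
  · rcases hx with hx | hx
    · rw [hx]; exact ⟨hcyc a a, hcyc a a⟩
    · rw [Set.mem_singleton_iff] at hx; rw [hx]; exact ⟨hcyc b a, hcyc a b⟩
  · obtain ⟨e, he, hxe⟩ := hx
    rcases hxe with rfl | rfl
    · have hx1 : e.1 = (e.1.1, s) := Prod.ext rfl he.1
      rw [hx1]; exact ⟨hcyc _ a, hcyc a _⟩
    · have hx2 : e.2 = (e.2.1, s) := Prod.ext rfl he.2.1
      rw [hx2]; exact ⟨hcyc _ a, hcyc a _⟩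

section Assembly

variable [Fintype V]

lemma card_bound {D : Digraph (Fin n × V)} {S : Set (Fin n × V)} {u v : Fin n × V}
    (hu : u ∈ S) (hv : v ∈ S) (huv : u ≠ v) {k : ℕ}
    (f : Fin k → Set ((Fin n × V) × (Fin n × V)))
    (hstr : ∀ i, D.IsStrongSubgraphOn S (f i))
    (hdis : ∀ i j, i ≠ j → Disjoint (f i) (f j)) :
    k ≤ {w | D.Adj u w}.ncard := by
  have hout : ∀ i : Fin k, ∃ w, (u, w) ∈ f i ∧ D.Adj u w := by
    intro i
    obtain ⟨hsub, hconn⟩ := hstr i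
    have hreach := hconn u (Or.inl hu) v (Or.inl hv)
    rcases Relation.ReflTransGen.cases_head hreach with h | ⟨w, hw, _⟩
    · exact absurd h huv
    · exact ⟨w, hw, hsub hw⟩
  choose g hg1 hg2 using hout
  have hginj : Function.Injective g := by
    intro i j hij
    by_contra hne
    exact (hdis i j hne).le_bot ⟨hg1 i, by rw [hij]; exact hg1 j⟩
  have hle : Nat.card (Fin k) ≤ Nat.card {w | D.Adj u w} :=
    Nat.card_le_card_of_injective (fun i => (⟨g i, hg2 i⟩ : {w | D.Adj u w}))
      (fun i j h => hginj (congrArg Subtype.val h))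
  simpa [Nat.card_eq_fintype_card, Nat.card_coe_set_eq] using hle

lemma zero_mem_lambdaSet (D : Digraph (Fin n × V)) (S : Set (Fin n × V)) :
    0 ∈ {k | ∃ f : Fin k → Set ((Fin n × V) × (Fin n × V)),
      (∀ i, D.IsStrongSubgraphOn S (f i)) ∧ ∀ i j, i ≠ j → Disjoint (f i) (f j)} :=
  ⟨fun i => i.elim0, fun i => i.elim0, fun i => i.elim0⟩

lemma bddAbove_lambdaSet {D : Digraph (Fin n × V)} {S : Set (Fin n × V)} {u v : Fin n × V}
    (hu : u ∈ S) (hv : v ∈ S) (huv : u ≠ v) :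
    BddAbove {k | ∃ f : Fin k → Set ((Fin n × V) × (Fin n × V)),
      (∀ i, D.IsStrongSubgraphOn S (f i)) ∧ ∀ i j, i ≠ j → Disjoint (f i) (f j)} := by
  refine ⟨{w | D.Adj u w}.ncard, ?_⟩
  rintro k ⟨f, h1, h2⟩
  exact card_bound hu hv huv f h1 h2

lemma two_le_lambdaS (hn : 3 ≤ n) {T : SimpleGraph V} (hT : T.IsTree)
    (hm : 2 ≤ Fintype.card V) (S : Set (Fin n × V)) (hS : S.ncard = 2) :
    2 ≤ ((dirCycle n).cartProd T.biorient).lambdaS S := by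
  classical
  have hn2 : 2 ≤ n := by omega
  have hconn : T.Preconnected := hT.isConnected.preconnected
  obtain ⟨u, v, huv, rfl⟩ := Set.ncard_eq_two.mp hS
  set D := (dirCycle n).cartProd T.biorient with hD
  have key : ∃ B1 B2 : Set ((Fin n × V) × (Fin n × V)),
      D.IsStrongSubgraphOn {u, v} B1 ∧ D.IsStrongSubgraphOn {u, v} B2 ∧ Disjoint B1 B2 := by
    obtain ⟨a, s⟩ := u
    obtain ⟨b, t⟩ := v
    by_cases hst : s = t
    · subst hst
      obtain ⟨s', hs'⟩ := Fintype.exists_ne_of_one_lt_card (by omega) s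
      refine ⟨cycArcs n s, cycArcs n s' ∪ treeArcsAt T n a ∪ treeArcsAt T n b,
        cyc_only_strong hn2 a b s, case1_strong hn2 hconn a b s s', ?_⟩
      rw [Set.disjoint_left]
      rintro e he1 ((he2 | he2) | he2)
      · exact hs' (he2.1.symm.trans he1.1)
      · exact fin_succ_ne hn2 e.1.1 (by rw [← he1.2.2, he2.2.1, he2.1])
      · exact fin_succ_ne hn2 e.1.1 (by rw [← he1.2.2, he2.2.1, he2.1])
    · by_cases hab : a = b
      · obtain rfl := hab
        obtain ⟨pw, hp⟩ := ((hconn s t).some).toPath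
        refine ⟨case3B T n a pw, case3B T n a pw.reverse,
          case3_strong hn2 a pw, ?_, case3_disjoint hn2 a hst pw hp⟩
        rw [Set.pair_comm]
        exact case3_strong hn2 a pw.reverse
      · refine ⟨cycArcs n s ∪ treeArcsAt T n b, cycArcs n t ∪ treeArcsAt T n a, ?_, ?_, ?_⟩
        · exact case2_strong hn2 hconn a b s t
        · rw [Set.pair_comm]
          exact case2_strong hn2 hconn b a t s
        · rw [Set.disjoint_left]
          rintro e (he1 | he1) (he2 | he2)
          · exact hst (he1.1.symm.trans he2.1)
          · exact fin_succ_ne hn2 e.1.1 (by rw [← he1.2.2, he2.2.1, he2.1])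
          · exact fin_succ_ne hn2 e.1.1 (by rw [← he2.2.2, he1.2.1, he1.1])
          · exact hab (he2.1.symm.trans he1.1)
  obtain ⟨B1, B2, h1, h2, hd⟩ := key
  have hmem : 2 ∈ {k | ∃ f : Fin k → Set ((Fin n × V) × (Fin n × V)),
      (∀ i, D.IsStrongSubgraphOn {u, v} (f i)) ∧ ∀ i j, i ≠ j → Disjoint (f i) (f j)} := by
    refine ⟨![B1, B2], ?_, ?_⟩
    · intro i
      fin_cases i
      · exact h1
      · exact h2
    · intro i j hij
      fin_cases i <;> fin_cases j <;>
        first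
          | exact absurd rfl hij
          | exact hd
          | exact hd.symm
  exact le_csSup (bddAbove_lambdaSet (Set.mem_insert u {v}) (Set.mem_insert_of_mem u rfl) huv)
    hmem

end Assembly

lemma exists_S_lambdaS_eq_two (hn : 3 ≤ n) {T : SimpleGraph V} [Fintype V] (hT : T.IsTree)
    (hm : 2 ≤ Fintype.card V) :
    ∃ S : Set (Fin n × V), S.ncard = 2 ∧ ((dirCycle n).cartProd T.biorient).lambdaS S = 2 := by
  classical
  have hn2 : 2 ≤ n := by omega
  have hleaf : ∃ ℓ : V, T.degree ℓ ≤ 1 := by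
    by_contra h
    push_neg at h
    have hsum := T.sum_degrees_eq_twice_card_edges
    have hcard := hT.card_edgeFinset
    have h2 : (Finset.univ : Finset V).card * 2 ≤ ∑ v, T.degree v := by
      have := Finset.card_nsmul_le_sum Finset.univ (fun v => T.degree v) 2
        (fun x _ => h x)
      simpa [smul_eq_mul] using this
    rw [hsum, Finset.card_univ] at h2
    omega
  obtain ⟨ℓ, hℓ⟩ := hleaf
  set D := (dirCycle n).cartProd T.biorient with hD
  have h01 : ((0 : Fin n), ℓ) ≠ ((1 : Fin n), ℓ) := by
    intro h
    have h' : ((0 : Fin n) : ℕ) = ((1 : Fin n) : ℕ) := congrArg (fun q => ((q.1 : Fin n) : ℕ)) h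
    rw [Fin.val_zero, Fin.val_one'] at h'
    have hmod : 1 % n = 1 := Nat.mod_eq_of_lt (by omega)
    omega
  refine ⟨{((0 : Fin n), ℓ), ((1 : Fin n), ℓ)}, Set.ncard_pair h01, ?_⟩
  have hsubset : {w | D.Adj ((0 : Fin n), ℓ) w} ⊆
      insert ((1 : Fin n), ℓ) ((fun y => ((0 : Fin n), y)) '' T.neighborSet ℓ) := by
    rintro ⟨j, y⟩ hw
    rcases hw with ⟨hadj, hy⟩ | ⟨hj, hy⟩
    · have hj1 : j = (1 : Fin n) := by
        apply Fin.ext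
        rw [Fin.val_one']
        have h0 : (((0 : Fin n) : ℕ) + 1) % n = 1 % n := by norm_num
        exact hadj.trans h0
      simp only at hy
      rw [hj1, ← hy]
      exact Set.mem_insert _ _
    · simp only at hj hy
      exact Set.mem_insert_of_mem _ ⟨y, hy, by rw [← hj]⟩
  have houtle : {w | D.Adj ((0 : Fin n), ℓ) w}.ncard ≤ 2 := by
    have h1 := Set.ncard_le_ncard hsubset (Set.toFinite _)
    have h2 := Set.ncard_insert_le ((1 : Fin n), ℓ)
      ((fun y => ((0 : Fin n), y)) '' T.neighborSet ℓ)
    have h3 := Set.ncard_image_le (s := T.neighborSet ℓ)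
      (f := fun y => ((0 : Fin n), y)) (Set.toFinite _)
    have h4 : (T.neighborSet ℓ).ncard = T.degree ℓ := by
      rw [← Nat.card_coe_set_eq, Nat.card_eq_fintype_card, T.card_neighborSet_eq_degree]
    omega
  have hu : ((0 : Fin n), ℓ) ∈ ({((0 : Fin n), ℓ), ((1 : Fin n), ℓ)} : Set (Fin n × V)) :=
    Set.mem_insert _ _
  have hv : ((1 : Fin n), ℓ) ∈ ({((0 : Fin n), ℓ), ((1 : Fin n), ℓ)} : Set (Fin n × V)) :=
    Set.mem_insert_of_mem _ rfl
  apply le_antisymm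
  · apply csSup_le ⟨0, zero_mem_lambdaSet D _⟩
    rintro k ⟨f, h1, h2⟩
    exact le_trans (card_bound hu hv h01 f h1 h2) houtle
  · exact two_le_lambdaS hn hT hm _ (Set.ncard_pair h01)

end SSAux

theorem stmt14 {V : Type*} [Fintype V] (n : ℕ) (hn : 3 ≤ n)
    (T : SimpleGraph V) (hT : T.IsTree) (hm : 2 ≤ Fintype.card V) :
    ((dirCycle n).cartProd T.biorient).lambdaK 2 = 2 := by
  haveI : NeZero n := ⟨by omega⟩
  have hlow := SSAux.two_le_lambdaS (V := V) hn hT hm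
  obtain ⟨S0, hS0, hS0eq⟩ := SSAux.exists_S_lambdaS_eq_two (V := V) hn hT hm
  apply le_antisymm
  · exact Nat.sInf_le ⟨S0, hS0, hS0eq⟩
  · exact le_csInf ⟨2, S0, hS0, hS0eq⟩ (by rintro m ⟨S, hS, rfl⟩; exact hlow S hS)
end

section
/- For integers n ≥ 3 and m ≥ 2, λ_2(→C_n □ ↔K_m) = m, where →C_n is the directed cycle on n vertices and ↔K_m is the complete digraph on m vertices. -/
namespace St15
variable {n m : ℕ}

abbrev V (n m : ℕ) := Fin n × Fin m

def Dd (n m : ℕ) : Digraph (V n m) := (dirCycle n).cartProd (completeDigraph m)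

def Reach (B : Set (V n m × V n m)) : V n m → V n m → Prop :=
  Relation.ReflTransGen fun x y => (x, y) ∈ B

def cycA (n : ℕ) [NeZero n] {m : ℕ} (c : Fin m) : Set (V n m × V n m) :=
  {e | ∃ p : Fin n, e = ((p, c), (p + 1, c))}

def swpA {n m : ℕ} (i : Fin n) (a c : Fin m) : Set (V n m × V n m) :=
  {((i, a), (i, c)), ((i, c), (i, a))}

lemma succ_ne [NeZero n] (hn : 2 ≤ n) (p : Fin n) : p + 1 ≠ p := by
  intro h
  have h1 : ((p : ℕ) + 1) % n = p := by
    have := congrArg Fin.val h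
    simpa [Fin.add_def, Fin.val_one'] using this
  have hp := p.isLt
  rcases lt_or_eq_of_le (Nat.succ_le_of_lt hp) with h2 | h2
  · rw [Nat.mod_eq_of_lt h2] at h1; omega
  · rw [Nat.succ_eq_add_one] at h2; rw [h2, Nat.mod_self] at h1; omega

lemma cycA_sub [NeZero n] (c : Fin m) : cycA n c ⊆ (Dd n m).ArcSet := by
  rintro e ⟨p, rfl⟩
  refine Or.inl ⟨?_, rfl⟩
  show ((p + 1 : Fin n) : ℕ) = _
  simp [Fin.add_def, Fin.val_one']

lemma swpA_sub {i : Fin n} {a c : Fin m} (h : a ≠ c) : swpA i a c ⊆ (Dd n m).ArcSet := by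
  rintro e (rfl | rfl)
  · exact Or.inr ⟨rfl, h⟩
  · exact Or.inr ⟨rfl, h.symm⟩

lemma reach_mono {B B' : Set (V n m × V n m)} (h : B ⊆ B') {x y : V n m} :
    Reach B x y → Reach B' x y :=
  Relation.ReflTransGen.mono (fun a b hab => h hab) x y

lemma reach_single {B : Set (V n m × V n m)} {x y : V n m} (h : (x, y) ∈ B) : Reach B x y :=
  Relation.ReflTransGen.single h

open Fin.CommRing in
lemma cyc_reach [NeZero n] {B : Set (V n m × V n m)} {c : Fin m} (hsub : cycA n c ⊆ B)
    (p q : Fin n) : Reach B (p, c) (q, c) := by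
  have key : ∀ k : ℕ, Reach B (p, c) (p + (k : Fin n), c) := by
    intro k
    induction k with
    | zero => rw [Nat.cast_zero, add_zero]; exact Relation.ReflTransGen.refl
    | succ k ih =>
        have : (((k + 1 : ℕ) : Fin n)) = (k : Fin n) + 1 := by push_cast; ring
        rw [this, ← add_assoc]
        exact ih.tail (hsub ⟨p + (k : Fin n), rfl⟩)
  have := key ((q - p).val)
  rwa [Fin.cast_val_eq_self, show p + (q - p) = q by ring] at this

-- disjointness building blocks
lemma cyc_cyc_disj [NeZero n] {c c' : Fin m} (h : c ≠ c') : Disjoint (cycA n c) (cycA n c') := by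
  rw [Set.disjoint_left]
  rintro e ⟨p, rfl⟩ ⟨p', he⟩
  exact h (congrArg (fun x => x.1.2) he)

lemma cyc_swp_disj [NeZero n] (hn : 2 ≤ n) {c : Fin m} {i : Fin n} {a b : Fin m} :
    Disjoint (cycA n c) (swpA i a b) := by
  rw [Set.disjoint_left]
  rintro e ⟨p, rfl⟩ (he | he) <;>
  · simp [Prod.ext_iff] at he
    exact succ_ne hn p (by rw [he.2.1, he.1.1])

lemma swp_swp_pos {i i' : Fin n} {a c a' c' : Fin m} (h : i ≠ i') :
    Disjoint (swpA i a c : Set (V n m × V n m)) (swpA i' a' c') := by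
  rw [Set.disjoint_left]
  rintro e (rfl | rfl) (he | he) <;> simp [Prod.ext_iff] at he <;> exact h (by tauto)

lemma swp_swp_col {i i' : Fin n} {a c a' c' : Fin m} (h1 : ¬(a = a' ∧ c = c'))
    (h2 : ¬(a = c' ∧ c = a')) :
    Disjoint (swpA i a c : Set (V n m × V n m)) (swpA i' a' c') := by
  rw [Set.disjoint_left]
  rintro e (rfl | rfl) (he | he) <;> simp [Prod.ext_iff] at he <;> tauto

lemma disj_if_left {P : Prop} [Decidable P] {s t : Set (V n m × V n m)} (h : Disjoint s t) :
    Disjoint (if P then (∅ : Set (V n m × V n m)) else s) t := by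
  split
  · simp
  · exact h

lemma strong_of_hub {S : Set (V n m)} {B : Set (V n m × V n m)} (hub : V n m)
    (hsub : B ⊆ (Dd n m).ArcSet)
    (h : ∀ x ∈ S ∪ {v | ∃ e ∈ B, v = e.1 ∨ v = e.2}, Reach B x hub ∧ Reach B hub x) :
    (Dd n m).IsStrongSubgraphOn S B :=
  ⟨hsub, fun u hu w hw => Relation.ReflTransGen.trans (h u hu).1 (h w hw).2⟩

def Hgen [NeZero n] (i j : Fin n) (a b c : Fin m) : Set (V n m × V n m) :=
  cycA n c ∪ (if a = c then ∅ else swpA i a c) ∪ (if b = c then ∅ else swpA j b c)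

lemma Hgen_sub [NeZero n] (i j : Fin n) (a b c : Fin m) :
    Hgen i j a b c ⊆ (Dd n m).ArcSet := by
  refine Set.union_subset (Set.union_subset (cycA_sub c) ?_) ?_ <;> split
  · simp
  · next h => exact swpA_sub h
  · simp
  · next h => exact swpA_sub h

lemma Hgen_strong [NeZero n] (i j : Fin n) (a b c : Fin m) :
    (Dd n m).IsStrongSubgraphOn {(i, a), (j, b)} (Hgen i j a b c) := by
  have hcyc : cycA n c ⊆ Hgen i j a b c := fun e he => Or.inl (Or.inl he)
  apply strong_of_hub (i, c) (Hgen_sub i j a b c)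
  have hA : ∀ p : Fin n, Reach (Hgen i j a b c) (p, c) (i, c) ∧
      Reach (Hgen i j a b c) (i, c) (p, c) :=
    fun p => ⟨cyc_reach hcyc p i, cyc_reach hcyc i p⟩
  have hU : Reach (Hgen i j a b c) (i, a) (i, c) ∧ Reach (Hgen i j a b c) (i, c) (i, a) := by
    by_cases hac : a = c
    · subst hac; exact hA i
    · have hs : swpA i a c ⊆ Hgen i j a b c := fun e he =>
        Or.inl (Or.inr (by rw [if_neg hac]; exact he))
      exact ⟨reach_single (hs (Or.inl rfl)), reach_single (hs (Or.inr rfl))⟩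
  have hV : Reach (Hgen i j a b c) (j, b) (i, c) ∧ Reach (Hgen i j a b c) (i, c) (j, b) := by
    by_cases hbc : b = c
    · subst hbc; exact hA j
    · have hs : swpA j b c ⊆ Hgen i j a b c := fun e he =>
        Or.inr (by rw [if_neg hbc]; exact he)
      exact ⟨(reach_single (hs (Or.inl rfl))).trans (hA j).1,
        (hA j).2.trans (reach_single (hs (Or.inr rfl)))⟩
  intro x hx
  have hx' : x = (i, a) ∨ x = (j, b) ∨ ∃ p, x = (p, c) := by
    rcases hx with hx | ⟨e, he, hxe⟩
    · rcases (by simpa using hx : x = (i, a) ∨ x = (j, b)) with rfl | rfl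
      · exact Or.inl rfl
      · exact Or.inr (Or.inl rfl)
    · rcases he with (he | he) | he
      · obtain ⟨p, rfl⟩ := he
        rcases hxe with rfl | rfl
        · exact Or.inr (Or.inr ⟨p, rfl⟩)
        · exact Or.inr (Or.inr ⟨p + 1, rfl⟩)
      · by_cases hac : a = c
        · rw [if_pos hac] at he; exact absurd he (by simp)
        · rw [if_neg hac] at he
          rcases he with rfl | rfl <;> rcases hxe with rfl | rfl
          · exact Or.inl rfl
          · exact Or.inr (Or.inr ⟨i, rfl⟩)
          · exact Or.inr (Or.inr ⟨i, rfl⟩)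
          · exact Or.inl rfl
      · by_cases hbc : b = c
        · rw [if_pos hbc] at he; exact absurd he (by simp)
        · rw [if_neg hbc] at he
          rcases he with rfl | rfl <;> rcases hxe with rfl | rfl
          · exact Or.inr (Or.inl rfl)
          · exact Or.inr (Or.inr ⟨j, rfl⟩)
          · exact Or.inr (Or.inr ⟨j, rfl⟩)
          · exact Or.inr (Or.inl rfl)
  rcases hx' with rfl | rfl | ⟨p, rfl⟩
  · exact hU
  · exact hV
  · exact hA p

def Fbg [NeZero n] (i : Fin n) (a b : Fin m) : Set (V n m × V n m) :=
  cycA n a ∪ cycA n b ∪ swpA (i + 1) a b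

lemma Fsm_strong (i : Fin n) {a b : Fin m} (hab : a ≠ b) :
    (Dd n m).IsStrongSubgraphOn {(i, a), (i, b)} (swpA i a b) := by
  apply strong_of_hub (i, a) (swpA_sub hab)
  intro x hx
  have hx' : x = (i, a) ∨ x = (i, b) := by
    rcases hx with hx | ⟨e, he, hxe⟩
    · simpa using hx
    · rcases he with rfl | rfl <;> rcases hxe with rfl | rfl <;> simp
  rcases hx' with rfl | rfl
  · exact ⟨Relation.ReflTransGen.refl, Relation.ReflTransGen.refl⟩
  · exact ⟨reach_single (Or.inr rfl), reach_single (Or.inl rfl)⟩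

lemma Fbg_strong [NeZero n] (i : Fin n) {a b : Fin m} (hab : a ≠ b) :
    (Dd n m).IsStrongSubgraphOn {(i, a), (i, b)} (Fbg i a b) := by
  have hca : cycA n a ⊆ Fbg i a b := fun e he => Or.inl (Or.inl he)
  have hcb : cycA n b ⊆ Fbg i a b := fun e he => Or.inl (Or.inr he)
  have hs : swpA (i + 1) a b ⊆ Fbg i a b := fun e he => Or.inr he
  apply strong_of_hub (i + 1, a)
    (Set.union_subset (Set.union_subset (cycA_sub a) (cycA_sub b)) (swpA_sub hab))
  intro x hx
  have hx' : (∃ p, x = (p, a)) ∨ ∃ p, x = (p, b) := by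
    rcases hx with hx | ⟨e, he, hxe⟩
    · rcases (by simpa using hx : x = (i, a) ∨ x = (i, b)) with rfl | rfl
      · exact Or.inl ⟨i, rfl⟩
      · exact Or.inr ⟨i, rfl⟩
    · rcases he with (he | he) | he
      · obtain ⟨p, rfl⟩ := he
        rcases hxe with rfl | rfl
        · exact Or.inl ⟨p, rfl⟩
        · exact Or.inl ⟨p + 1, rfl⟩
      · obtain ⟨p, rfl⟩ := he
        rcases hxe with rfl | rfl
        · exact Or.inr ⟨p, rfl⟩
        · exact Or.inr ⟨p + 1, rfl⟩
      · rcases he with rfl | rfl <;> rcases hxe with rfl | rfl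
        · exact Or.inl ⟨i + 1, rfl⟩
        · exact Or.inr ⟨i + 1, rfl⟩
        · exact Or.inr ⟨i + 1, rfl⟩
        · exact Or.inl ⟨i + 1, rfl⟩
  rcases hx' with ⟨p, rfl⟩ | ⟨p, rfl⟩
  · exact ⟨cyc_reach hca p (i + 1), cyc_reach hca (i + 1) p⟩
  · exact ⟨(cyc_reach hcb p (i + 1)).trans (reach_single (hs (Or.inr rfl))),
      (reach_single (hs (Or.inl rfl))).trans (cyc_reach hcb (i + 1) p)⟩

lemma disj_if_right {P : Prop} [Decidable P] {s t : Set (V n m × V n m)} (h : Disjoint s t) :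
    Disjoint s (if P then (∅ : Set (V n m × V n m)) else t) := by
  split
  · simp
  · exact h

lemma Hgen_disj [NeZero n] (hn : 2 ≤ n) {i j : Fin n} {a b c c' : Fin m} (hcc : c ≠ c')
    (h6 : Disjoint (swpA i a c : Set (V n m × V n m)) (swpA j b c'))
    (h8 : Disjoint (swpA j b c : Set (V n m × V n m)) (swpA i a c')) :
    Disjoint (Hgen i j a b c) (Hgen i j a b c') := by
  unfold Hgen
  simp only [Set.disjoint_union_left, Set.disjoint_union_right]
  have h5 : Disjoint (if a = c then (∅ : Set (V n m × V n m)) else swpA i a c)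
      (if a = c' then (∅ : Set (V n m × V n m)) else swpA i a c') := by
    by_cases hac : a = c
    · simp [if_pos hac]
    by_cases hac' : a = c'
    · simp [if_pos hac']
    rw [if_neg hac, if_neg hac']
    exact swp_swp_col (fun h => hcc h.2) (fun h => hac' h.1)
  have h9 : Disjoint (if b = c then (∅ : Set (V n m × V n m)) else swpA j b c)
      (if b = c' then (∅ : Set (V n m × V n m)) else swpA j b c') := by
    by_cases hbc : b = c
    · simp [if_pos hbc]
    by_cases hbc' : b = c'
    · simp [if_pos hbc']
    rw [if_neg hbc, if_neg hbc']
    exact swp_swp_col (fun h => hcc h.2) (fun h => hbc' h.1)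
  exact ⟨⟨⟨⟨cyc_cyc_disj hcc, disj_if_left (cyc_swp_disj hn).symm⟩,
      disj_if_left (cyc_swp_disj hn).symm⟩,
    ⟨disj_if_right (cyc_swp_disj hn), h5⟩, disj_if_left (disj_if_right h8)⟩,
    ⟨disj_if_right (cyc_swp_disj hn), disj_if_left (disj_if_right h6)⟩, h9⟩

def Fam2 [NeZero n] (i : Fin n) (a b : Fin m) : Fin m → Set (V n m × V n m) :=
  fun c => if c = a then swpA i a b else if c = b then Fbg i a b else Hgen i i a b c

lemma hsb_disj [NeZero n] (hn : 2 ≤ n) (i : Fin n) (a b : Fin m) :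
    Disjoint (swpA i a b : Set (V n m × V n m)) (Fbg i a b) := by
  unfold Fbg
  simp only [Set.disjoint_union_right]
  exact ⟨⟨(cyc_swp_disj hn).symm, (cyc_swp_disj hn).symm⟩,
    swp_swp_pos (Ne.symm (succ_ne hn i))⟩

lemma hsH_disj [NeZero n] (hn : 2 ≤ n) (i : Fin n) {a b c'' : Fin m} (hab : a ≠ b)
    (h1 : c'' ≠ a) (h2 : c'' ≠ b) :
    Disjoint (swpA i a b : Set (V n m × V n m)) (Hgen i i a b c'') := by
  unfold Hgen
  rw [if_neg (Ne.symm h1), if_neg (Ne.symm h2)]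
  simp only [Set.disjoint_union_right]
  refine ⟨⟨(cyc_swp_disj hn).symm, swp_swp_col ?_ ?_⟩, swp_swp_col ?_ ?_⟩
  · rintro ⟨-, h⟩; exact h2 h.symm
  · rintro ⟨h, -⟩; exact h1 h.symm
  · rintro ⟨h, -⟩; exact hab h
  · rintro ⟨h, -⟩; exact h1 h.symm

lemma hbH_disj [NeZero n] (hn : 2 ≤ n) (i : Fin n) {a b c'' : Fin m}
    (h1 : c'' ≠ a) (h2 : c'' ≠ b) :
    Disjoint (Fbg i a b : Set (V n m × V n m)) (Hgen i i a b c'') := by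
  unfold Fbg Hgen
  rw [if_neg (Ne.symm h1), if_neg (Ne.symm h2)]
  simp only [Set.disjoint_union_left, Set.disjoint_union_right]
  exact ⟨⟨⟨⟨cyc_cyc_disj (Ne.symm h1), cyc_cyc_disj (Ne.symm h2)⟩,
      (cyc_swp_disj hn).symm⟩,
    ⟨cyc_swp_disj hn, cyc_swp_disj hn⟩, swp_swp_pos (succ_ne hn i)⟩,
    ⟨cyc_swp_disj hn, cyc_swp_disj hn⟩, swp_swp_pos (succ_ne hn i)⟩

lemma Fam2_disj [NeZero n] (hn : 2 ≤ n) (i : Fin n) {a b : Fin m} (hab : a ≠ b)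
    {c c' : Fin m} (hcc : c ≠ c') : Disjoint (Fam2 i a b c) (Fam2 i a b c') := by
  unfold Fam2
  by_cases h1 : c = a
  · rw [if_pos h1]
    by_cases h2 : c' = a
    · exact absurd (h1.trans h2.symm) hcc
    rw [if_neg h2]
    by_cases h3 : c' = b
    · rw [if_pos h3]; exact hsb_disj hn i a b
    · rw [if_neg h3]; exact hsH_disj hn i hab h2 h3
  rw [if_neg h1]
  by_cases h2 : c = b
  · rw [if_pos h2]
    by_cases h3 : c' = a
    · rw [if_pos h3]; exact (hsb_disj hn i a b).symm
    rw [if_neg h3]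
    by_cases h4 : c' = b
    · exact absurd (h2.trans h4.symm) hcc
    · rw [if_neg h4]; exact hbH_disj hn i h3 h4
  rw [if_neg h2]
  by_cases h3 : c' = a
  · rw [if_pos h3]; exact (hsH_disj hn i hab h1 h2).symm
  rw [if_neg h3]
  by_cases h4 : c' = b
  · rw [if_pos h4]; exact (hbH_disj hn i h1 h2).symm
  rw [if_neg h4]
  refine Hgen_disj hn hcc (swp_swp_col ?_ ?_) (swp_swp_col ?_ ?_)
  · rintro ⟨h, -⟩; exact hab h
  · rintro ⟨h, -⟩; exact h3 h.symm
  · rintro ⟨h, -⟩; exact hab h.symm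
  · rintro ⟨-, h⟩; exact h1 h

lemma T_ub [NeZero n] {u v : V n m} (huv : u ≠ v) (k : ℕ)
    (f : Fin k → Set (V n m × V n m))
    (hstr : ∀ idx, (Dd n m).IsStrongSubgraphOn {u, v} (f idx))
    (hdisj : ∀ idx idx', idx ≠ idx' → Disjoint (f idx) (f idx')) : k ≤ m := by
  have h1 : ∀ idx : Fin k, ∃ w, (u, w) ∈ f idx := by
    intro idx
    have h := (hstr idx).2 u (Or.inl (Set.mem_insert _ _))
      v (Or.inl (Set.mem_insert_of_mem _ rfl))
    rcases h.cases_head with h | ⟨w, hw, -⟩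
    · exact absurd h huv
    · exact ⟨w, hw⟩
  choose g hg using h1
  have hsnd : ∀ idx idx', (g idx).2 = (g idx').2 → g idx = g idx' := by
    intro idx idx' h
    have ha : ((dirCycle n).Adj u.1 (g idx).1 ∧ u.2 = (g idx).2) ∨
        (u.1 = (g idx).1 ∧ u.2 ≠ (g idx).2) := (hstr idx).1 (hg idx)
    have hb : ((dirCycle n).Adj u.1 (g idx').1 ∧ u.2 = (g idx').2) ∨
        (u.1 = (g idx').1 ∧ u.2 ≠ (g idx').2) := (hstr idx').1 (hg idx')
    rcases ha with ⟨ha1, ha2⟩ | ⟨ha1, ha2⟩ <;> rcases hb with ⟨hb1, hb2⟩ | ⟨hb1, hb2⟩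
    · exact Prod.ext (Fin.ext (by rw [show ((g idx).1 : ℕ) = _ from ha1,
        show ((g idx').1 : ℕ) = _ from hb1])) h
    · exact absurd (ha2.trans h) hb2
    · exact absurd (hb2.trans h.symm) ha2
    · exact Prod.ext (by rw [← ha1, ← hb1]) h
  have hinj : Function.Injective fun idx => (g idx).2 := by
    intro idx idx' hh
    by_contra hne
    have heq := hsnd idx idx' hh
    exact (Set.disjoint_left.mp (hdisj idx idx' hne) (hg idx))
      (by rw [heq]; exact hg idx')
  simpa using Fintype.card_le_of_injective _ hinj

lemma lamS (hn : 3 ≤ n) (hm : 2 ≤ m) (u v : V n m) (huv : u ≠ v) :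
    (Dd n m).lambdaS {u, v} = m := by
  haveI : NeZero n := ⟨by omega⟩
  have hn2 : 2 ≤ n := by omega
  obtain ⟨i, a⟩ := u
  obtain ⟨j, b⟩ := v
  have hmm : m ∈ {k | ∃ f : Fin k → Set (V n m × V n m),
      (∀ idx, (Dd n m).IsStrongSubgraphOn {(i, a), (j, b)} (f idx)) ∧
      ∀ idx idx', idx ≠ idx' → Disjoint (f idx) (f idx')} := by
    by_cases hij : i = j
    · subst hij
      have hab : a ≠ b := fun h => huv (by rw [h])
      refine ⟨Fam2 i a b, fun c => ?_, fun c c' h => Fam2_disj hn2 i hab h⟩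
      unfold Fam2
      by_cases h1 : c = a
      · rw [if_pos h1]; exact Fsm_strong i hab
      rw [if_neg h1]
      by_cases h2 : c = b
      · rw [if_pos h2]; exact Fbg_strong i hab
      · rw [if_neg h2]; exact Hgen_strong i i a b c
    · refine ⟨fun c => Hgen i j a b c, fun c => Hgen_strong i j a b c,
        fun c c' h => Hgen_disj hn2 h (swp_swp_pos hij) (swp_swp_pos (Ne.symm hij))⟩
  have hub : ∀ k ∈ {k | ∃ f : Fin k → Set (V n m × V n m),
      (∀ idx, (Dd n m).IsStrongSubgraphOn {(i, a), (j, b)} (f idx)) ∧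
      ∀ idx idx', idx ≠ idx' → Disjoint (f idx) (f idx')}, k ≤ m := by
    rintro k ⟨f, hstr, hdisj⟩
    exact T_ub huv k f hstr hdisj
  exact le_antisymm (csSup_le ⟨m, hmm⟩ hub) (le_csSup ⟨m, hub⟩ hmm)

end St15

theorem stmt15 (n m : ℕ) (hn : 3 ≤ n) (hm : 2 ≤ m) :
    ((dirCycle n).cartProd (completeDigraph m)).lambdaK 2 = m := by
  haveI : NeZero n := ⟨by omega⟩
  have key : ∀ S : Set (St15.V n m), S.ncard = 2 → (St15.Dd n m).lambdaS S = m := by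
    intro S hS
    obtain ⟨u, v, huv, rfl⟩ := Set.ncard_eq_two.mp hS
    exact St15.lamS hn hm u v huv
  show (St15.Dd n m).lambdaK 2 = m
  have hne : ((⟨0, by omega⟩, ⟨0, by omega⟩) : St15.V n m)
      ≠ (⟨0, by omega⟩, ⟨1, by omega⟩) := by
    simp [Prod.ext_iff, Fin.ext_iff]
  have hset : {t | ∃ S : Set (St15.V n m), S.ncard = 2 ∧ (St15.Dd n m).lambdaS S = t}
      = {m} := by
    ext t
    simp only [Set.mem_setOf_eq, Set.mem_singleton_iff]
    constructor
    · rintro ⟨S, h2, rfl⟩; exact key S h2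
    · rintro rfl
      exact ⟨_, Set.ncard_pair hne, key _ (Set.ncard_pair hne)⟩
  unfold Digraph.lambdaK
  rw [hset]
  exact csInf_singleton m
end

section
/- For undirected graphs G and H, λ_2(↔G □ ↔H) = λ(G □ H), i.e., the strong subgraph 2-arc-connectivity of the Cartesian product of the complete biorientations equals the edge-connectivity of the Cartesian product of the underlying graphs. -/
set_option linter.unusedSectionVars false

namespace MengerAux

open List

variable {α : Type*} [DecidableEq α]

/-- consecutive pairs of a list -/
def arcsOf (L : List α) : List (α × α) := L.dropLast.zip L.tail

@[simp] lemma arcsOf_nil : arcsOf ([] : List α) = [] := rfl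
@[simp] lemma arcsOf_single (a : α) : arcsOf [a] = [] := rfl
@[simp] lemma arcsOf_cons_cons (a b : α) (t : List α) :
    arcsOf (a :: b :: t) = (a, b) :: arcsOf (b :: t) := by
  simp [arcsOf]

lemma mem_of_mem_arcsOf {L : List α} {p : α × α} (h : p ∈ arcsOf L) :
    p.1 ∈ L ∧ p.2 ∈ L := by
  obtain ⟨x, y⟩ := p
  obtain ⟨h1, h2⟩ := List.of_mem_zip h
  exact ⟨List.dropLast_subset _ h1, List.tail_subset _ h2⟩

lemma map_fst_arcsOf (L : List α) : (arcsOf L).map Prod.fst = L.dropLast := by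
  apply List.map_fst_zip
  match L with
  | [] => simp
  | a :: t => simp [List.length_dropLast]

lemma map_snd_arcsOf (L : List α) : (arcsOf L).map Prod.snd = L.tail := by
  apply List.map_snd_zip
  match L with
  | [] => simp
  | a :: t => simp [List.length_dropLast]

lemma nodup_arcsOf {L : List α} (h : L.Nodup) : (arcsOf L).Nodup := by
  apply List.Nodup.of_map Prod.fst
  rw [map_fst_arcsOf]
  exact h.sublist (List.dropLast_sublist L)

lemma chain_arcsOf {r : α → α → Prop} :
    ∀ {l : List α} {a : α}, List.Chain r a l → ∀ p ∈ arcsOf (a :: l), r p.1 p.2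
  | [], a, _, p, hp => by simp at hp
  | b :: t, a, h, p, hp => by
    unfold List.Chain at h
    rw [List.chain_cons] at h
    rw [arcsOf_cons_cons] at hp
    rcases List.mem_cons.1 hp with h' | h'
    · subst h'; exact h.1
    · exact chain_arcsOf h.2 p h'

lemma not_rev_mem_arcsOf : ∀ {L : List α}, L.Nodup → ∀ {x y : α},
    (x, y) ∈ arcsOf L → (y, x) ∉ arcsOf L
  | [], _, x, y, h => by simp at h
  | [a], _, x, y, h => by simp at h
  | a :: b :: t, hnd, x, y, hxy => by
    intro hyx
    rw [arcsOf_cons_cons] at hxy hyx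
    have hnd' : (b :: t).Nodup := hnd.of_cons
    have ha : a ∉ b :: t := (List.nodup_cons.1 hnd).1
    rcases List.mem_cons.1 hxy with h1 | h1 <;> rcases List.mem_cons.1 hyx with h2 | h2
    · rw [Prod.mk.injEq] at h1 h2
      obtain ⟨rfl, rfl⟩ := h1
      cases h2.1
      exact ha List.mem_cons_self
    · rw [Prod.mk.injEq] at h1
      obtain ⟨rfl, rfl⟩ := h1
      exact ha (mem_of_mem_arcsOf h2).2
    · rw [Prod.mk.injEq] at h2
      obtain ⟨rfl, rfl⟩ := h2
      exact ha (mem_of_mem_arcsOf h1).2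
    · exact not_rev_mem_arcsOf hnd' h1 h2

lemma count_fst_arcsOf (L : List α) (w : α) :
    ((arcsOf L).filter (fun p => p.1 = w)).length = L.dropLast.count w := by
  rw [List.count, ← map_fst_arcsOf, List.countP_map, ← List.countP_eq_length_filter]
  apply List.countP_congr
  intro p _
  simp [Function.comp]

lemma count_snd_arcsOf (L : List α) (w : α) :
    ((arcsOf L).filter (fun p => p.2 = w)).length = L.tail.count w := by
  rw [List.count, ← map_snd_arcsOf, List.countP_map, ← List.countP_eq_length_filter]
  apply List.countP_congr
  intro p _
  simp [Function.comp]

end MengerAux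

namespace MengerAux

variable {α : Type*} [DecidableEq α]

lemma getLast?_append_right {l₁ l₂ : List α} (h : l₂ ≠ []) :
    (l₁ ++ l₂).getLast? = l₂.getLast? := by
  rw [List.getLast?_append]
  cases h2 : l₂.getLast? with
  | none => exact absurd (List.getLast?_eq_none_iff.mp h2) h
  | some x => rfl

lemma dedup_chain {r : α → α → Prop} :
    ∀ (n : ℕ) (l : List α) (a : α), l.length ≤ n → List.Chain r a l →
    ∃ l', List.Chain r a l' ∧ (a :: l').Nodup ∧
      (a :: l').getLast? = (a :: l).getLast? := by
  intro n
  induction n with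
  | zero =>
    intro l a hl _
    rw [Nat.le_zero, List.length_eq_zero_iff] at hl
    subst hl
    exact ⟨[], List.Chain.nil, List.nodup_singleton a, rfl⟩
  | succ n ih =>
    intro l a hl hc
    match l with
    | [] => exact ⟨[], List.Chain.nil, List.nodup_singleton a, rfl⟩
    | b :: t =>
      unfold List.Chain at hc
      rw [List.chain_cons] at hc
      obtain ⟨t', hc', hnd', hlast'⟩ := ih t b (by simpa using hl) hc.2
      by_cases hmem : a ∈ b :: t'
      · obtain ⟨s₁, s₂, hsplit⟩ := List.append_of_mem hmem
        refine ⟨s₂, ?_, ?_, ?_⟩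
        · have : List.Chain r a (s₁ ++ a :: s₂) := by
            rw [← hsplit]
            exact List.chain_cons.2 ⟨hc.1, hc'⟩
          exact (List.isChain_cons_split.1 this).2
        · exact (List.sublist_append_right s₁ (a :: s₂)).nodup (hsplit ▸ hnd')
        · rw [List.getLast?_cons_cons, ← hlast', hsplit,
            getLast?_append_right (l₁ := s₁) (List.cons_ne_nil a s₂)]
      · refine ⟨b :: t', List.chain_cons.2 ⟨hc.1, hc'⟩, List.nodup_cons.2 ⟨hmem, hnd'⟩, ?_⟩
        rw [List.getLast?_cons_cons, List.getLast?_cons_cons, hlast']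

end MengerAux

namespace MengerAux

variable {α : Type*} [DecidableEq α]

lemma exists_nodup_path {r : α → α → Prop} {x y : α} (hne : x ≠ y)
    (h : Relation.ReflTransGen r x y) :
    ∃ l : List α, List.Chain r x l ∧ (x :: l).Nodup ∧
      (x :: l).getLast? = some y ∧ l ≠ [] := by
  obtain ⟨l, hc, hlast⟩ := List.exists_isChain_cons_of_relationReflTransGen h
  obtain ⟨l', hc', hnd', hlast'⟩ := dedup_chain l.length l x le_rfl hc
  have h2 : (x :: l').getLast? = some y := by
    rw [hlast', List.getLast?_eq_getLast (List.cons_ne_nil _ _), hlast]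
  refine ⟨l', hc', hnd', h2, ?_⟩
  rintro rfl
  simp at h2
  exact hne h2

/-- out-degree of a vertex in an arc set, as an integer -/
noncomputable def dOut (A : Finset (α × α)) (w : α) : ℤ :=
  ((A.filter (fun p => p.1 = w)).card : ℤ)

noncomputable def dIn (A : Finset (α × α)) (w : α) : ℤ :=
  ((A.filter (fun p => p.2 = w)).card : ℤ)

noncomputable def net (A : Finset (α × α)) (w : α) : ℤ := dOut A w - dIn A w

lemma card_filter_split {β : Type*} (s : Finset β) (p q : β → Prop)
    [DecidablePred p] [DecidablePred q] :
    (s.filter p).card =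
      (s.filter (fun x => p x ∧ q x)).card + (s.filter (fun x => p x ∧ ¬ q x)).card := by
  classical
  rw [← Finset.filter_filter, ← Finset.filter_filter]
  exact (Finset.card_filter_add_card_filter_not (s := s.filter p) (p := q)).symm

lemma sum_dOut (A : Finset (α × α)) (T : Finset α) :
    ∑ w ∈ T, dOut A w = ((A.filter (fun p => p.1 ∈ T)).card : ℤ) := by
  classical
  unfold dOut
  rw [← Nat.cast_sum]
  congr 1
  rw [← Finset.card_biUnion]
  · congr 1
    ext p
    simp only [Finset.mem_biUnion, Finset.mem_filter]
    constructor
    · rintro ⟨w, hw, hp, rfl⟩; exact ⟨hp, hw⟩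
    · rintro ⟨hp, hw⟩; exact ⟨p.1, hw, hp, rfl⟩
  · intro i _ j _ hij
    simp only [Finset.disjoint_left, Finset.mem_filter]
    rintro p ⟨_, rfl⟩ ⟨_, h⟩
    exact hij h

lemma sum_dIn (A : Finset (α × α)) (T : Finset α) :
    ∑ w ∈ T, dIn A w = ((A.filter (fun p => p.2 ∈ T)).card : ℤ) := by
  classical
  unfold dIn
  rw [← Nat.cast_sum]
  congr 1
  rw [← Finset.card_biUnion]
  · congr 1
    ext p
    simp only [Finset.mem_biUnion, Finset.mem_filter]
    constructor
    · rintro ⟨w, hw, hp, rfl⟩; exact ⟨hp, hw⟩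
    · rintro ⟨hp, hw⟩; exact ⟨p.2, hw, hp, rfl⟩
  · intro i _ j _ hij
    simp only [Finset.disjoint_left, Finset.mem_filter]
    rintro p ⟨_, rfl⟩ ⟨_, h⟩
    exact hij h

lemma sum_net (A : Finset (α × α)) (T : Finset α) :
    ∑ w ∈ T, net A w =
      ((A.filter (fun p => p.1 ∈ T ∧ p.2 ∉ T)).card : ℤ) -
      ((A.filter (fun p => p.1 ∉ T ∧ p.2 ∈ T)).card : ℤ) := by
  classical
  unfold net
  rw [Finset.sum_sub_distrib, sum_dOut, sum_dIn,
    card_filter_split A (fun p => p.1 ∈ T) (fun p => p.2 ∈ T),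
    card_filter_split A (fun p => p.2 ∈ T) (fun p => p.1 ∈ T)]
  have : A.filter (fun p => p.2 ∈ T ∧ p.1 ∈ T) = A.filter (fun p => p.1 ∈ T ∧ p.2 ∈ T) := by
    apply Finset.filter_congr; intro p _; constructor <;> intro h <;> simp_all
  have h2 : A.filter (fun p => p.2 ∈ T ∧ ¬ p.1 ∈ T) = A.filter (fun p => p.1 ∉ T ∧ p.2 ∈ T) := by
    apply Finset.filter_congr; intro p _; constructor <;> intro h <;> simp_all
  rw [this, h2]
  push_cast
  ring

end MengerAux

namespace MengerAux

variable {α : Type*} [DecidableEq α]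

lemma path_reach : ∀ (l : List α) (a : α), ∀ x ∈ a :: l,
    Relation.ReflTransGen (fun p q => (p, q) ∈ arcsOf (a :: l)) a x
  | [], a, x, hx => by
    simp at hx
    subst hx
    exact Relation.ReflTransGen.refl
  | b :: t, a, x, hx => by
    rcases List.mem_cons.1 hx with rfl | hx'
    · exact Relation.ReflTransGen.refl
    · have h1 := path_reach t b x hx'
      have h2 : Relation.ReflTransGen (fun p q => (p, q) ∈ arcsOf (a :: b :: t)) b x :=
        Relation.ReflTransGen.mono (fun p q hpq => by rw [arcsOf_cons_cons]; exact List.mem_cons_of_mem _ hpq) _ _ h1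
      exact Relation.ReflTransGen.head (by rw [arcsOf_cons_cons]; exact List.mem_cons_self) h2

lemma card_filter_fst_arcsOf {x : α} {l : List α} (hnd : (x :: l).Nodup) (w : α) :
    ((arcsOf (x :: l)).toFinset.filter (fun p => p.1 = w)).card
      = (x :: l).dropLast.count w := by
  have h1 : (arcsOf (x :: l)).toFinset.filter (fun p => p.1 = w)
      = ((arcsOf (x :: l)).filter (fun p => p.1 = w)).toFinset := by
    ext p
    simp [List.mem_filter]
  rw [h1, List.toFinset_card_of_nodup ((nodup_arcsOf hnd).filter _), ← count_fst_arcsOf]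

lemma card_filter_snd_arcsOf {x : α} {l : List α} (hnd : (x :: l).Nodup) (w : α) :
    ((arcsOf (x :: l)).toFinset.filter (fun p => p.2 = w)).card
      = (x :: l).tail.count w := by
  have h1 : (arcsOf (x :: l)).toFinset.filter (fun p => p.2 = w)
      = ((arcsOf (x :: l)).filter (fun p => p.2 = w)).toFinset := by
    ext p
    simp [List.mem_filter]
  rw [h1, List.toFinset_card_of_nodup ((nodup_arcsOf hnd).filter _), ← count_snd_arcsOf]

lemma net_path {x y : α} {l : List α} (hnd : (x :: l).Nodup)
    (hlast : (x :: l).getLast? = some y) (hxy : x ≠ y) (hl : l ≠ []) :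
    ∀ w, net (arcsOf (x :: l)).toFinset w =
      (if w = x then 1 else 0) - (if w = y then 1 else 0) := by
  have hy' : (x :: l).getLast (List.cons_ne_nil _ _) = y := by
    rw [List.getLast?_eq_getLast (List.cons_ne_nil _ _)] at hlast
    exact Option.some_injective _ hlast
  have happ : (x :: l).dropLast ++ [y] = x :: l := by
    rw [← hy']
    exact List.dropLast_append_getLast _
  have hymem : y ∈ x :: l := hy' ▸ List.getLast_mem _
  intro w
  unfold net dOut dIn
  rw [card_filter_fst_arcsOf hnd, card_filter_snd_arcsOf hnd]
  have hsing : List.count w [y] = if w = y then 1 else 0 := by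
    by_cases h : w = y
    · simp [h]
    · simp [List.count_singleton, Ne.symm h, h]
  have hcnt1 : (x :: l).count w = (x :: l).dropLast.count w + (if w = y then 1 else 0) := by
    conv_lhs => rw [← happ]
    rw [List.count_append, hsing]
  have hcnt2 : (x :: l).count w = (if w = x then 1 else 0) + l.count w := by
    by_cases h : w = x
    · rw [if_pos h, h, List.count_cons_self]
      omega
    · rw [if_neg h, List.count_cons_of_ne (Ne.symm h)]
      omega
  have htail : (x :: l).tail = l := rfl
  rw [htail]
  have hcw : (x :: l).count w = if w ∈ x :: l then 1 else 0 := by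
    split
    · exact List.count_eq_one_of_mem hnd (by assumption)
    · exact List.count_eq_zero.2 (by assumption)
  by_cases hwx : w = x
  · have hwy : w ≠ y := by rw [hwx]; exact hxy
    have hwmem : w ∈ x :: l := by rw [hwx]; exact List.mem_cons_self
    rw [if_pos hwx, if_neg hwy]
    rw [if_pos hwmem] at hcw
    rw [if_neg hwy] at hcnt1
    rw [if_pos hwx] at hcnt2
    omega
  · by_cases hwy : w = y
    · rw [if_neg hwx, if_pos hwy]
      have hwmem : w ∈ x :: l := by rw [hwy]; exact hymem
      rw [if_pos hwmem] at hcw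
      rw [if_pos hwy] at hcnt1
      rw [if_neg hwx] at hcnt2
      omega
    · rw [if_neg hwx, if_neg hwy]
      rw [if_neg hwy] at hcnt1
      rw [if_neg hwx] at hcnt2
      by_cases hm : w ∈ x :: l
      · rw [if_pos hm] at hcw
        omega
      · rw [if_neg hm] at hcw
        omega

end MengerAux

namespace MengerAux

variable {U : Type*} [Fintype U] [DecidableEq U]

def IsFlow (K : SimpleGraph U) (u v : U) (A : Finset (U × U)) (k : ℕ) : Prop :=
  (∀ p ∈ A, K.Adj p.1 p.2) ∧ (∀ p ∈ A, (p.2, p.1) ∉ A) ∧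
  net A u = k ∧ ∀ w, w ≠ u → w ≠ v → net A w = 0

lemma sum_net_univ (A : Finset (U × U)) : ∑ w ∈ Finset.univ, net A w = 0 := by
  classical
  rw [sum_net]
  have h1 : A.filter (fun p => p.1 ∈ Finset.univ ∧ p.2 ∉ Finset.univ) = ∅ := by
    apply Finset.filter_eq_empty_iff.2
    intro p _
    simp
  have h2 : A.filter (fun p => p.1 ∉ Finset.univ ∧ p.2 ∈ Finset.univ) = ∅ := by
    apply Finset.filter_eq_empty_iff.2
    intro p _
    simp
  rw [h1, h2]
  simp

lemma net_v {K : SimpleGraph U} {u v : U} {A : Finset (U × U)} {k : ℕ}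
    (hne : u ≠ v) (hf : IsFlow K u v A k) : net A v = -(k : ℤ) := by
  classical
  have h0 := sum_net_univ A
  have h1 : ∑ w ∈ Finset.univ, net A w = ∑ w ∈ ({u, v} : Finset U), net A w := by
    apply (Finset.sum_subset (Finset.subset_univ _) _).symm
    intro w _ hw
    simp only [Finset.mem_insert, Finset.mem_singleton, not_or] at hw
    exact hf.2.2.2 w hw.1 hw.2
  rw [h1, Finset.sum_pair hne, hf.2.2.1] at h0
  linarith

lemma reach_of_flow {K : SimpleGraph U} {u v : U} {A : Finset (U × U)} {k : ℕ}
    (hne : u ≠ v) (hf : IsFlow K u v A k) (hk : 0 < k) :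
    Relation.ReflTransGen (fun a b => (a, b) ∈ A) u v := by
  classical
  by_contra hv
  set T : Finset U := Finset.univ.filter
    (fun w => Relation.ReflTransGen (fun a b => (a, b) ∈ A) u w) with hT
  have huT : u ∈ T := by
    rw [hT, Finset.mem_filter]
    exact ⟨Finset.mem_univ _, Relation.ReflTransGen.refl⟩
  have hvT : v ∉ T := by
    rw [hT, Finset.mem_filter]
    rintro ⟨-, h⟩
    exact hv h
  have hout : A.filter (fun p => p.1 ∈ T ∧ p.2 ∉ T) = ∅ := by
    apply Finset.filter_eq_empty_iff.2
    rintro p hp ⟨h1, h2⟩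
    apply h2
    rw [hT, Finset.mem_filter] at h1 ⊢
    exact ⟨Finset.mem_univ _, h1.2.tail hp⟩
  have hsum := sum_net A T
  rw [hout] at hsum
  have hsum2 : ∑ w ∈ T, net A w = net A u := by
    apply Finset.sum_eq_single_of_mem u huT
    intro w hw hwu
    refine hf.2.2.2 w hwu (fun h => hvT (h ▸ hw))
  rw [hsum2, hf.2.2.1] at hsum
  simp at hsum
  have : (0 : ℤ) < k := by exact_mod_cast hk
  omega

def Res (K : SimpleGraph U) (A : Finset (U × U)) (a b : U) : Prop :=
  (K.Adj a b ∧ (a, b) ∉ A ∧ (b, a) ∉ A) ∨ (b, a) ∈ A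

lemma cut_of_no_aug {K : SimpleGraph U} {u v : U} {A : Finset (U × U)} {k : ℕ}
    (hne : u ≠ v) (hf : IsFlow K u v A k)
    (h : ¬ Relation.ReflTransGen (Res K A) u v) :
    ∃ F : Finset (Sym2 U), ↑F ⊆ K.edgeSet ∧ F.card ≤ k ∧
      ¬ (K.deleteEdges ↑F).Reachable u v := by
  classical
  set T : Finset U := Finset.univ.filter (fun w => Relation.ReflTransGen (Res K A) u w) with hT
  have huT : u ∈ T := by
    rw [hT, Finset.mem_filter]
    exact ⟨Finset.mem_univ _, Relation.ReflTransGen.refl⟩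
  have hvT : v ∉ T := by
    rw [hT, Finset.mem_filter]
    rintro ⟨-, h'⟩
    exact h h'
  have hTclosed : ∀ a b, a ∈ T → Res K A a b → b ∈ T := by
    intro a b ha hr
    rw [hT, Finset.mem_filter] at ha ⊢
    exact ⟨Finset.mem_univ _, ha.2.tail hr⟩
  set X : Finset (U × U) := A.filter (fun p => p.1 ∈ T ∧ p.2 ∉ T) with hX
  set F : Finset (Sym2 U) := X.image (fun p => s(p.1, p.2)) with hF
  -- incoming arcs are none
  have hin : A.filter (fun p => p.1 ∉ T ∧ p.2 ∈ T) = ∅ := by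
    apply Finset.filter_eq_empty_iff.2
    rintro p hp ⟨h1, h2⟩
    exact h1 (hTclosed _ _ h2 (Or.inr hp))
  have hsum := sum_net A T
  rw [hin] at hsum
  have hsum2 : ∑ w ∈ T, net A w = net A u := by
    apply Finset.sum_eq_single_of_mem u huT
    intro w hw hwu
    refine hf.2.2.2 w hwu (fun h' => hvT (h' ▸ hw))
  rw [hsum2, hf.2.2.1] at hsum
  have hXcard : X.card = k := by
    have : ((X.card : ℤ)) = k := by
      rw [hX]
      simp at hsum
      omega
    exact_mod_cast this
  refine ⟨F, ?_, ?_, ?_⟩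
  · intro e he
    simp only [hF, Finset.coe_image, Set.mem_image, Finset.mem_coe] at he
    obtain ⟨p, hp, rfl⟩ := he
    exact (hf.1 p (Finset.mem_filter.1 hp).1)
  · calc F.card ≤ X.card := Finset.card_image_le
      _ = k := hXcard
  · intro hreach
    rw [SimpleGraph.reachable_iff_reflTransGen] at hreach
    have : ∀ b, Relation.ReflTransGen (K.deleteEdges ↑F).Adj u b → b ∈ T := by
      intro b hb
      induction hb with
      | refl => exact huT
      | @tail x y hxy hadj ih =>
        rw [SimpleGraph.deleteEdges_adj] at hadj
        by_contra hyT
        have hxA : (x, y) ∈ A := by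
          by_cases h1 : (x, y) ∈ A
          · exact h1
          · by_cases h2 : (y, x) ∈ A
            · exact absurd (hTclosed _ _ ih (Or.inr h2)) hyT
            · exact absurd (hTclosed _ _ ih (Or.inl ⟨hadj.1, h1, h2⟩)) hyT
        apply hadj.2
        simp only [hF, Finset.mem_coe, Finset.mem_image]
        exact ⟨(x, y), Finset.mem_filter.2 ⟨hxA, ih, hyT⟩, rfl⟩
    exact hvT (this v hreach)

end MengerAux

namespace MengerAux

variable {U : Type*} [Fintype U] [DecidableEq U]

lemma filter_sdiff_card {A D : Finset (U × U)} (hDA : D ⊆ A) (P : U × U → Prop)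
    [DecidablePred P] :
    (((A \ D).filter P).card : ℤ) = ((A.filter P).card : ℤ) - ((D.filter P).card : ℤ) := by
  have h1 : (A \ D).filter P = A.filter P \ D.filter P := by
    ext p
    simp only [Finset.mem_filter, Finset.mem_sdiff]
    tauto
  have h2 : D.filter P ⊆ A.filter P := Finset.filter_subset_filter _ hDA
  rw [h1, Finset.card_sdiff_of_subset h2]
  have := Finset.card_le_card h2
  omega

lemma card_swap_filter (T : Finset (U × U)) (P : U × U → Prop) [DecidablePred P] :
    ((T.image Prod.swap).filter P).card = (T.filter (fun p => P p.swap)).card := by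
  have h1 : (T.image Prod.swap).filter P = (T.filter (fun p => P p.swap)).image Prod.swap := by
    ext q
    simp only [Finset.mem_filter, Finset.mem_image]
    constructor
    · rintro ⟨⟨p, hp, rfl⟩, hPq⟩
      exact ⟨p, ⟨hp, hPq⟩, rfl⟩
    · rintro ⟨p, ⟨hp, hPp⟩, rfl⟩
      exact ⟨⟨p, hp, rfl⟩, hPp⟩
  rw [h1, Finset.card_image_of_injective _ Prod.swap_injective]

lemma augment {K : SimpleGraph U} {u v : U} {A : Finset (U × U)} {k : ℕ}
    (hne : u ≠ v) (hf : IsFlow K u v A k)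
    (h : Relation.ReflTransGen (Res K A) u v) :
    ∃ A', IsFlow K u v A' (k + 1) := by
  classical
  obtain ⟨l, hc, hnd, hlast, hl⟩ := exists_nodup_path hne h
  set S : Finset (U × U) := (arcsOf (u :: l)).toFinset with hS
  have hres : ∀ p ∈ S, Res K A p.1 p.2 := fun p hp =>
    chain_arcsOf hc p (List.mem_toFinset.1 hp)
  have hSrev : ∀ p ∈ S, (p.2, p.1) ∉ S := by
    rintro ⟨x, y⟩ hp hq
    exact not_rev_mem_arcsOf hnd (List.mem_toFinset.1 hp) (List.mem_toFinset.1 hq)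
  set I : Finset (U × U) := S.filter (fun p => (p.2, p.1) ∉ A) with hI
  set D : Finset (U × U) := A.filter (fun q => (q.2, q.1) ∈ S) with hD
  set A' : Finset (U × U) := (A \ D) ∪ I with hA'
  have hIS : I ⊆ S := Finset.filter_subset _ _
  have hDA : D ⊆ A := Finset.filter_subset _ _
  have hIA : ∀ p ∈ I, p ∉ A := by
    intro p hp
    rw [hI, Finset.mem_filter] at hp
    rcases hres p hp.1 with ⟨_, h2, _⟩ | h4
    · exact h2
    · exact absurd h4 hp.2
  have hIK : ∀ p ∈ I, K.Adj p.1 p.2 := by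
    intro p hp
    rw [hI, Finset.mem_filter] at hp
    rcases hres p hp.1 with ⟨h1, _, _⟩ | h4
    · exact h1
    · exact absurd h4 hp.2
  have hdisj : Disjoint (A \ D) I := by
    rw [Finset.disjoint_left]
    intro p hp hpI
    exact hIA p hpI (Finset.mem_sdiff.1 hp).1
  refine ⟨A', ?_, ?_, ?_, ?_⟩
  · -- adjacency
    intro p hp
    rw [hA', Finset.mem_union] at hp
    rcases hp with hp | hp
    · exact hf.1 p (Finset.mem_sdiff.1 hp).1
    · exact hIK p hp
  · -- antisymmetry
    intro p hp hq
    rw [hA', Finset.mem_union] at hp hq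
    rcases hp with hp | hp <;> rcases hq with hq | hq
    · exact hf.2.1 p (Finset.mem_sdiff.1 hp).1 (Finset.mem_sdiff.1 hq).1
    · rw [hI, Finset.mem_filter] at hq
      exact hq.2 (Finset.mem_sdiff.1 hp).1
    · rw [hI, Finset.mem_filter] at hp
      exact hp.2 (Finset.mem_sdiff.1 hq).1
    · exact hSrev p (hIS hp) (hIS hq)
  all_goals {
    have hnet : ∀ w, net A' w = net A w + net S w := by
      intro w
      have key_out : dOut A' w = dOut A w - dOut D w + dOut I w := by
        rw [hA']
        unfold dOut
        rw [Finset.filter_union,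
          Finset.card_union_of_disjoint (Finset.disjoint_filter_filter hdisj)]
        push_cast
        rw [filter_sdiff_card hDA]
        try ring
      have key_in : dIn A' w = dIn A w - dIn D w + dIn I w := by
        rw [hA']
        unfold dIn
        rw [Finset.filter_union,
          Finset.card_union_of_disjoint (Finset.disjoint_filter_filter hdisj)]
        push_cast
        rw [filter_sdiff_card hDA]
        try ring
      have hDim : D = (S.filter (fun p => (p.2, p.1) ∈ A)).image Prod.swap := by
        ext q
        rw [hD]
        simp only [Finset.mem_filter, Finset.mem_image]
        constructor
        · rintro ⟨hqA, hqS⟩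
          exact ⟨(q.2, q.1), ⟨hqS, hqA⟩, rfl⟩
        · rintro ⟨p, ⟨hpS, hpA⟩, rfl⟩
          exact ⟨hpA, hpS⟩
      have swap1 : dIn D w = ((S.filter (fun p => (p.2, p.1) ∈ A ∧ p.1 = w)).card : ℤ) := by
        unfold dIn
        rw [hDim, card_swap_filter, Finset.filter_filter]
        simp only [Prod.snd_swap]
      have swap2 : dOut D w = ((S.filter (fun p => (p.2, p.1) ∈ A ∧ p.2 = w)).card : ℤ) := by
        unfold dOut
        rw [hDim, card_swap_filter, Finset.filter_filter]
        simp only [Prod.fst_swap]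
      have split_out : dOut S w
          = dOut I w + ((S.filter (fun p => (p.2, p.1) ∈ A ∧ p.1 = w)).card : ℤ) := by
        unfold dOut
        rw [hI, Finset.filter_filter]
        have := card_filter_split S (fun p => p.1 = w) (fun p => (p.2, p.1) ∈ A)
        have e1 : S.filter (fun p => p.1 = w ∧ (p.2, p.1) ∈ A)
            = S.filter (fun p => (p.2, p.1) ∈ A ∧ p.1 = w) := by
          apply Finset.filter_congr
          intro p _
          constructor
          · rintro ⟨h1, h2⟩; exact ⟨h2, h1⟩
          · rintro ⟨h1, h2⟩; exact ⟨h2, h1⟩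
        have e2 : S.filter (fun p => p.1 = w ∧ (p.2, p.1) ∉ A)
            = S.filter (fun p => (p.2, p.1) ∉ A ∧ p.1 = w) := by
          apply Finset.filter_congr
          intro p _
          constructor
          · rintro ⟨h1, h2⟩; exact ⟨h2, h1⟩
          · rintro ⟨h1, h2⟩; exact ⟨h2, h1⟩
        rw [e1, e2] at this
        push_cast [this]
        ring
      have split_in : dIn S w
          = dIn I w + ((S.filter (fun p => (p.2, p.1) ∈ A ∧ p.2 = w)).card : ℤ) := by
        unfold dIn
        rw [hI, Finset.filter_filter]
        have := card_filter_split S (fun p => p.2 = w) (fun p => (p.2, p.1) ∈ A)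
        have e1 : S.filter (fun p => p.2 = w ∧ (p.2, p.1) ∈ A)
            = S.filter (fun p => (p.2, p.1) ∈ A ∧ p.2 = w) := by
          apply Finset.filter_congr
          intro p _
          constructor
          · rintro ⟨h1, h2⟩; exact ⟨h2, h1⟩
          · rintro ⟨h1, h2⟩; exact ⟨h2, h1⟩
        have e2 : S.filter (fun p => p.2 = w ∧ (p.2, p.1) ∉ A)
            = S.filter (fun p => (p.2, p.1) ∉ A ∧ p.2 = w) := by
          apply Finset.filter_congr
          intro p _
          constructor
          · rintro ⟨h1, h2⟩; exact ⟨h2, h1⟩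
          · rintro ⟨h1, h2⟩; exact ⟨h2, h1⟩
        rw [e1, e2] at this
        push_cast [this]
        ring
      unfold net
      rw [key_out, key_in]
      have : dOut S w - dIn S w = net S w := rfl
      omega
    have hpath := net_path hnd hlast hne hl
    first
    | (rw [hnet u, hf.2.2.1, hS, hpath u, if_pos rfl, if_neg hne]
       push_cast
       ring)
    | (intro w hwu hwv
       rw [hnet w, hf.2.2.2 w hwu hwv, hS, hpath w, if_neg hwu, if_neg hwv]
       ring)
  }

end MengerAux


namespace MengerAux

variable {U : Type*} [Fintype U] [DecidableEq U]

lemma exists_flow {K : SimpleGraph U} {u v : U} (hne : u ≠ v) (t : ℕ)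
    (hcut : ∀ F : Finset (Sym2 U), ↑F ⊆ K.edgeSet →
      ¬ (K.deleteEdges ↑F).Reachable u v → t ≤ F.card) :
    ∀ k, k ≤ t → ∃ A, IsFlow K u v A k := by
  intro k
  induction k with
  | zero =>
    intro _
    refine ⟨∅, ?_, ?_, ?_, ?_⟩ <;> simp [net, dOut, dIn]
  | succ k ih =>
    intro hk
    obtain ⟨A, hA⟩ := ih (Nat.le_of_succ_le hk)
    by_cases hres : Relation.ReflTransGen (Res K A) u v
    · exact augment hne hA hres
    · obtain ⟨F, hF1, hF2, hF3⟩ := cut_of_no_aug hne hA hres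
      have := hcut F hF1 hF3
      omega

/-- `P` is the arc set of a dipath whose symmetrization is a strong subgraph for `{u,v}`. -/
def Connector (K : SimpleGraph U) (u v : U) (P : Finset (U × U)) : Prop :=
  Digraph.IsStrongSubgraphOn K.biorient {u, v} (↑P ∪ Prod.swap '' ↑P)

lemma connector_of_path {K : SimpleGraph U} {u v : U} {l : List U}
    (hlast : (u :: l).getLast? = some v)
    (hadj : ∀ p ∈ (arcsOf (u :: l)).toFinset, K.Adj p.1 p.2) :
    Connector K u v (arcsOf (u :: l)).toFinset := by
  classical
  set P : Finset (U × U) := (arcsOf (u :: l)).toFinset with hP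
  set B : Set (U × U) := ↑P ∪ Prod.swap '' ↑P with hB
  have hBsub : B ⊆ (K.biorient).ArcSet := by
    rintro p (hp | ⟨q, hq, rfl⟩)
    · exact hadj p hp
    · exact (hadj q hq).symm
  have hsym : Symmetric (fun a b => (a, b) ∈ B) := by
    intro a b hab
    rcases hab with hab | ⟨q, hq, heq⟩
    · exact Or.inr ⟨(a, b), hab, rfl⟩
    · left
      have : q = (b, a) := by
        have := congrArg Prod.swap heq
        rwa [Prod.swap_swap] at this
      rwa [← this]
  have hvmem : v ∈ u :: l := by
    have := List.mem_of_mem_getLast? (l := u :: l) (a := v) hlast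
    exact this
  have hreach : ∀ x ∈ ({u, v} : Set U) ∪ {w | ∃ e ∈ B, w = e.1 ∨ w = e.2},
      Relation.ReflTransGen (fun a b => (a, b) ∈ B) u x := by
    intro x hx
    have hxL : x ∈ u :: l := by
      rcases hx with hx | ⟨e, he, hxe⟩
      · rcases hx with rfl | hx
        · exact List.mem_cons_self
        · rw [Set.mem_singleton_iff] at hx
          subst hx
          exact hvmem
      · have heL : e.1 ∈ u :: l ∧ e.2 ∈ u :: l := by
          rcases he with he | ⟨q, hq, rfl⟩
          · exact mem_of_mem_arcsOf (List.mem_toFinset.1 he)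
          · have := mem_of_mem_arcsOf (List.mem_toFinset.1 hq)
            exact ⟨this.2, this.1⟩
        rcases hxe with rfl | rfl
        · exact heL.1
        · exact heL.2
    exact Relation.ReflTransGen.mono
      (fun p q hpq => Or.inl (List.mem_toFinset.2 hpq)) _ _ (path_reach l u x hxL)
  refine ⟨hBsub, ?_⟩
  intro a ha b hb
  exact ((@Relation.ReflTransGen.symmetric _ _ ⟨fun x y h => hsym h⟩).symm _ _ (hreach a ha)).trans (hreach b hb)

lemma extract {K : SimpleGraph U} {u v : U} (hne : u ≠ v) :
    ∀ (k : ℕ) (A : Finset (U × U)), IsFlow K u v A k →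
    ∃ f : Fin k → Finset (U × U),
      (∀ i, f i ⊆ A) ∧ (∀ i j, i ≠ j → Disjoint (f i) (f j)) ∧
      (∀ i, Connector K u v (f i)) := by
  intro k
  induction k with
  | zero =>
    intro A _
    exact ⟨fun i => i.elim0, fun i => i.elim0, fun i j _ => i.elim0, fun i => i.elim0⟩
  | succ k ih =>
    intro A hf
    have hreach := reach_of_flow hne hf (Nat.succ_pos k)
    obtain ⟨l, hc, hnd, hlast, hl⟩ := exists_nodup_path hne hreach
    set P : Finset (U × U) := (arcsOf (u :: l)).toFinset with hP
    have hPA : P ⊆ A := by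
      intro p hp
      have := chain_arcsOf hc p (List.mem_toFinset.1 hp)
      simpa using this
    have hf' : IsFlow K u v (A \ P) k := by
      have hnet : ∀ w, net (A \ P) w = net A w - net P w := by
        intro w
        unfold net dOut dIn
        rw [filter_sdiff_card hPA, filter_sdiff_card hPA]
        ring
      have hpath := net_path hnd hlast hne hl
      refine ⟨?_, ?_, ?_, ?_⟩
      · exact fun p hp => hf.1 p (Finset.mem_sdiff.1 hp).1
      · intro p hp hq
        exact hf.2.1 p (Finset.mem_sdiff.1 hp).1 (Finset.mem_sdiff.1 hq).1
      · rw [hnet u, hf.2.2.1, hP, hpath u, if_pos rfl, if_neg hne]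
        push_cast
        ring
      · intro w hwu hwv
        rw [hnet w, hf.2.2.2 w hwu hwv, hP, hpath w, if_neg hwu, if_neg hwv]
        ring
    obtain ⟨f', hsub', hdisj', hconn'⟩ := ih (A \ P) hf'
    refine ⟨Fin.cons P f', ?_, ?_, ?_⟩
    · intro i
      induction i using Fin.cases with
      | zero => simpa using hPA
      | succ j =>
        simp only [Fin.cons_succ]
        exact (hsub' j).trans (Finset.sdiff_subset)
    · intro i j hij
      induction i using Fin.cases with
      | zero =>
        induction j using Fin.cases with
        | zero => exact absurd rfl hij
        | succ j' =>
          simp only [Fin.cons_zero, Fin.cons_succ]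
          rw [Finset.disjoint_left]
          intro p hpP hpj
          exact (Finset.mem_sdiff.1 (hsub' j' hpj)).2 hpP
      | succ i' =>
        induction j using Fin.cases with
        | zero =>
          simp only [Fin.cons_zero, Fin.cons_succ]
          rw [Finset.disjoint_right]
          intro p hpP hpi
          exact (Finset.mem_sdiff.1 (hsub' i' hpi)).2 hpP
        | succ j' =>
          simp only [Fin.cons_succ]
          exact hdisj' i' j' (fun h => hij (h ▸ rfl))
    · intro i
      induction i using Fin.cases with
      | zero =>
        simp only [Fin.cons_zero]
        exact connector_of_path hlast (fun p hp => hf.1 p (hPA hp))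
      | succ j =>
        simp only [Fin.cons_succ]
        exact hconn' j

end MengerAux


namespace MengerAux

variable {U : Type*} [Fintype U] [DecidableEq U]

lemma lambdaS_bddAbove {u v : U} (hne : u ≠ v) (D : Digraph U) :
    BddAbove {k | ∃ f : Fin k → Set (U × U),
      (∀ i, D.IsStrongSubgraphOn {u, v} (f i)) ∧
      ∀ i j, i ≠ j → Disjoint (f i) (f j)} := by
  classical
  refine ⟨Fintype.card (U × U), ?_⟩
  rintro k ⟨f, hstrong, hdisj⟩
  have hchoice : ∀ i : Fin k, ∃ p : U × U, p ∈ f i := by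
    intro i
    have hu : u ∈ ({u, v} : Set U) ∪ {w | ∃ e ∈ f i, w = e.1 ∨ w = e.2} :=
      Or.inl (Set.mem_insert _ _)
    have hv : v ∈ ({u, v} : Set U) ∪ {w | ∃ e ∈ f i, w = e.1 ∨ w = e.2} :=
      Or.inl (Set.mem_insert_iff.2 (Or.inr rfl))
    have := (hstrong i).2 u hu v hv
    rcases this.cases_head with h | ⟨c, hc, -⟩
    · exact absurd h hne
    · exact ⟨(u, c), hc⟩
  choose g hg using hchoice
  have hginj : Function.Injective g := by
    intro i j hij
    by_contra hne'
    exact Set.disjoint_left.1 (hdisj i j hne') (hg i) (hij ▸ hg j)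
  calc k = Fintype.card (Fin k) := (Fintype.card_fin k).symm
    _ ≤ Fintype.card (U × U) := Fintype.card_le_of_injective g hginj

lemma lambdaS_ge {K : SimpleGraph U} {u v : U} (hne : u ≠ v) (t : ℕ)
    (hcut : ∀ F : Finset (Sym2 U), ↑F ⊆ K.edgeSet →
      ¬ (K.deleteEdges ↑F).Reachable u v → t ≤ F.card) :
    t ≤ K.biorient.lambdaS {u, v} := by
  classical
  obtain ⟨A, hA⟩ := exists_flow hne t hcut t le_rfl
  obtain ⟨f, hsub, hdisj, hconn⟩ := extract hne t A hA
  apply le_csSup (lambdaS_bddAbove hne _)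
  refine ⟨fun i => ↑(f i) ∪ Prod.swap '' ↑(f i), fun i => hconn i, ?_⟩
  intro i j hij
  rw [Set.disjoint_left]
  rintro p (hp | ⟨q, hq, rfl⟩) (hp' | ⟨q', hq', heq⟩)
  · exact Finset.disjoint_left.1 (hdisj i j hij) hp hp'
  · -- p ∈ f i ⊆ A and p = swap q', q' ∈ f j ⊆ A
    have h1 : p ∈ A := hsub i hp
    have h2 : q' ∈ A := hsub j hq'
    have hq2 : q' = (p.2, p.1) := by
      have h3 := congrArg Prod.swap heq
      rw [Prod.swap_swap] at h3
      exact h3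
    exact hA.2.1 p h1 (hq2 ▸ h2)
  · have h1 : q ∈ A := hsub i hq
    have h2 : q.swap ∈ A := hsub j hp'
    exact hA.2.1 q h1 h2
  · have hqq : q' = q := by
      have h3 := congrArg Prod.swap heq
      rwa [Prod.swap_swap, Prod.swap_swap] at h3
    exact Finset.disjoint_left.1 (hdisj i j hij) hq (hqq ▸ hq')

lemma exists_crossing {γ : Type*} {r : γ → γ → Prop} {T : Set γ} {a b : γ}
    (h : Relation.ReflTransGen r a b) (ha : a ∈ T) (hb : b ∉ T) :
    ∃ x y, r x y ∧ x ∈ T ∧ y ∉ T := by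
  induction h with
  | refl => exact absurd ha hb
  | @tail x y hax hxy ih =>
    by_cases hx : x ∈ T
    · exact ⟨x, y, hxy, hx, hb⟩
    · exact ih hx

lemma lambdaS_le {K : SimpleGraph U} {a b : U} (hne : a ≠ b) (F : Set (Sym2 U))
    (hdis : ¬ (K.deleteEdges F).Reachable a b) :
    K.biorient.lambdaS {a, b} ≤ F.ncard := by
  classical
  apply csSup_le
  · exact ⟨0, fun i => i.elim0, fun i => i.elim0, fun i j _ => i.elim0⟩
  rintro k ⟨f, hstrong, hdisj⟩
  set T : Set U := {x | (K.deleteEdges F).Reachable a x} with hT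
  have haT : a ∈ T := SimpleGraph.Reachable.refl a
  have hbT : b ∉ T := hdis
  have hchoice : ∀ i : Fin k, ∃ p : U × U,
      p ∈ f i ∧ p.1 ∈ T ∧ p.2 ∉ T ∧ s(p.1, p.2) ∈ F := by
    intro i
    have hu : a ∈ ({a, b} : Set U) ∪ {w | ∃ e ∈ f i, w = e.1 ∨ w = e.2} :=
      Or.inl (Set.mem_insert _ _)
    have hv : b ∈ ({a, b} : Set U) ∪ {w | ∃ e ∈ f i, w = e.1 ∨ w = e.2} :=
      Or.inl (Set.mem_insert_iff.2 (Or.inr rfl))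
    obtain ⟨x, y, hxy, hxT, hyT⟩ := exists_crossing ((hstrong i).2 a hu b hv) haT hbT
    have hadj : K.Adj x y := (hstrong i).1 hxy
    have hedge : s(x, y) ∈ F := by
      by_contra hF
      exact hyT (hxT.trans (SimpleGraph.Adj.reachable (SimpleGraph.deleteEdges_adj.2 ⟨hadj, hF⟩)))
    exact ⟨(x, y), hxy, hxT, hyT, hedge⟩
  choose g hg1 hg2 hg3 hg4 using hchoice
  have hginj : Function.Injective g := by
    intro i j hij
    by_contra hne'
    exact Set.disjoint_left.1 (hdisj i j hne') (hg1 i) (hij ▸ hg1 j)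
  have hFfin : F.Finite := Set.toFinite F
  set ψ : Fin k → F := fun i => ⟨s((g i).1, (g i).2), hg4 i⟩ with hψ
  have hψinj : Function.Injective ψ := by
    intro i j hij
    apply hginj
    have : s((g i).1, (g i).2) = s((g j).1, (g j).2) := congrArg Subtype.val hij
    rw [Sym2.eq_iff] at this
    rcases this with ⟨h1, h2⟩ | ⟨h1, h2⟩
    · exact Prod.ext h1 h2
    · exact absurd (h1 ▸ hg2 i) (hg3 j)
  have : Nat.card (Fin k) ≤ Nat.card F := Nat.card_le_card_of_injective ψ hψinj
  rwa [Nat.card_eq_fintype_card, Fintype.card_fin, Nat.card_coe_set_eq] at this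

theorem biorient_lambdaK_eq_edgeConn (K : SimpleGraph U) :
    K.biorient.lambdaK 2 = K.edgeConn := by
  classical
  by_cases hsub : ∀ x y : U, x = y
  · -- subsingleton case : both sides are 0
    have h1 : {m | ∃ S : Set U, S.ncard = 2 ∧ K.biorient.lambdaS S = m} = ∅ := by
      rw [Set.eq_empty_iff_forall_notMem]
      rintro m ⟨S, hS2, -⟩
      obtain ⟨x, y, hxy, -⟩ := Set.ncard_eq_two.1 hS2
      exact hxy (hsub x y)
    rw [Digraph.lambdaK, h1, Nat.sInf_empty]
    rcases isEmpty_or_nonempty U with hU | hU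
    · have : (0 : ℕ) ∈ {k | ∃ F : Set (Sym2 U), F ⊆ K.edgeSet ∧ F.ncard = k ∧
          ¬ (K.deleteEdges F).Connected} := by
        refine ⟨∅, Set.empty_subset _, Set.ncard_empty _, fun h => ?_⟩
        exact hU.elim h.nonempty.some
      symm
      exact Nat.eq_zero_of_le_zero (Nat.sInf_le this)
    · have h2 : {k | ∃ F : Set (Sym2 U), F ⊆ K.edgeSet ∧ F.ncard = k ∧
          ¬ (K.deleteEdges F).Connected} = ∅ := by
        rw [Set.eq_empty_iff_forall_notMem]
        rintro k ⟨F, -, -, hF⟩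
        apply hF
        rw [SimpleGraph.connected_iff]
        exact ⟨fun x y => (hsub x y) ▸ SimpleGraph.Reachable.refl x, hU⟩
      rw [SimpleGraph.edgeConn, h2, Nat.sInf_empty]
  · push_neg at hsub
    obtain ⟨a₀, b₀, hab₀⟩ := hsub
    have hnonempty : Nonempty U := ⟨a₀⟩
    -- the edge-connectivity set is nonempty
    have hEne : {k | ∃ F : Set (Sym2 U), F ⊆ K.edgeSet ∧ F.ncard = k ∧
        ¬ (K.deleteEdges F).Connected}.Nonempty := by
      refine ⟨(K.edgeSet).ncard, K.edgeSet, subset_rfl, rfl, fun h => ?_⟩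
      have hreach := h.preconnected a₀ b₀
      rw [SimpleGraph.reachable_iff_reflTransGen] at hreach
      have : ∀ c, Relation.ReflTransGen (K.deleteEdges K.edgeSet).Adj a₀ c → a₀ = c := by
        intro c hc
        induction hc with
        | refl => rfl
        | @tail x y hax hxy ih =>
          rw [SimpleGraph.deleteEdges_adj] at hxy
          exact absurd hxy.1 hxy.2
      exact hab₀ (this b₀ hreach)
    obtain ⟨Fm, hFm_sub, hFm_card, hFm_conn⟩ := Nat.sInf_mem hEne
    apply le_antisymm
    · -- λ₂ ≤ edgeConn
      have : ¬ (K.deleteEdges Fm).Preconnected := by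
        intro h
        exact hFm_conn ((SimpleGraph.connected_iff _).2 ⟨h, hnonempty⟩)
      rw [SimpleGraph.Preconnected] at this
      push_neg at this
      obtain ⟨a, b, hab⟩ := this
      have hne : a ≠ b := fun h => hab (h ▸ SimpleGraph.Reachable.refl a)
      calc K.biorient.lambdaK 2 ≤ K.biorient.lambdaS {a, b} :=
            Nat.sInf_le ⟨{a, b}, Set.ncard_pair hne, rfl⟩
        _ ≤ Fm.ncard := lambdaS_le hne Fm hab
        _ = K.edgeConn := hFm_card
    · -- edgeConn ≤ λ₂
      apply le_csInf
      · exact ⟨K.biorient.lambdaS {a₀, b₀}, {a₀, b₀}, Set.ncard_pair hab₀, rfl⟩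
      rintro m ⟨S, hS2, rfl⟩
      obtain ⟨x, y, hxy, rfl⟩ := Set.ncard_eq_two.1 hS2
      apply lambdaS_ge hxy
      intro F hFsub hFreach
      by_contra hcard
      push_neg at hcard
      have hmem : (F : Finset (Sym2 U)).card ∈ {k | ∃ F : Set (Sym2 U),
          F ⊆ K.edgeSet ∧ F.ncard = k ∧ ¬ (K.deleteEdges F).Connected} := by
        refine ⟨↑F, hFsub, Set.ncard_coe_finset F, fun h => ?_⟩
        exact hFreach (h.preconnected x y)
      have hle : K.edgeConn ≤ (F : Finset (Sym2 U)).card := Nat.sInf_le hmem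
      omega

end MengerAux

theorem stmt16 {V W : Type*} [Fintype V] [Fintype W]
    (G : SimpleGraph V) (H : SimpleGraph W) :
    (G.biorient.cartProd H.biorient).lambdaK 2 = (G.boxProd H).edgeConn := by
  classical
  have hD : G.biorient.cartProd H.biorient = (G.boxProd H).biorient := by
    apply Digraph.ext
    funext a b
    apply propext
    constructor
    · rintro (⟨h1, h2⟩ | ⟨h1, h2⟩)
      · exact SimpleGraph.boxProd_adj.2 (Or.inl ⟨h1, h2⟩)
      · exact SimpleGraph.boxProd_adj.2 (Or.inr ⟨h2, h1⟩)
    · intro h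
      rcases SimpleGraph.boxProd_adj.1 h with ⟨h1, h2⟩ | ⟨h1, h2⟩
      · exact Or.inl ⟨h1, h2⟩
      · exact Or.inr ⟨h2, h1⟩
  rw [hD]
  exact MengerAux.biorient_lambdaK_eq_edgeConn (G.boxProd H)
end

section
/- For integers n, m ≥ 2, λ_2(↔K_n □ ↔K_m) = n + m − 2, where ↔K_n is the complete digraph on n vertices. -/
def chainArcs {V : Type*} : List V → Set (V × V)
  | a :: b :: t => {(a, b), (b, a)} ∪ chainArcs (b :: t)
  | _ => ∅

lemma mem_chainArcs {V : Type*} {l : List V} {p : V × V} (hp : p ∈ chainArcs l) :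
    p.1 ∈ l ∧ p.2 ∈ l := by
  induction l with
  | nil => simp [chainArcs] at hp
  | cons a t ih =>
    cases t with
    | nil => simp [chainArcs] at hp
    | cons b t' =>
      simp only [chainArcs, Set.mem_union, Set.mem_insert_iff, Set.mem_singleton_iff] at hp
      rcases hp with (h | h) | h
      · subst h; simp
      · subst h; simp
      · obtain ⟨h1, h2⟩ := ih h
        exact ⟨List.mem_cons_of_mem _ h1, List.mem_cons_of_mem _ h2⟩

lemma chainArcs_subset {V : Type*} {D : Digraph V} : ∀ {l : List V},
    l.Chain' (fun a b => D.Adj a b ∧ D.Adj b a) → chainArcs l ⊆ D.ArcSet := by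
  intro l
  induction l with
  | nil => intro _; simp [chainArcs]
  | cons a t ih =>
    cases t with
    | nil => intro _; simp [chainArcs]
    | cons b t' =>
      intro h
      rw [List.Chain', List.isChain_cons_cons] at h
      intro p hp
      rcases hp with (h1 | h1) | h1
      · subst h1; exact h.1.1
      · subst h1; exact h.1.2
      · exact ih h.2 h1

lemma chain_reach {V : Type*} : ∀ (t : List V) (a u : V), u ∈ a :: t →
    Relation.ReflTransGen (fun x y => (x, y) ∈ chainArcs (a :: t)) a u ∧
    Relation.ReflTransGen (fun x y => (x, y) ∈ chainArcs (a :: t)) u a := by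
  intro t
  induction t with
  | nil =>
    intro a u hu
    simp at hu; subst hu; exact ⟨.refl, .refl⟩
  | cons b t' ih =>
    intro a u hu
    have hsub : chainArcs (b :: t') ⊆ chainArcs (a :: b :: t') := fun p hp => Or.inr hp
    have hab : ((a, b) : V × V) ∈ chainArcs (a :: b :: t') := by left; left; rfl
    have hba : ((b, a) : V × V) ∈ chainArcs (a :: b :: t') := by left; right; rfl
    rcases List.mem_cons.1 hu with h | h
    · subst h; exact ⟨.refl, .refl⟩
    · obtain ⟨h1, h2⟩ := ih b u h
      exact ⟨.trans (.single hab) (Relation.ReflTransGen.mono (fun x y hxy => hsub hxy) _ _ h1),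
             .trans (Relation.ReflTransGen.mono (fun x y hxy => hsub hxy) _ _ h2) (.single hba)⟩

lemma isStrongSubgraphOn_chainArcs {V : Type*} (D : Digraph V) (S : Set V) (a : V) (t : List V)
    (hadj : (a :: t).Chain' (fun x y => D.Adj x y ∧ D.Adj y x))
    (hS : ∀ s ∈ S, s ∈ a :: t) :
    D.IsStrongSubgraphOn S (chainArcs (a :: t)) := by
  refine ⟨chainArcs_subset hadj, ?_⟩
  intro u hu w hw
  have hmem : ∀ x, x ∈ S ∪ {v | ∃ e ∈ chainArcs (a :: t), v = e.1 ∨ v = e.2} → x ∈ a :: t := by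
    rintro x (hx | ⟨e, he, hx⟩)
    · exact hS x hx
    · obtain ⟨h1, h2⟩ := mem_chainArcs he
      rcases hx with rfl | rfl <;> assumption
  exact ((chain_reach t a u (hmem u hu)).2).trans (chain_reach t a w (hmem w hw)).1
lemma card_ne {n : ℕ} (a : Fin n) : Fintype.card {x : Fin n // x ≠ a} = n - 1 := by
  simp [Fintype.card_subtype_compl]

lemma card_ne2 {n : ℕ} {a b : Fin n} (h : a ≠ b) :
    Fintype.card {x : Fin n // x ≠ a ∧ x ≠ b} = n - 2 := by
  rw [Fintype.card_subtype]
  have : (Finset.univ.filter fun x : Fin n => x ≠ a ∧ x ≠ b) = Finset.univ \ {a, b} := by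
    ext x; simp [and_comm]
  rw [this, Finset.card_sdiff_of_subset (by simp)]
  simp [Finset.card_insert_of_notMem, h]

lemma lambdaSet_bound {n m : ℕ} {S : Set (Fin n × Fin m)} {u v : Fin n × Fin m}
    (huv : u ≠ v) (hu : u ∈ S) (hv : v ∈ S) {k : ℕ}
    {f : Fin k → Set ((Fin n × Fin m) × (Fin n × Fin m))}
    (hf : ∀ i, ((completeDigraph n).cartProd (completeDigraph m)).IsStrongSubgraphOn S (f i))
    (hdisj : ∀ i j, i ≠ j → Disjoint (f i) (f j)) :
    k ≤ (n - 1) + (m - 1) := by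
  classical
  have hw : ∀ i, ∃ w, (u, w) ∈ f i := by
    intro i
    have h := (hf i).2 u (Or.inl hu) v (Or.inl hv)
    rcases h.cases_head with h | ⟨c, hc, _⟩
    · exact absurd h huv
    · exact ⟨c, hc⟩
  choose w hwmem using hw
  have hwinj : Function.Injective w := by
    intro i j hij
    by_contra hne
    exact Set.disjoint_left.mp (hdisj i j hne) (hwmem i) (hij ▸ hwmem j)
  have key : ∀ i, (u.2 = (w i).2 ∧ (w i).1 ≠ u.1) ∨ (u.1 = (w i).1 ∧ (w i).2 ≠ u.2) := by
    intro i
    have h : ((completeDigraph n).cartProd (completeDigraph m)).Adj u (w i) :=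
      (hf i).1 (hwmem i)
    rcases h with ⟨h1, h2⟩ | ⟨h1, h2⟩
    · exact Or.inl ⟨h2, fun hh => h1 hh.symm⟩
    · exact Or.inr ⟨h1, fun hh => h2 hh.symm⟩
  let F : Fin k → {x : Fin n // x ≠ u.1} ⊕ {y : Fin m // y ≠ u.2} := fun i =>
    if hc : u.2 = (w i).2 then
      Sum.inl ⟨(w i).1, by
        rcases key i with ⟨_, h⟩ | ⟨_, h2⟩
        · exact h
        · exact absurd hc.symm h2⟩
    else Sum.inr ⟨(w i).2, fun hh => hc hh.symm⟩
  have hFinj : Function.Injective F := by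
    intro i j hij
    apply hwinj
    simp only [F] at hij
    by_cases hci : u.2 = (w i).2 <;> by_cases hcj : u.2 = (w j).2
    · rw [dif_pos hci, dif_pos hcj] at hij
      simp only [Sum.inl.injEq, Subtype.mk.injEq] at hij
      exact Prod.ext_iff.mpr ⟨hij, hci.symm.trans hcj⟩
    · rw [dif_pos hci, dif_neg hcj] at hij
      exact absurd hij (by simp)
    · rw [dif_neg hci, dif_pos hcj] at hij
      exact absurd hij (by simp)
    · rw [dif_neg hci, dif_neg hcj] at hij
      simp only [Sum.inr.injEq, Subtype.mk.injEq] at hij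
      have h1 : u.1 = (w i).1 := by
        rcases key i with ⟨hh, _⟩ | ⟨hh, _⟩
        · exact absurd hh hci
        · exact hh
      have h2 : u.1 = (w j).1 := by
        rcases key j with ⟨hh, _⟩ | ⟨hh, _⟩
        · exact absurd hh hcj
        · exact hh
      exact Prod.ext_iff.mpr ⟨h1.symm.trans h2, hij⟩
  calc k = Fintype.card (Fin k) := (Fintype.card_fin k).symm
    _ ≤ Fintype.card ({x : Fin n // x ≠ u.1} ⊕ {y : Fin m // y ≠ u.2}) :=
        Fintype.card_le_of_injective F hFinj
    _ = (n - 1) + (m - 1) := by rw [Fintype.card_sum, card_ne, card_ne]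
lemma exists_f {V : Type*} {D : Digraph V} {S : Set V} {N : ℕ} (ι : Type) [Fintype ι]
    (hcard : Fintype.card ι = N) (g : ι → Set (V × V))
    (hg : ∀ i, D.IsStrongSubgraphOn S (g i))
    (hdisj : ∀ i j, i ≠ j → Disjoint (g i) (g j)) :
    ∃ f : Fin N → Set (V × V), (∀ i, D.IsStrongSubgraphOn S (f i)) ∧
      ∀ i j, i ≠ j → Disjoint (f i) (f j) := by
  let e := (Fintype.equivFinOfCardEq hcard).symm
  exact ⟨g ∘ e, fun i => hg _, fun i j hij => hdisj _ _ fun h => hij (e.injective h)⟩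

lemma adj_cart {n m : ℕ} {a b : Fin n} {c d : Fin m} :
    ((completeDigraph n).cartProd (completeDigraph m)).Adj (a, c) (b, d) ↔
      (a ≠ b ∧ c = d) ∨ (a = b ∧ c ≠ d) := Iff.rfl

set_option maxHeartbeats 2000000 in
lemma construction (n m : ℕ) (hn : 2 ≤ n) (hm : 2 ≤ m) (u v : Fin n × Fin m) (huv : u ≠ v) :
    ∃ f : Fin (n + m - 2) → Set ((Fin n × Fin m) × (Fin n × Fin m)),
      (∀ i, ((completeDigraph n).cartProd (completeDigraph m)).IsStrongSubgraphOn {u, v} (f i)) ∧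
      ∀ i j, i ≠ j → Disjoint (f i) (f j) := by
  classical
  obtain ⟨a₁, a₂⟩ := u
  obtain ⟨b₁, b₂⟩ := v
  by_cases h1 : a₁ = b₁ <;> by_cases h2 : a₂ = b₂
  · exact absurd (by rw [h1, h2]) huv
  · -- same row: a₁ = b₁, a₂ ≠ b₂
    subst h1
    refine exists_f (Unit ⊕ ({e : Fin m // e ≠ a₂ ∧ e ≠ b₂} ⊕ {t : Fin n // t ≠ a₁}))
      (by simp [card_ne, card_ne2 h2]; omega)
      (fun i => match i with
        | .inl _ => chainArcs [(a₁, a₂), (a₁, b₂)]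
        | .inr (.inl ⟨e, _⟩) => chainArcs [(a₁, a₂), (a₁, e), (a₁, b₂)]
        | .inr (.inr ⟨t, _⟩) => chainArcs [(a₁, a₂), (t, a₂), (t, b₂), (a₁, b₂)])
      ?_ ?_
    · rintro (⟨⟩ | ⟨e, he1, he2⟩ | ⟨t, ht⟩) <;>
        refine isStrongSubgraphOn_chainArcs _ _ _ _ ?_ (by rintro s (rfl | rfl) <;> simp)
      · simp [List.Chain', List.isChain_cons_cons, adj_cart, h2, Ne.symm h2]
      · simp [List.Chain', List.isChain_cons_cons, adj_cart, h2, Ne.symm h2, he1, he2, Ne.symm he1, Ne.symm he2]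
      · simp [List.Chain', List.isChain_cons_cons, adj_cart, h2, Ne.symm h2, ht, Ne.symm ht]
    · rintro (⟨⟩ | ⟨e, he1, he2⟩ | ⟨t, ht⟩) (⟨⟩ | ⟨e', he1', he2'⟩ | ⟨t', ht'⟩) hne <;>
        [exact absurd rfl hne; skip; skip; skip;
         (have hee : e ≠ e' := by rintro rfl; exact hne rfl);
         skip; skip; skip;
         (have htt : t ≠ t' := by rintro rfl; exact hne rfl)] <;>
      · rw [Set.disjoint_left]
        rintro ⟨⟨x1, x2⟩, ⟨y1, y2⟩⟩ hx hy
        simp only [chainArcs, Set.mem_union, Set.mem_insert_iff, Set.mem_singleton_iff,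
          Set.mem_empty_iff_false, or_false, Prod.mk.injEq] at hx hy
        casesm* _ ∨ _, _ ∧ _ <;> simp only [Fin.ext_iff] at * <;> omega
  · -- same column: a₂ = b₂, a₁ ≠ b₁
    subst h2
    refine exists_f (Unit ⊕ ({t : Fin n // t ≠ a₁ ∧ t ≠ b₁} ⊕ {e : Fin m // e ≠ a₂}))
      (by simp [card_ne, card_ne2 h1]; omega)
      (fun i => match i with
        | .inl _ => chainArcs [(a₁, a₂), (b₁, a₂)]
        | .inr (.inl ⟨t, _⟩) => chainArcs [(a₁, a₂), (t, a₂), (b₁, a₂)]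
        | .inr (.inr ⟨e, _⟩) => chainArcs [(a₁, a₂), (a₁, e), (b₁, e), (b₁, a₂)])
      ?_ ?_
    · rintro (⟨⟩ | ⟨t, ht1, ht2⟩ | ⟨e, he⟩) <;>
        refine isStrongSubgraphOn_chainArcs _ _ _ _ ?_ (by rintro s (rfl | rfl) <;> simp)
      · simp [List.Chain', List.isChain_cons_cons, adj_cart, h1, Ne.symm h1]
      · simp [List.Chain', List.isChain_cons_cons, adj_cart, h1, Ne.symm h1, ht1, ht2, Ne.symm ht1, Ne.symm ht2]
      · simp [List.Chain', List.isChain_cons_cons, adj_cart, h1, Ne.symm h1, he, Ne.symm he]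
    · rintro (⟨⟩ | ⟨t, ht1, ht2⟩ | ⟨e, he⟩) (⟨⟩ | ⟨t', ht1', ht2'⟩ | ⟨e', he'⟩) hne <;>
        [exact absurd rfl hne; skip; skip; skip;
         (have htt : t ≠ t' := by rintro rfl; exact hne rfl);
         skip; skip; skip;
         (have hee : e ≠ e' := by rintro rfl; exact hne rfl)] <;>
      · rw [Set.disjoint_left]
        rintro ⟨⟨x1, x2⟩, ⟨y1, y2⟩⟩ hx hy
        simp only [chainArcs, Set.mem_union, Set.mem_insert_iff, Set.mem_singleton_iff,
          Set.mem_empty_iff_false, or_false, Prod.mk.injEq] at hx hy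
        casesm* _ ∨ _, _ ∧ _ <;> simp only [Fin.ext_iff] at * <;> omega
  · -- general position: a₁ ≠ b₁, a₂ ≠ b₂
    refine exists_f ((Unit ⊕ Unit) ⊕ ({e : Fin m // e ≠ a₂ ∧ e ≠ b₂} ⊕ {t : Fin n // t ≠ a₁ ∧ t ≠ b₁}))
      (by simp [card_ne2 h1, card_ne2 h2]; omega)
      (fun i => match i with
        | .inl (.inl _) => chainArcs [(a₁, a₂), (b₁, a₂), (b₁, b₂)]
        | .inl (.inr _) => chainArcs [(a₁, a₂), (a₁, b₂), (b₁, b₂)]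
        | .inr (.inl ⟨e, _⟩) => chainArcs [(a₁, a₂), (a₁, e), (b₁, e), (b₁, b₂)]
        | .inr (.inr ⟨t, _⟩) => chainArcs [(a₁, a₂), (t, a₂), (t, b₂), (b₁, b₂)])
      ?_ ?_
    · rintro ((⟨⟩ | ⟨⟩) | ⟨e, he1, he2⟩ | ⟨t, ht1, ht2⟩) <;>
        refine isStrongSubgraphOn_chainArcs _ _ _ _ ?_ (by rintro s (rfl | rfl) <;> simp)
      · simp [List.Chain', List.isChain_cons_cons, adj_cart, h1, Ne.symm h1, h2, Ne.symm h2]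
      · simp [List.Chain', List.isChain_cons_cons, adj_cart, h1, Ne.symm h1, h2, Ne.symm h2]
      · simp [List.Chain', List.isChain_cons_cons, adj_cart, h1, Ne.symm h1, h2, Ne.symm h2,
          he1, he2, Ne.symm he1, Ne.symm he2]
      · simp [List.Chain', List.isChain_cons_cons, adj_cart, h1, Ne.symm h1, h2, Ne.symm h2,
          ht1, ht2, Ne.symm ht1, Ne.symm ht2]
    · rintro ((⟨⟩ | ⟨⟩) | ⟨e, he1, he2⟩ | ⟨t, ht1, ht2⟩)
        ((⟨⟩ | ⟨⟩) | ⟨e', he1', he2'⟩ | ⟨t', ht1', ht2'⟩) hne <;>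
        [exact absurd rfl hne; skip; skip; skip;
         skip; exact absurd rfl hne; skip; skip;
         skip; skip; (have hee : e ≠ e' := by rintro rfl; exact hne rfl); skip;
         skip; skip; skip; (have htt : t ≠ t' := by rintro rfl; exact hne rfl)] <;>
      · rw [Set.disjoint_left]
        rintro ⟨⟨x1, x2⟩, ⟨y1, y2⟩⟩ hx hy
        simp only [chainArcs, Set.mem_union, Set.mem_insert_iff, Set.mem_singleton_iff,
          Set.mem_empty_iff_false, or_false, Prod.mk.injEq] at hx hy
        casesm* _ ∨ _, _ ∧ _ <;> simp only [Fin.ext_iff] at * <;> omega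
lemma lambdaS_eq (n m : ℕ) (hn : 2 ≤ n) (hm : 2 ≤ m) (S : Set (Fin n × Fin m))
    (hS : S.ncard = 2) :
    ((completeDigraph n).cartProd (completeDigraph m)).lambdaS S = n + m - 2 := by
  obtain ⟨u, v, huv, rfl⟩ := Set.ncard_eq_two.mp hS
  unfold Digraph.lambdaS
  have hub : ∀ k ∈ {k | ∃ f : Fin k → Set ((Fin n × Fin m) × (Fin n × Fin m)),
      (∀ i, ((completeDigraph n).cartProd (completeDigraph m)).IsStrongSubgraphOn {u, v} (f i)) ∧
      ∀ i j, i ≠ j → Disjoint (f i) (f j)}, k ≤ n + m - 2 := by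
    rintro k ⟨f, hf, hdisj⟩
    have := lambdaSet_bound huv (Set.mem_insert u {v}) (Set.mem_insert_of_mem u rfl) hf hdisj
    omega
  apply le_antisymm
  · exact csSup_le ⟨0, ⟨fun i => i.elim0, fun i => i.elim0, fun i => i.elim0⟩⟩ hub
  · obtain ⟨f, hf, hdisj⟩ := construction n m hn hm u v huv
    exact le_csSup ⟨n + m - 2, hub⟩ ⟨f, hf, hdisj⟩

theorem stmt17 (n m : ℕ) (hn : 2 ≤ n) (hm : 2 ≤ m) :
    ((completeDigraph n).cartProd (completeDigraph m)).lambdaK 2 = n + m - 2 := by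
  unfold Digraph.lambdaK
  have h01 : ((⟨0, by omega⟩ : Fin n), (⟨0, by omega⟩ : Fin m)) ≠ ((⟨1, by omega⟩ : Fin n), (⟨0, by omega⟩ : Fin m)) := by
    simp [Prod.ext_iff, Fin.ext_iff]
  have hset : {k | ∃ S : Set (Fin n × Fin m), S.ncard = 2 ∧
      ((completeDigraph n).cartProd (completeDigraph m)).lambdaS S = k} = {n + m - 2} := by
    ext k
    simp only [Set.mem_setOf_eq, Set.mem_singleton_iff]
    constructor
    · rintro ⟨S, hS2, rfl⟩
      exact lambdaS_eq n m hn hm S hS2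
    · rintro rfl
      exact ⟨_, Set.ncard_pair h01, lambdaS_eq n m hn hm _ (Set.ncard_pair h01)⟩
  rw [hset, csInf_singleton]
end
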